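/- arXiv:1004.2371 — 7 statements merged into one kernel-verified Lean document; each statement's English description precedes it below -/
import Mathlib

section
/- Let n ≥ 1 and let V: ℝⁿ → ℝ be continuously differentiable with lim_{|x|→∞} ⟨∇V(x), x⟩/|x| = +∞. Then lim_{|x|→∞} V(x)/|x| = +∞. -/
open MeasureTheory Filter Real Set
open scoped InnerProductSpace

noncomputable section

/-- Euclidean space ℝⁿ. -/
abbrev Euc (n : ℕ) := EuclideanSpace ℝ (Fin n)

/-- `InHT n T x φ φ'` : `φ : [0,T] → ℝⁿ` is an absolutely continuous path starting at `x`,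
with (a.e.) derivative `φ'` which is square integrable on `[0,T]`. -/
def InHT (n : ℕ) (T : ℝ) (x : Euc n) (φ φ' : ℝ → Euc n) : Prop :=
  φ 0 = x ∧
  IntervalIntegrable φ' volume 0 T ∧
  IntervalIntegrable (fun t => ‖φ' t‖ ^ 2) volume 0 T ∧
  ∀ t ∈ Set.Icc (0 : ℝ) T, φ t = x + ∫ s in (0 : ℝ)..t, φ' s

/-- Freidlin–Wentzell action functional `I^x_T`. -/
def FW (n : ℕ) (c : Euc n → Euc n) (T : ℝ) (φ φ' : ℝ → Euc n) : ℝ :=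
  (1 / 2) * ∫ t in (0 : ℝ)..T, ‖φ' t - c (φ t)‖ ^ 2

/-- Power dissipated by the vector field `b` along the path, `L_T`. -/
def Diss (n : ℕ) (b : Euc n → Euc n) (T : ℝ) (φ φ' : ℝ → Euc n) : ℝ :=
  (2 / T) * ∫ t in (0 : ℝ)..T, ⟪b (φ t), φ' t⟫_ℝ

/-- `S^{xy}_T(q)`, infimum of the action over paths from `x` to `y` dissipating power `q`. -/
def Sxy (n : ℕ) (b c : Euc n → Euc n) (T : ℝ) (x y : Euc n) (q : ℝ) : ℝ :=
  sInf { r : ℝ | ∃ φ φ' : ℝ → Euc n,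
    InHT n T x φ φ' ∧ φ T = y ∧ Diss n b T φ φ' = q ∧ FW n c T φ φ' = r }

/-- `S^{x}_T(q)`, infimum of the action over paths from `x` with free endpoint. -/
def Sx (n : ℕ) (b c : Euc n → Euc n) (T : ℝ) (x : Euc n) (q : ℝ) : ℝ :=
  sInf { r : ℝ | ∃ φ φ' : ℝ → Euc n,
    InHT n T x φ φ' ∧ Diss n b T φ φ' = q ∧ FW n c T φ φ' = r }

/-- `s^x(q) = inf_{T>0} S^{xx}_T(q)/T`. -/
def sfun (n : ℕ) (b c : Euc n → Euc n) (x : Euc n) (q : ℝ) : ℝ :=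
  sInf { r : ℝ | ∃ T : ℝ, 0 < T ∧ r = Sxy n b c T x x q / T }

/-- Assumption (A). -/
def AssumptionA (n : ℕ) (V : Euc n → ℝ) : Prop :=
  ContDiff ℝ 2 V ∧
  Tendsto (fun x : Euc n => ⟪gradient V x, x⟫_ℝ / ‖x‖) (cocompact (Euc n)) atTop

/-- Assumption (B): `b` is `C¹`, bounded with bounded derivative and not conservative. -/
def AssumptionB (n : ℕ) (b : Euc n → Euc n) : Prop :=
  ContDiff ℝ 1 b ∧
  (∃ M : ℝ, ∀ x, ‖b x‖ ≤ M) ∧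
  (∃ M : ℝ, ∀ x, ‖fderiv ℝ b x‖ ≤ M) ∧
  ¬ ∃ F : Euc n → ℝ, Differentiable ℝ F ∧ ∀ x, gradient F x = b x

/-- if `V` is `C¹` and `⟨∇V(x), x⟩/|x| → +∞` as `|x| → ∞`,
then `V(x)/|x| → +∞` as `|x| → ∞`. -/
theorem statement0 (n : ℕ) (hn : 1 ≤ n) (V : Euc n → ℝ) (hV : ContDiff ℝ 1 V)
    (hA : Tendsto (fun x : Euc n => ⟪gradient V x, x⟫_ℝ / ‖x‖) (cocompact (Euc n)) atTop) :
    Tendsto (fun x : Euc n => V x / ‖x‖) (cocompact (Euc n)) atTop := by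
  have hVd : Differentiable ℝ V := hV.differentiable one_ne_zero
  rw [tendsto_atTop]
  intro b
  obtain ⟨s, hs, hsub⟩ := Filter.mem_cocompact.1
    (hA.eventually (eventually_ge_atTop (b + 1)))
  obtain ⟨R₀, hR₀⟩ := hs.isBounded.subset_closedBall 0
  set M := b + 1 with hM
  set R : ℝ := max R₀ 0 + 1 with hR
  have hRpos : 0 < R := by positivity
  have hkey : ∀ y : Euc n, R ≤ ‖y‖ → M ≤ ⟪gradient V y, y⟫_ℝ / ‖y‖ := by
    intro y hy
    apply hsub
    simp only [Set.mem_compl_iff]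
    intro hmem
    have h1 := hR₀ hmem
    simp only [Metric.mem_closedBall, dist_zero_right] at h1
    have : ‖y‖ ≤ max R₀ 0 := h1.trans (le_max_left _ _)
    linarith
  obtain ⟨z, hz, hzmin⟩ := (isCompact_closedBall (0 : Euc n) R).exists_isMinOn
    ⟨0, by simp [hRpos.le]⟩ hVd.continuous.continuousOn
  set C := V z with hC
  have hmain : ∀ x : Euc n, R ≤ ‖x‖ → C + M * (‖x‖ - R) ≤ V x := by
    intro x hx
    have hxpos : 0 < ‖x‖ := lt_of_lt_of_le hRpos hx
    set u : Euc n := ‖x‖⁻¹ • x with hu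
    have hunorm : ‖u‖ = 1 := by
      rw [hu, norm_smul, norm_inv, norm_norm, inv_mul_cancel₀ hxpos.ne']
    set g : ℝ → ℝ := fun r => V (r • u) with hg
    have hgd : ∀ r : ℝ, HasDerivAt g (⟪gradient V (r • u), u⟫_ℝ) r := by
      intro r
      have h1 : HasDerivAt (fun r : ℝ => r • u) u r := by
        simpa using (hasDerivAt_id r).smul_const u
      have h2 := (hVd (r • u)).hasFDerivAt.comp_hasDerivAt r h1
      have h3 : ⟪gradient V (r • u), u⟫_ℝ = fderiv ℝ V (r • u) u := by
        rw [gradient]; exact InnerProductSpace.toDual_symm_apply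
      rw [h3]; exact h2
    have hderiv_ge : ∀ r ∈ interior (Set.Ici R), M ≤ deriv g r := by
      intro r hr
      rw [interior_Ici, Set.mem_Ioi] at hr
      have hrpos : 0 < r := hRpos.trans hr
      have hnorm : ‖r • u‖ = r := by
        rw [norm_smul, hunorm, mul_one, Real.norm_eq_abs, abs_of_pos hrpos]
      have hk := hkey (r • u) (by rw [hnorm]; exact hr.le)
      rw [hnorm, real_inner_smul_right, mul_div_cancel_left₀ _ hrpos.ne'] at hk
      rw [(hgd r).deriv]
      exact hk
    have hineq := (convex_Ici R).mul_sub_le_image_sub_of_le_deriv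
      (f := g) (fun r _ => (hgd r).continuousAt.continuousWithinAt)
      (fun r _ => (hgd r).differentiableAt.differentiableWithinAt)
      hderiv_ge R self_mem_Ici ‖x‖ hx hx
    have hgR : C ≤ g R := by
      apply hzmin
      simp [Metric.mem_closedBall, norm_smul, hunorm, abs_of_pos hRpos, dist_zero_right]
    have hgx : g ‖x‖ = V x := by
      show V (‖x‖ • u) = V x
      rw [hu, smul_smul, mul_inv_cancel₀ hxpos.ne', one_smul]
    rw [hgx] at hineq
    linarith
  -- conclude
  have hmem : (Metric.closedBall (0 : Euc n) (max R |C - M * R| + 1))ᶜ ∈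
      cocompact (Euc n) :=
    Filter.mem_cocompact.2 ⟨_, isCompact_closedBall _ _, subset_rfl⟩
  filter_upwards [hmem] with x hx
  simp only [Set.mem_compl_iff, Metric.mem_closedBall, dist_zero_right, not_le] at hx
  have hxR : R ≤ ‖x‖ := by
    have := le_max_left R |C - M * R|
    linarith
  have hxpos : 0 < ‖x‖ := hRpos.trans_le hxR
  have h1 := hmain x hxR
  rw [le_div_iff₀ hxpos]
  have h2 : -|C - M * R| ≤ C - M * R := neg_abs_le _
  have h3 : |C - M * R| ≤ ‖x‖ := by
    have := le_max_right R |C - M * R|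
    linarith
  nlinarith
end
end

section
/- Let V: ℝⁿ → ℝ be C² and satisfy lim_{|x|→∞} ⟨∇V(x), x⟩/|x| = +∞ (assumption (A)). Then for every ε > 0 the integral ∫_{ℝⁿ} exp(−V(x)/ε) dx is finite. -/
open MeasureTheory Filter Real Set
open scoped InnerProductSpace

noncomputable section

section proofaux

lemma inner_gradient_aux {n : ℕ} (V : Euc n → ℝ) (y v : Euc n) :
    ⟪gradient V y, v⟫_ℝ = fderiv ℝ V y v := by
  unfold gradient
  exact InnerProductSpace.toDual_symm_apply

end proofaux

/-- under assumption (A), `∫ exp(-V(x)/ε) dx < ∞` for every `ε > 0`. -/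
theorem statement1 (n : ℕ) (V : Euc n → ℝ) (hA : AssumptionA n V)
    (ε : ℝ) (hε : 0 < ε) :
    Integrable (fun x : Euc n => Real.exp (-V x / ε)) volume := by
  obtain ⟨hV, htend⟩ := hA
  have hVc : Continuous V := hV.continuous
  have hVd : Differentiable ℝ V := hV.differentiable (by norm_num)
  have hfd : Continuous (fderiv ℝ V) := (hV.fderiv_right (m := 1) (by norm_num)).continuous
  -- Step 1: get R₀ ≥ 1 with the inner product bound outside ball R₀
  have hev : ∀ᶠ x in cocompact (Euc n), 1 ≤ ⟪gradient V x, x⟫_ℝ / ‖x‖ :=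
    htend.eventually (eventually_ge_atTop 1)
  obtain ⟨K, hKc, hKs⟩ := Filter.mem_cocompact.mp hev
  obtain ⟨r, hr⟩ := hKc.isBounded.subset_closedBall 0
  set R₀ : ℝ := max r 0 + 1 with hR₀def
  have hR₀1 : (1:ℝ) ≤ R₀ := by rw [hR₀def]; linarith [le_max_right r 0]
  have hR₀0 : (0:ℝ) < R₀ := lt_of_lt_of_le one_pos hR₀1
  have hbound : ∀ y : Euc n, R₀ ≤ ‖y‖ → ‖y‖ ≤ ⟪gradient V y, y⟫_ℝ := by
    intro y hy
    have hyK : y ∉ K := by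
      intro hyK
      have h1 := hr hyK
      simp only [Metric.mem_closedBall, dist_zero_right] at h1
      have h2 : ‖y‖ ≤ max r 0 := h1.trans (le_max_left _ _)
      linarith
    have h1 : 1 ≤ ⟪gradient V y, y⟫_ℝ / ‖y‖ := hKs hyK
    have hy0 : (0:ℝ) < ‖y‖ := lt_of_lt_of_le hR₀0 hy
    calc ‖y‖ = 1 * ‖y‖ := (one_mul _).symm
      _ ≤ (⟪gradient V y, y⟫_ℝ / ‖y‖) * ‖y‖ := mul_le_mul_of_nonneg_right h1 hy0.le
      _ = ⟪gradient V y, y⟫_ℝ := by field_simp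
  -- Step 2: V bounded below on closed ball R₀
  obtain ⟨B, hB⟩ := (isCompact_closedBall (0 : Euc n) R₀).exists_bound_of_continuousOn
    hVc.continuousOn
  -- Step 3: global lower bound V x ≥ ‖x‖ - C
  set C : ℝ := R₀ + B with hCdef
  have hlow : ∀ x : Euc n, ‖x‖ - C ≤ V x := by
    intro x
    rcases le_or_gt ‖x‖ R₀ with hx | hx
    · have hxB : x ∈ Metric.closedBall (0 : Euc n) R₀ := by
        simpa [Metric.mem_closedBall, dist_zero_right] using hx
      have h0 := hB x hxB
      have h1 : -B ≤ V x := by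
        have h2 := abs_le.mp (by simpa [Real.norm_eq_abs] using h0)
        linarith [h2.1]
      linarith
    · -- radial FTC
      have hx0 : (0:ℝ) < ‖x‖ := lt_trans hR₀0 hx
      set u : Euc n := ‖x‖⁻¹ • x with hudef
      have hu : ‖u‖ = 1 := by
        rw [hudef, norm_smul, norm_inv, norm_norm, inv_mul_cancel₀ hx0.ne']
      have hsu : ∀ s : ℝ, 0 ≤ s → ‖s • u‖ = s := by
        intro s hs
        rw [norm_smul, hu, Real.norm_eq_abs, abs_of_nonneg hs, mul_one]
      set g : ℝ → ℝ := fun s => fderiv ℝ V (s • u) u with hgdef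
      have hgc : Continuous g := by
        apply Continuous.clm_apply
        · exact hfd.comp (continuous_id.smul continuous_const)
        · exact continuous_const
      have hderiv : ∀ s ∈ Set.uIcc R₀ ‖x‖, HasDerivAt (fun s => V (s • u)) (g s) s := by
        intro s _
        have h2 : HasDerivAt (fun s : ℝ => s • u) u s := by
          simpa using (hasDerivAt_id s).smul_const u
        exact (hVd (s • u)).hasFDerivAt.comp_hasDerivAt s h2
      have hint : IntervalIntegrable g volume R₀ ‖x‖ := hgc.intervalIntegrable _ _
      have hftc : ∫ s in R₀..‖x‖, g s = V (‖x‖ • u) - V (R₀ • u) :=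
        intervalIntegral.integral_eq_sub_of_hasDerivAt hderiv hint
      have hglb : ∀ s ∈ Set.Icc R₀ ‖x‖, (1:ℝ) ≤ g s := by
        intro s hs
        have hs0 : (0:ℝ) < s := lt_of_lt_of_le hR₀0 hs.1
        have hys : ‖s • u‖ = s := hsu s hs0.le
        have h1 : s ≤ ⟪gradient V (s • u), s • u⟫_ℝ := by
          have h3 := hbound (s • u) (by rw [hys]; exact hs.1)
          rwa [hys] at h3
        have h2 : ⟪gradient V (s • u), s • u⟫_ℝ = s * g s := by
          rw [real_inner_smul_right, hgdef, inner_gradient_aux]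
        have h4 : s ≤ s * g s := h2 ▸ h1
        nlinarith
      have hmono : ‖x‖ - R₀ ≤ ∫ s in R₀..‖x‖, g s := by
        have h1 : (∫ s in R₀..‖x‖, (1:ℝ)) ≤ ∫ s in R₀..‖x‖, g s :=
          intervalIntegral.integral_mono_on hx.le intervalIntegrable_const hint hglb
        simpa using h1
      have hxu : ‖x‖ • u = x := by
        rw [hudef, smul_smul, mul_inv_cancel₀ hx0.ne', one_smul]
      have hRu : -B ≤ V (R₀ • u) := by
        have hmem : R₀ • u ∈ Metric.closedBall (0 : Euc n) R₀ := by
          simp [Metric.mem_closedBall, dist_zero_right, hsu R₀ hR₀0.le]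
        have h2 := abs_le.mp (by simpa [Real.norm_eq_abs] using hB _ hmem)
        linarith [h2.1]
      rw [hxu] at hftc
      rw [hftc] at hmono
      linarith
  -- Step 4: tail comparison constant
  obtain ⟨Kb, hKb0, hKb⟩ : ∃ Kb : ℝ, 0 < Kb ∧ ∀ t : ℝ, 0 ≤ t →
      (1 + t) ^ ((n : ℝ) + 1) * Real.exp ((C - t) / ε) ≤ Kb := by
    set f : ℝ → ℝ := fun t => (1 + t) ^ ((n : ℝ) + 1) * Real.exp ((C - t) / ε) with hfdef
    have hf0 : Tendsto f atTop (nhds 0) := by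
      have h1 := tendsto_rpow_mul_exp_neg_mul_atTop_nhds_zero ((n : ℝ) + 1) (1/ε)
        (by positivity)
      have h2 : Tendsto (fun t : ℝ => 1 + t) atTop atTop :=
        tendsto_atTop_add_const_left _ 1 tendsto_id
      have h3 := (h1.comp h2).mul_const (Real.exp ((C + 1) / ε))
      rw [zero_mul] at h3
      refine h3.congr' ?_
      filter_upwards [eventually_ge_atTop (0:ℝ)] with t ht
      simp only [Function.comp_apply, hfdef]
      rw [mul_assoc, ← Real.exp_add]
      congr 2
      field_simp
      ring
    have hev1 : ∀ᶠ t in atTop, f t ≤ 1 := by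
      filter_upwards [hf0.eventually (eventually_le_nhds one_pos)] with t ht using ht
    obtain ⟨T, hT⟩ := eventually_atTop.mp hev1
    have hfc : Continuous f := by
      apply Continuous.mul
      · exact (continuous_const.add continuous_id).rpow_const
          (fun t => Or.inr (by positivity))
      · exact Real.continuous_exp.comp (by fun_prop)
    obtain ⟨B2, hB2⟩ := (isCompact_Icc (a := (0:ℝ)) (b := max T 0)).exists_bound_of_continuousOn
      (f := f) hfc.continuousOn
    refine ⟨max B2 1 + 1, by positivity, fun t ht => ?_⟩
    rcases le_or_gt t (max T 0) with h | h
    · have h1 := hB2 t ⟨ht, h⟩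
      have h2 := (abs_le.mp (by simpa [Real.norm_eq_abs] using h1)).2
      have h3 : B2 ≤ max B2 1 := le_max_left _ _
      show f t ≤ max B2 1 + 1
      linarith
    · have h1 : f t ≤ 1 := hT t ((le_max_left T 0).trans h.le)
      have h2 : (1:ℝ) ≤ max B2 1 := le_max_right _ _
      show f t ≤ max B2 1 + 1
      linarith
  -- Step 5: conclude by comparison with (1 + ‖x‖)^{-(n+1)}
  have hfinrank : (Module.finrank ℝ (Euc n) : ℝ) < (n : ℝ) + 1 := by
    simp [finrank_euclideanSpace]
  have hgint : Integrable (fun x : Euc n => Kb * (1 + ‖x‖) ^ (-((n : ℝ) + 1))) volume :=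
    (integrable_one_add_norm hfinrank).const_mul Kb
  refine hgint.mono' ((hVc.neg.div_const ε).rexp).aestronglyMeasurable ?_
  refine Filter.Eventually.of_forall (fun x => ?_)
  have hx0 : (0:ℝ) ≤ ‖x‖ := norm_nonneg x
  have h1x : (0:ℝ) < 1 + ‖x‖ := by positivity
  have hp : (0:ℝ) < (1 + ‖x‖) ^ ((n:ℝ) + 1) := Real.rpow_pos_of_pos h1x _
  rw [Real.norm_eq_abs, abs_of_pos (Real.exp_pos _)]
  have hVx : Real.exp (-V x / ε) ≤ Real.exp ((C - ‖x‖) / ε) := by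
    apply Real.exp_le_exp.mpr
    have h1 := hlow x
    gcongr
    linarith
  refine hVx.trans ?_
  rw [Real.rpow_neg h1x.le, ← div_eq_mul_inv, le_div_iff₀ hp]
  have hK := hKb ‖x‖ hx0
  linarith [hK, mul_comm (Real.exp ((C - ‖x‖) / ε)) ((1 + ‖x‖) ^ ((n:ℝ) + 1))]
end
end

section
/- Suppose b: ℝⁿ → ℝⁿ is C¹ and bounded with bounded derivatives, and b is not conservative, i.e. b is not the gradient of any differentiable function on ℝⁿ. Then there exist a point z ∈ ℝⁿ and a real number q̄ ≠ 0 such that for every p ∈ ℝ with |p| ≤ |q̄| there exists an absolutely continuous path ξ: [0,1] → ℝⁿ with ∫₀¹ |ξ̇_t|² dt < ∞, ξ(0) = ξ(1) = z, and ∫₀¹ ⟨b(ξ_t), ξ̇_t⟩ dt = p. -/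
open MeasureTheory Filter Real Set
open scoped InnerProductSpace

noncomputable section

namespace S2Aux


variable {n : ℕ}

def W (b : Euc n → Euc n) (x y : Euc n) : ℝ :=
  ∫ t in (0:ℝ)..1, ⟪b (x + t • (y - x)), y - x⟫_ℝ

lemma W_self (b : Euc n → Euc n) (x : Euc n) : W b x x = 0 := by
  simp [W]

lemma W_cont {b : Euc n → Euc n} (hb : Continuous b) :
    Continuous fun p : Euc n × Euc n => W b p.1 p.2 := by
  have : Continuous (Function.uncurry fun (p : Euc n × Euc n) (t : ℝ) =>
      ⟪b (p.1 + t • (p.2 - p.1)), p.2 - p.1⟫_ℝ) := by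
    apply Continuous.inner
    · exact hb.comp (by fun_prop)
    · fun_prop
  exact intervalIntegral.continuous_parametric_intervalIntegral_of_continuous' this 0 1

lemma W_swap (b : Euc n → Euc n) (x y : Euc n) : W b y x = - W b x y := by
  have h1 : ∀ t : ℝ, y + t • (x - y) = x + (1 - t) • (y - x) := by
    intro t; module
  have h2 : ∀ t : ℝ, ⟪b (y + t • (x - y)), x - y⟫_ℝ
      = -⟪b (x + (1 - t) • (y - x)), y - x⟫_ℝ := by
    intro t
    rw [h1, show x - y = -(y - x) by abel, inner_neg_right]
  calc W b y x = ∫ t in (0:ℝ)..1, -⟪b (x + (1-t) • (y - x)), y - x⟫_ℝ := by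
        exact intervalIntegral.integral_congr (fun t _ => h2 t)
    _ = -∫ t in (0:ℝ)..1, ⟪b (x + (1-t) • (y - x)), y - x⟫_ℝ := intervalIntegral.integral_neg
    _ = - W b x y := by
        rw [W]
        congr 1
        have := intervalIntegral.integral_comp_sub_left
          (a := (0:ℝ)) (b := 1) (fun s => ⟪b (x + s • (y - x)), y - x⟫_ℝ) 1
        simpa using this


def tri (z a c : Euc n) : ℝ → Euc n := fun t =>
  if t ≤ 1/3 then z + (3*t) • (a - z)
  else if t ≤ 2/3 then a + (3*t - 1) • (c - a)
  else c + (3*t - 2) • (z - c)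

def tri' (z a c : Euc n) : ℝ → Euc n := fun t =>
  if t ≤ 1/3 then (3:ℝ) • (a - z)
  else if t ≤ 2/3 then (3:ℝ) • (c - a)
  else (3:ℝ) • (z - c)

lemma tri'_meas (z a c : Euc n) : Measurable (tri' z a c) := by
  unfold tri'
  exact (measurable_const.ite measurableSet_Iic
    (measurable_const.ite measurableSet_Iic measurable_const))

lemma tri_meas (z a c : Euc n) : Measurable (tri z a c) := by
  unfold tri
  apply Measurable.ite measurableSet_Iic
  · fun_prop
  apply Measurable.ite measurableSet_Iic <;> fun_prop

lemma tri'_bdd (z a c : Euc n) : ∀ t, ‖tri' z a c t‖ ≤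
    max ‖(3:ℝ) • (a - z)‖ (max ‖(3:ℝ) • (c - a)‖ ‖(3:ℝ) • (z - c)‖) := by
  intro t
  unfold tri'
  split_ifs with h1 h2
  · exact le_max_left _ _
  · exact le_trans (le_max_left _ _) (le_max_right _ _)
  · exact le_trans (le_max_right _ _) (le_max_right _ _)

lemma tri'_intInt (z a c : Euc n) (u v : ℝ) :
    IntervalIntegrable (tri' z a c) volume u v := by
  rw [intervalIntegrable_iff]
  refine Integrable.mono'
    (g := fun _ => max ‖(3:ℝ) • (a - z)‖ (max ‖(3:ℝ) • (c - a)‖ ‖(3:ℝ) • (z - c)‖))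
    (integrableOn_const measure_Ioc_lt_top.ne)
    ((tri'_meas z a c).aestronglyMeasurable.restrict) ?_
  exact ae_of_all _ (tri'_bdd z a c)

lemma tri'_sq_intInt (z a c : Euc n) (u v : ℝ) :
    IntervalIntegrable (fun t => ‖tri' z a c t‖^2) volume u v := by
  rw [intervalIntegrable_iff]
  set C := max ‖(3:ℝ) • (a - z)‖ (max ‖(3:ℝ) • (c - a)‖ ‖(3:ℝ) • (z - c)‖) with hC
  refine Integrable.mono' (g := fun _ => C^2)
    (integrableOn_const measure_Ioc_lt_top.ne)
    (((tri'_meas z a c).norm.pow_const 2).aestronglyMeasurable.restrict) ?_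
  refine ae_of_all _ fun t => ?_
  have h := tri'_bdd z a c t
  have : ‖tri' z a c t‖^2 ≤ C^2 := by
    apply pow_le_pow_left₀ (norm_nonneg _) h
  simpa [abs_of_nonneg (sq_nonneg ‖tri' z a c t‖), sq_abs] using this


lemma e1 (z a c : Euc n) : ∀ t : ℝ, t ≤ 1/3 →
    (∫ s in (0:ℝ)..t, tri' z a c s) = t • ((3:ℝ) • (a - z)) := by
  intro t ht
  have hcg : (∫ s in (0:ℝ)..t, tri' z a c s) = ∫ s in (0:ℝ)..t, ((3:ℝ) • (a - z)) := by
    apply intervalIntegral.integral_congr_ae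
    refine Eventually.of_forall fun s hs => ?_
    have hs2 : s ≤ 1/3 := le_trans hs.2 (max_le (by norm_num) ht)
    simp only [tri', if_pos hs2]
  rw [hcg, intervalIntegral.integral_const, sub_zero]

lemma e2 (z a c : Euc n) : ∀ t : ℝ, 1/3 ≤ t → t ≤ 2/3 →
    (∫ s in (1/3:ℝ)..t, tri' z a c s) = (t - 1/3) • ((3:ℝ) • (c - a)) := by
  intro t ht1 ht2
  have hcg : (∫ s in (1/3:ℝ)..t, tri' z a c s) = ∫ s in (1/3:ℝ)..t, ((3:ℝ) • (c - a)) := by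
    apply intervalIntegral.integral_congr_ae
    rw [Set.uIoc_of_le ht1]
    refine Eventually.of_forall fun s hs => ?_
    have h1 : ¬ (s ≤ 1/3) := not_le.2 hs.1
    have h2 : s ≤ 2/3 := le_trans hs.2 ht2
    simp only [tri', if_neg h1, if_pos h2]
  rw [hcg, intervalIntegral.integral_const]

lemma e3 (z a c : Euc n) : ∀ t : ℝ, 2/3 ≤ t →
    (∫ s in (2/3:ℝ)..t, tri' z a c s) = (t - 2/3) • ((3:ℝ) • (z - c)) := by
  intro t ht1
  have hcg : (∫ s in (2/3:ℝ)..t, tri' z a c s) = ∫ s in (2/3:ℝ)..t, ((3:ℝ) • (z - c)) := by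
    apply intervalIntegral.integral_congr_ae
    rw [Set.uIoc_of_le ht1]
    refine Eventually.of_forall fun s hs => ?_
    have h1 : ¬ (s ≤ 1/3) := not_le.2 (lt_trans (by norm_num) hs.1)
    have h2 : ¬ (s ≤ 2/3) := not_le.2 hs.1
    simp only [tri', if_neg h1, if_neg h2]
  rw [hcg, intervalIntegral.integral_const]

lemma tri_key (z a c : Euc n) : ∀ t ∈ Set.Icc (0:ℝ) 1,
    tri z a c t = z + ∫ s in (0:ℝ)..t, tri' z a c s := by
  intro t _
  by_cases h1 : t ≤ 1/3
  · rw [e1 z a c t h1]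
    simp only [tri, if_pos h1]
    module
  · by_cases h2 : t ≤ 2/3
    · rw [← intervalIntegral.integral_add_adjacent_intervals
        (tri'_intInt z a c 0 (1/3)) (tri'_intInt z a c (1/3) t),
        e1 z a c (1/3) le_rfl, e2 z a c t (le_of_not_ge h1) h2]
      simp only [tri, if_neg h1, if_pos h2]
      module
    · rw [← intervalIntegral.integral_add_adjacent_intervals
        (tri'_intInt z a c 0 (2/3)) (tri'_intInt z a c (2/3) t),
        ← intervalIntegral.integral_add_adjacent_intervals
        (tri'_intInt z a c 0 (1/3)) (tri'_intInt z a c (1/3) (2/3)),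
        e1 z a c (1/3) le_rfl, e2 z a c (2/3) (by norm_num) le_rfl,
        e3 z a c t (le_of_not_ge h2)]
      simp only [tri, if_neg h1, if_neg h2]
      module

lemma tri_work (b : Euc n → Euc n) (hb : Continuous b) (M : ℝ) (hM : ∀ x, ‖b x‖ ≤ M) (z a c : Euc n) :
    (∫ t in (0:ℝ)..1, ⟪b (tri z a c t), tri' z a c t⟫_ℝ)
      = W b z a + W b a c + W b c z := by
  set g := fun t => ⟪b (tri z a c t), tri' z a c t⟫_ℝ with hg
  set C := max ‖(3:ℝ) • (a - z)‖ (max ‖(3:ℝ) • (c - a)‖ ‖(3:ℝ) • (z - c)‖) with hC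
  have hgm : Measurable g :=
    (hb.measurable.comp (tri_meas z a c)).inner (tri'_meas z a c)
  have hM0 : 0 ≤ M := le_trans (norm_nonneg _) (hM 0)
  have hgb : ∀ t, ‖g t‖ ≤ M * C := by
    intro t
    calc ‖g t‖ ≤ ‖b (tri z a c t)‖ * ‖tri' z a c t‖ := abs_real_inner_le_norm _ _
      _ ≤ M * C := mul_le_mul (hM _) (tri'_bdd z a c t) (norm_nonneg _) hM0
  have hgi : ∀ u v : ℝ, IntervalIntegrable g volume u v := by
    intro u v
    rw [intervalIntegrable_iff]
    exact Integrable.mono' (g := fun _ => M * C)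
      (integrableOn_const measure_Ioc_lt_top.ne)
      (hgm.aestronglyMeasurable.restrict) (ae_of_all _ hgb)
  rw [← intervalIntegral.integral_add_adjacent_intervals (hgi 0 (1/3)) (hgi (1/3) 1),
      ← intervalIntegral.integral_add_adjacent_intervals (hgi (1/3) (2/3)) (hgi (2/3) 1)]
  have P1 : (∫ t in (0:ℝ)..(1/3), g t) = W b z a := by
    have hcg : (∫ t in (0:ℝ)..(1/3), g t)
        = ∫ t in (0:ℝ)..(1/3), 3 * (fun s => ⟪b (z + s • (a - z)), a - z⟫_ℝ) (3 * t) := by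
      apply intervalIntegral.integral_congr_ae
      refine Eventually.of_forall fun t ht => ?_
      have h1 : t ≤ 1/3 := le_trans ht.2 (max_le (by norm_num) le_rfl)
      simp only [hg, tri, tri', if_pos h1, real_inner_smul_right]
    rw [hcg, intervalIntegral.integral_const_mul, W]
    have h3 := intervalIntegral.smul_integral_comp_mul_left
      (a := (0:ℝ)) (b := 1/3) (fun s => ⟪b (z + s • (a - z)), a - z⟫_ℝ) 3
    rw [show (3:ℝ) * 0 = 0 by norm_num, show (3:ℝ) * (1/3) = 1 by norm_num,
      smul_eq_mul] at h3
    beta_reduce at h3 ⊢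
    exact h3
  have P2 : (∫ t in (1/3:ℝ)..(2/3), g t) = W b a c := by
    have hcg : (∫ t in (1/3:ℝ)..(2/3), g t)
        = ∫ t in (1/3:ℝ)..(2/3), 3 * (fun u => ⟪b (a + (u - 1) • (c - a)), c - a⟫_ℝ) (3 * t) := by
      apply intervalIntegral.integral_congr_ae
      rw [Set.uIoc_of_le (by norm_num : (1:ℝ)/3 ≤ 2/3)]
      refine Eventually.of_forall fun t ht => ?_
      have h1 : ¬ (t ≤ 1/3) := not_le.2 ht.1
      have h2 : t ≤ 2/3 := ht.2
      simp only [hg, tri, tri', if_neg h1, if_pos h2, real_inner_smul_right]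
    rw [hcg, intervalIntegral.integral_const_mul, W]
    have h3 := intervalIntegral.smul_integral_comp_mul_left
      (a := (1:ℝ)/3) (b := 2/3) (fun u => ⟪b (a + (u - 1) • (c - a)), c - a⟫_ℝ) 3
    rw [show (3:ℝ) * (1/3) = 1 by norm_num, show (3:ℝ) * (2/3) = 2 by norm_num,
      smul_eq_mul] at h3
    have h4 := intervalIntegral.integral_comp_sub_right
      (a := (1:ℝ)) (b := 2) (fun s => ⟪b (a + s • (c - a)), c - a⟫_ℝ) 1
    rw [show (1:ℝ) - 1 = 0 by norm_num, show (2:ℝ) - 1 = 1 by norm_num] at h4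
    beta_reduce at h3 h4 ⊢
    rw [h3, h4]
  have P3 : (∫ t in (2/3:ℝ)..1, g t) = W b c z := by
    have hcg : (∫ t in (2/3:ℝ)..1, g t)
        = ∫ t in (2/3:ℝ)..1, 3 * (fun u => ⟪b (c + (u - 2) • (z - c)), z - c⟫_ℝ) (3 * t) := by
      apply intervalIntegral.integral_congr_ae
      rw [Set.uIoc_of_le (by norm_num : (2:ℝ)/3 ≤ 1)]
      refine Eventually.of_forall fun t ht => ?_
      have h1 : ¬ (t ≤ 1/3) := not_le.2 (lt_trans (by norm_num) ht.1)
      have h2 : ¬ (t ≤ 2/3) := not_le.2 ht.1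
      simp only [hg, tri, tri', if_neg h1, if_neg h2, real_inner_smul_right]
    rw [hcg, intervalIntegral.integral_const_mul, W]
    have h3 := intervalIntegral.smul_integral_comp_mul_left
      (a := (2:ℝ)/3) (b := 1) (fun u => ⟪b (c + (u - 2) • (z - c)), z - c⟫_ℝ) 3
    rw [show (3:ℝ) * (2/3) = 2 by norm_num, show (3:ℝ) * 1 = 3 by norm_num,
      smul_eq_mul] at h3
    have h4 := intervalIntegral.integral_comp_sub_right
      (a := (2:ℝ)) (b := 3) (fun s => ⟪b (c + s • (z - c)), z - c⟫_ℝ) 2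
    rw [show (2:ℝ) - 2 = 0 by norm_num, show (3:ℝ) - 2 = 1 by norm_num] at h4
    beta_reduce at h3 h4 ⊢
    rw [h3, h4]
  rw [P1, P2, P3]; ring


lemma exists_nonzero_triangle {n : ℕ} (b : Euc n → Euc n)
    (hC1 : ContDiff ℝ 1 b) (L : ℝ) (hL : ∀ x, ‖fderiv ℝ b x‖ ≤ L)
    (hNC : ¬ ∃ F : Euc n → ℝ, Differentiable ℝ F ∧ ∀ x, gradient F x = b x) :
    ∃ z a c : Euc n, W b z a + W b a c + W b c z ≠ 0 := by
  by_contra hcon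
  push_neg at hcon
  apply hNC
  set L' := max L 0 with hL'
  have hL'0 : 0 ≤ L' := le_max_right _ _
  have hlip : LipschitzWith L'.toNNReal b := by
    apply lipschitzWith_of_nnnorm_fderiv_le (hC1.differentiable one_ne_zero)
    intro x
    rw [← NNReal.coe_le_coe, coe_nnnorm, Real.coe_toNNReal _ hL'0]
    exact le_trans (hL x) (le_max_left _ _)
  have hdist : ∀ p q : Euc n, ‖b p - b q‖ ≤ L' * ‖p - q‖ := by
    intro p q
    have := hlip.dist_le_mul p q
    rwa [dist_eq_norm, dist_eq_norm, Real.coe_toNNReal _ hL'0] at this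
  have key : ∀ x h' : Euc n, W b 0 (x + h') - W b 0 x = W b x (x + h') := by
    intro x h'
    have h0 := hcon 0 x (x + h')
    have hsw := W_swap b 0 (x + h')
    linarith
  have hW : ∀ x h' : Euc n,
      W b x (x + h') = ∫ t in (0:ℝ)..1, ⟪b (x + t • h'), h'⟫_ℝ := by
    intro x h'
    rw [W]
    simp only [add_sub_cancel_left]
  have hgrad : ∀ x, HasGradientAt (fun y => W b 0 y) (b x) x := by
    intro x
    rw [hasGradientAt_iff_hasFDerivAt, hasFDerivAt_iff_isLittleO_nhds_zero]
    have hbound : ∀ h' : Euc n,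
        ‖W b 0 (x + h') - W b 0 x - ⟪b x, h'⟫_ℝ‖ ≤ L' * (‖h'‖ * ‖h'‖) := by
      intro h'
      rw [key x h', hW x h']
      have hInt1 : IntervalIntegrable (fun t => ⟪b (x + t • h'), h'⟫_ℝ) volume 0 1 := by
        apply Continuous.intervalIntegrable
        exact Continuous.inner (hC1.continuous.comp (by fun_prop)) continuous_const
      have hconst : ⟪b x, h'⟫_ℝ = ∫ _t in (0:ℝ)..1, ⟪b x, h'⟫_ℝ := by simp
      rw [hconst, ← intervalIntegral.integral_sub hInt1 intervalIntegrable_const]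
      have hb : ∀ t ∈ Set.uIoc (0:ℝ) 1,
          ‖⟪b (x + t • h'), h'⟫_ℝ - ⟪b x, h'⟫_ℝ‖ ≤ L' * (‖h'‖ * ‖h'‖) := by
        intro t ht
        rw [Set.uIoc_of_le zero_le_one] at ht
        rw [← inner_sub_left]
        have h1 : ‖b (x + t • h') - b x‖ ≤ L' * ‖t • h'‖ := by
          have := hdist (x + t • h') x
          simpa [add_sub_cancel_left] using this
        have h2 : ‖t • h'‖ ≤ ‖h'‖ := by
          rw [norm_smul, Real.norm_eq_abs, abs_of_pos ht.1]
          nlinarith [norm_nonneg h', ht.2]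
        calc ‖⟪b (x + t • h') - b x, h'⟫_ℝ‖
            ≤ ‖b (x + t • h') - b x‖ * ‖h'‖ := abs_real_inner_le_norm _ _
          _ ≤ (L' * ‖h'‖) * ‖h'‖ := by
              apply mul_le_mul_of_nonneg_right _ (norm_nonneg _)
              exact le_trans h1 (mul_le_mul_of_nonneg_left h2 hL'0)
          _ = L' * (‖h'‖ * ‖h'‖) := by ring
      have := intervalIntegral.norm_integral_le_of_norm_le_const hb
      simpa using this
    have hO : (fun h' : Euc n => W b 0 (x + h') - W b 0 x - ⟪b x, h'⟫_ℝ)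
        =O[nhds 0] (fun h' : Euc n => ‖h'‖ * ‖h'‖) :=
      Asymptotics.IsBigO.of_bound L' (Filter.Eventually.of_forall fun h' => by
        simpa [Real.norm_eq_abs, abs_of_nonneg (mul_self_nonneg ‖h'‖)] using hbound h')
    have ho : (fun h' : Euc n => ‖h'‖ * ‖h'‖) =o[nhds 0] (fun h' : Euc n => h') := by
      rw [Asymptotics.isLittleO_iff]
      intro c hc
      filter_upwards [Metric.ball_mem_nhds (0 : Euc n) hc] with h' hh'
      rw [Metric.mem_ball, dist_zero_right] at hh'
      have : ‖h'‖ * ‖h'‖ ≤ c * ‖h'‖ := mul_le_mul_of_nonneg_right hh'.le (norm_nonneg _)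
      simpa [Real.norm_eq_abs, abs_of_nonneg (mul_self_nonneg ‖h'‖)] using this
    simp only [InnerProductSpace.toDual_apply_apply]
    exact hO.trans_isLittleO ho
  exact ⟨fun y => W b 0 y, fun x => (hgrad x).hasFDerivAt.differentiableAt,
    fun x => (hgrad x).gradient⟩

end S2Aux

set_option maxHeartbeats 1000000 in
/-- if `b` is `C¹`, bounded with bounded derivatives and not conservative, then
there are a point `z` and a value `q̄ ≠ 0` such that every `p` with `|p| ≤ |q̄|` is realized as
the work of `b` along some closed `H¹` loop at `z` of length one. -/
theorem statement2 (n : ℕ) (b : Euc n → Euc n) (hB : AssumptionB n b) :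
    ∃ (z : Euc n) (qbar : ℝ), qbar ≠ 0 ∧
      ∀ p : ℝ, |p| ≤ |qbar| →
        ∃ ξ ξ' : ℝ → Euc n, InHT n 1 z ξ ξ' ∧ ξ 1 = z ∧
          (∫ t in (0:ℝ)..1, ⟪b (ξ t), ξ' t⟫_ℝ) = p := by
  classical
  obtain ⟨hC1, ⟨M, hM⟩, ⟨L, hL⟩, hNC⟩ := hB
  obtain ⟨z, a, c, hq⟩ := S2Aux.exists_nonzero_triangle b hC1 L hL hNC
  set qbar := S2Aux.W b z a + S2Aux.W b a c + S2Aux.W b c z with hqbar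
  refine ⟨z, qbar, hq, ?_⟩
  intro p hp
  -- scaled vertices
  set A : ℝ → Euc n := fun l => z + l • (a - z) with hA
  set Cv : ℝ → Euc n := fun l => z + l • (c - z) with hCv
  set h : ℝ → ℝ := fun l =>
    S2Aux.W b z (A l) + S2Aux.W b (A l) (Cv l) + S2Aux.W b (Cv l) z with hh
  have hAcont : Continuous A := by fun_prop
  have hCcont : Continuous Cv := by fun_prop
  have hWc := S2Aux.W_cont (b := b) hC1.continuous
  have hcont : Continuous h := by
    apply Continuous.add
    apply Continuous.add
    · exact hWc.comp₂ continuous_const hAcont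
    · exact hWc.comp₂ hAcont hCcont
    · exact hWc.comp₂ hCcont continuous_const
  have h0 : h 0 = 0 := by
    simp only [hh, hA, hCv, zero_smul, add_zero, S2Aux.W_self, add_zero]
  have h1 : h 1 = qbar := by
    simp only [hh, hA, hCv, one_smul, add_sub_cancel, hqbar]
  -- get a loop through given vertices realizing work value
  have loop : ∀ (v w : Euc n),
      ∃ ξ ξ' : ℝ → Euc n, InHT n 1 z ξ ξ' ∧ ξ 1 = z ∧
        (∫ t in (0:ℝ)..1, ⟪b (ξ t), ξ' t⟫_ℝ)
          = S2Aux.W b z v + S2Aux.W b v w + S2Aux.W b w z := by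
    intro v w
    refine ⟨S2Aux.tri z v w, S2Aux.tri' z v w, ⟨?_, S2Aux.tri'_intInt z v w 0 1,
      S2Aux.tri'_sq_intInt z v w 0 1, S2Aux.tri_key z v w⟩, ?_, ?_⟩
    · simp only [S2Aux.tri]
      norm_num
    · simp only [S2Aux.tri]
      norm_num
    · exact S2Aux.tri_work b hC1.continuous M hM z v w
  -- sign analysis
  have hsign : p ∈ Set.uIcc 0 qbar ∨ -p ∈ Set.uIcc 0 qbar := by
    simp only [Set.mem_uIcc]
    obtain ⟨hp1, hp2⟩ := abs_le.1 hp
    rcases abs_cases qbar with ⟨e1, e2⟩ | ⟨e1, e2⟩ <;> rcases le_total 0 p with h2 | h2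
    · exact Or.inl (Or.inl ⟨h2, by linarith⟩)
    · exact Or.inr (Or.inl ⟨by linarith, by linarith⟩)
    · exact Or.inr (Or.inr ⟨by linarith, by linarith⟩)
    · exact Or.inl (Or.inr ⟨by linarith, h2⟩)
  have him : Set.uIcc (0:ℝ) qbar ⊆ h '' Set.uIcc 0 1 := by
    have := intermediate_value_uIcc (a := (0:ℝ)) (b := 1) hcont.continuousOn
    rwa [h0, h1] at this
  rcases hsign with hmem | hmem
  · obtain ⟨l, _, hl⟩ := him hmem
    obtain ⟨ξ, ξ', hIn, hend, hwork⟩ := loop (A l) (Cv l)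
    exact ⟨ξ, ξ', hIn, hend, by rw [hwork]; exact hl⟩
  · obtain ⟨l, _, hl⟩ := him hmem
    obtain ⟨ξ, ξ', hIn, hend, hwork⟩ := loop (Cv l) (A l)
    refine ⟨ξ, ξ', hIn, hend, ?_⟩
    rw [hwork]
    have e1 := S2Aux.W_swap b z (A l)
    have e2 := S2Aux.W_swap b (A l) (Cv l)
    have e3 := S2Aux.W_swap b (Cv l) z
    have : h l = -p := hl
    rw [hh] at this
    simp only at this
    linarith
end
end

section
/- Fix q ∈ ℝ, x, y ∈ ℝⁿ and T > 0. Then the set A^{xy}_T(q) is not empty, i.e. there exists φ ∈ H^x_T with φ(T) = y and L_T(φ) = q. -/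
open MeasureTheory Filter Real Set
open scoped InnerProductSpace

noncomputable section

/-- line integral of `b` along the segment from `A` to `B`. -/
def segI (n : ℕ) (b : Euc n → Euc n) (A B : Euc n) : ℝ :=
  ∫ t in (0:ℝ)..1, ⟪b (A + t • (B - A)), B - A⟫_ℝ

/-- "there is a nice path on `[0,S]` from `x` to `z` with dissipation integral `d`" -/
def P (n : ℕ) (b : Euc n → Euc n) (S : ℝ) (x z : Euc n) (d : ℝ) : Prop :=
  ∃ φ φ' : ℝ → Euc n,
    φ 0 = x ∧
    IntervalIntegrable φ' volume 0 S ∧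
    IntervalIntegrable (fun t => ‖φ' t‖ ^ 2) volume 0 S ∧
    IntervalIntegrable (fun t => ⟪b (φ t), φ' t⟫_ℝ) volume 0 S ∧
    (∀ t ∈ Set.Icc (0 : ℝ) S, φ t = x + ∫ s in (0 : ℝ)..t, φ' s) ∧
    φ S = z ∧
    (∫ t in (0:ℝ)..S, ⟪b (φ t), φ' t⟫_ℝ) = d

theorem P_const (n : ℕ) (b : Euc n → Euc n) (S : ℝ) (A : Euc n) :
    P n b S A A 0 := by
  refine ⟨fun _ => A, fun _ => 0, rfl, ?_, ?_, ?_, ?_, rfl, ?_⟩ <;>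
    simp [intervalIntegrable_const]

theorem P_seg (n : ℕ) (b : Euc n → Euc n) (hb : Continuous b) {S : ℝ} (hS : 0 < S)
    (A B : Euc n) : P n b S A B (segI n b A B) := by
  refine ⟨fun t => A + (t/S) • (B - A), fun _ => S⁻¹ • (B - A), by simp, ?_, ?_, ?_, ?_, ?_, ?_⟩
  · exact intervalIntegrable_const
  · exact intervalIntegrable_const
  · apply Continuous.intervalIntegrable
    exact Continuous.inner (hb.comp (by fun_prop)) continuous_const
  · intro t ht
    rw [intervalIntegral.integral_const]
    simp [smul_smul, div_eq_mul_inv]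
  · simp [div_self hS.ne']
  · have h1 : ∀ t : ℝ, ⟪b (A + (t/S) • (B - A)), S⁻¹ • (B - A)⟫_ℝ
        = (fun u : ℝ => S⁻¹ * ⟪b (A + u • (B - A)), B - A⟫_ℝ) (t / S) := by
      intro t; rw [real_inner_smul_right]
    calc (∫ t in (0:ℝ)..S, ⟪b (A + (t/S) • (B - A)), S⁻¹ • (B - A)⟫_ℝ)
        = ∫ t in (0:ℝ)..S, (fun u : ℝ => S⁻¹ * ⟪b (A + u • (B - A)), B - A⟫_ℝ) (t / S) := by
          simp only [h1]
      _ = S • ∫ u in (0:ℝ)/S..S/S, S⁻¹ * ⟪b (A + u • (B - A)), B - A⟫_ℝ := by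
          rw [intervalIntegral.integral_comp_div (f := fun u : ℝ => S⁻¹ * ⟪b (A + u • (B - A)), B - A⟫_ℝ) hS.ne']
      _ = segI n b A B := by
          rw [zero_div, div_self hS.ne', intervalIntegral.integral_const_mul]
          simp [segI, smul_eq_mul]
          field_simp

section glue
variable {E : Type*} [NormedAddCommGroup E] [NormedSpace ℝ E]

theorem glue_intble {a c : ℝ} (ha : 0 < a) (hc : 0 < c) (F G : ℝ → E)
    (hF : IntervalIntegrable F volume 0 a) (hG : IntervalIntegrable G volume 0 c) :
    IntervalIntegrable (fun t => if t ≤ a then F t else G (t - a)) volume 0 (a + c) := by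
  apply IntervalIntegrable.trans (b := a)
  · apply hF.congr
    have : Set.EqOn (fun t => if t ≤ a then F t else G (t - a)) F (Set.uIoc 0 a) := by
      intro t ht
      rw [Set.uIoc_of_le ha.le] at ht
      simp [ht.2]
    exact this.symm
  · have hG' : IntervalIntegrable (fun t => G (t - a)) volume (0 + a) (c + a) :=
      hG.comp_sub_right a
    rw [zero_add, add_comm c a] at hG'
    apply hG'.congr
    have : Set.EqOn (fun t => if t ≤ a then F t else G (t - a)) (fun t => G (t - a))
        (Set.uIoc a (a + c)) := by
      intro t ht
      rw [Set.uIoc_of_le (by linarith)] at ht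
      simp [not_le.mpr ht.1]
    exact this.symm

theorem glue_int_left {a t : ℝ} (ha : 0 < a) (ht : t ≤ a) (F G : ℝ → E) :
    (∫ s in (0:ℝ)..t, (if s ≤ a then F s else G (s - a))) = ∫ s in (0:ℝ)..t, F s := by
  apply intervalIntegral.integral_congr
  intro s hs
  have : s ≤ a := by
    rcases le_total 0 t with h | h
    · rw [Set.uIcc_of_le h] at hs; exact le_trans hs.2 ht
    · rw [Set.uIcc_of_ge h] at hs; exact le_trans hs.2 (le_trans (le_of_eq rfl) (ha.le))
  simp [this]

theorem glue_int_right {a t : ℝ} (ha : 0 < a) (hat : a < t) (F G : ℝ → E)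
    (hF : IntervalIntegrable F volume 0 a)
    (hG : IntervalIntegrable G volume 0 (t - a)) :
    (∫ s in (0:ℝ)..t, (if s ≤ a then F s else G (s - a)))
      = (∫ s in (0:ℝ)..a, F s) + ∫ s in (0:ℝ)..(t - a), G s := by
  have hGt : IntervalIntegrable (fun s => G (s - a)) volume (0 + a) ((t - a) + a) :=
    hG.comp_sub_right a
  rw [zero_add, sub_add_cancel] at hGt
  have h1 : IntervalIntegrable (fun s => if s ≤ a then F s else G (s - a)) volume 0 a := by
    apply hF.congr
    have : Set.EqOn (fun s => if s ≤ a then F s else G (s - a)) F (Set.uIoc 0 a) := by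
      intro s hs; rw [Set.uIoc_of_le ha.le] at hs; simp [hs.2]
    exact this.symm
  have h2 : IntervalIntegrable (fun s => if s ≤ a then F s else G (s - a)) volume a t := by
    apply hGt.congr
    have : Set.EqOn (fun s => if s ≤ a then F s else G (s - a)) (fun s => G (s - a))
        (Set.uIoc a t) := by
      intro s hs; rw [Set.uIoc_of_le hat.le] at hs; simp [not_le.mpr hs.1]
    exact this.symm
  rw [← intervalIntegral.integral_add_adjacent_intervals h1 h2]
  congr 1
  · apply intervalIntegral.integral_congr
    intro s hs; rw [Set.uIcc_of_le ha.le] at hs; simp [hs.2]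
  · have : (∫ s in a..t, (if s ≤ a then F s else G (s - a)))
        = ∫ s in a..t, G (s - a) := by
      apply intervalIntegral.integral_congr_ae
      filter_upwards with s
      intro hs
      rw [Set.uIoc_of_le hat.le] at hs
      simp [not_le.mpr hs.1]
    rw [this, intervalIntegral.integral_comp_sub_right, sub_self]

end glue

theorem P_concat (n : ℕ) (b : Euc n → Euc n) {a c : ℝ} (ha : 0 < a) (hc : 0 < c)
    {x z w : Euc n} {d₁ d₂ : ℝ} (h₁ : P n b a x z d₁) (h₂ : P n b c z w d₂) :
    P n b (a + c) x w (d₁ + d₂) := by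
  obtain ⟨f, f', hf0, hfi, hfi2, hfib, hfrep, hfa, hfd⟩ := h₁
  obtain ⟨g, g', hg0, hgi, hgi2, hgib, hgrep, hgc, hgd⟩ := h₂
  refine ⟨fun t => if t ≤ a then f t else g (t - a),
          fun t => if t ≤ a then f' t else g' (t - a), by simp [ha.le, hf0], ?_, ?_, ?_, ?_, ?_, ?_⟩
  · exact glue_intble ha hc f' g' hfi hgi
  · have := glue_intble ha hc (fun t => ‖f' t‖ ^ 2) (fun t => ‖g' t‖ ^ 2) hfi2 hgi2
    apply this.congr
    intro t _
    by_cases h : t ≤ a <;> simp [h]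
  · have := glue_intble ha hc (fun t => ⟪b (f t), f' t⟫_ℝ) (fun t => ⟪b (g t), g' t⟫_ℝ) hfib hgib
    apply this.congr
    intro t _
    by_cases h : t ≤ a <;> simp [h]
  · intro t ht
    by_cases h : t ≤ a
    · simp only [h, if_true]
      rw [glue_int_left ha h f' g']
      exact hfrep t ⟨ht.1, h⟩
    · push_neg at h
      simp only [not_le.mpr h, if_false]
      have htc : t - a ∈ Set.Icc (0:ℝ) c := ⟨by linarith, by linarith [ht.2]⟩
      rw [glue_int_right ha h f' g' hfi (hgi.mono_set ?_)]
      · rw [hgrep (t - a) htc, ← hfa, hfrep a ⟨ha.le, le_refl a⟩]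
        abel
      · rw [Set.uIcc_of_le htc.1, Set.uIcc_of_le hc.le]
        exact Set.Icc_subset_Icc le_rfl htc.2
  · have h : ¬ (a + c ≤ a) := by linarith
    simp only [h, if_false, add_sub_cancel_left, hgc]
  · have h1 : (fun t => ⟪b (if t ≤ a then f t else g (t - a)),
        (if t ≤ a then f' t else g' (t - a))⟫_ℝ)
        = fun t => if t ≤ a then ⟪b (f t), f' t⟫_ℝ else ⟪b (g (t - a)), g' (t - a)⟫_ℝ := by
      funext t; by_cases h : t ≤ a <;> simp [h]
    rw [h1, glue_int_right ha (show a < a + c by linarith) (fun t => ⟪b (f t), f' t⟫_ℝ)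
      (fun t => ⟪b (g t), g' t⟫_ℝ) hfib (by simpa using hgib), hfd, add_sub_cancel_left, hgd]

theorem segI_rev (n : ℕ) (b : Euc n → Euc n) (A B : Euc n) :
    segI n b B A = - segI n b A B := by
  unfold segI
  have h : ∀ t : ℝ, ⟪b (B + t • (A - B)), A - B⟫_ℝ
      = (fun u : ℝ => - ⟪b (A + u • (B - A)), B - A⟫_ℝ) (1 - t) := by
    intro t
    have hpt : B + t • (A - B) = A + (1 - t) • (B - A) := by module
    simp only [hpt]
    rw [← inner_neg_right, neg_sub]
  calc (∫ t in (0:ℝ)..1, ⟪b (B + t • (A - B)), A - B⟫_ℝ)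
      = ∫ t in (0:ℝ)..1, (fun u : ℝ => - ⟪b (A + u • (B - A)), B - A⟫_ℝ) (1 - t) := by
        simp only [h]
    _ = - segI n b A B := by
        rw [intervalIntegral.integral_comp_sub_left
          (fun u : ℝ => - ⟪b (A + u • (B - A)), B - A⟫_ℝ) 1]
        norm_num [segI, intervalIntegral.integral_neg]

theorem P_tri (n : ℕ) (b : Euc n → Euc n) (hb : Continuous b) {S : ℝ} (hS : 0 < S)
    (A B C : Euc n) : P n b S A A (segI n b A B + segI n b B C + segI n b C A) := by
  have h3 : (0:ℝ) < S/3 := by linarith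
  have h1 := P_concat n b h3 h3 (P_seg n b hb h3 A B) (P_seg n b hb h3 B C)
  have h2 := P_concat n b (by linarith : (0:ℝ) < S/3 + S/3) h3 h1 (P_seg n b hb h3 C A)
  have : S/3 + S/3 + S/3 = S := by ring
  rwa [this] at h2

theorem P_loops (n : ℕ) (b : Euc n → Euc n) (hb : Continuous b)
    (A B C : Euc n) (m : ℕ) : ∀ S : ℝ, 0 < S →
    P n b S A A (m * (segI n b A B + segI n b B C + segI n b C A)) := by
  induction m with
  | zero => intro S hS; simpa using P_const n b S A
  | succ m ih =>
      intro S hS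
      have h2 : (0:ℝ) < S/2 := by linarith
      have := P_concat n b h2 h2 (ih (S/2) h2) (P_tri n b hb h2 A B C)
      have harith : S/2 + S/2 = S := by ring
      rw [harith] at this
      convert this using 1
      push_cast
      ring

theorem P_loopsZ (n : ℕ) (b : Euc n → Euc n) (hb : Continuous b)
    (A B C : Euc n) (k : ℤ) {S : ℝ} (hS : 0 < S) :
    P n b S A A (k * (segI n b A B + segI n b B C + segI n b C A)) := by
  rcases le_or_gt 0 k with h | h
  · have := P_loops n b hb A B C k.toNat S hS
    rwa [show ((k.toNat : ℝ)) = (k:ℝ) by exact_mod_cast congrArg Int.cast (Int.toNat_of_nonneg h)]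
      at this
  · have := P_loops n b hb A C B (-k).toNat S hS
    have hrev : segI n b A C + segI n b C B + segI n b B A
        = -(segI n b A B + segI n b B C + segI n b C A) := by
      rw [segI_rev n b A C, segI_rev n b C B, segI_rev n b B A]
      ring
    rw [hrev] at this
    have hcast : ((((-k).toNat : ℕ) : ℝ)) = -(k:ℝ) := by
      exact_mod_cast congrArg Int.cast (Int.toNat_of_nonneg (by linarith : (0:ℤ) ≤ -k))
    rw [hcast] at this
    convert this using 1
    ring

theorem segI_integrable (n : ℕ) (b : Euc n → Euc n) (hb : Continuous b) (A B : Euc n) :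
    IntervalIntegrable (fun t : ℝ => ⟪b (A + t • (B - A)), B - A⟫_ℝ) volume 0 1 :=
  (Continuous.inner (hb.comp (by fun_prop)) continuous_const).intervalIntegrable 0 1

theorem exists_triangle (n : ℕ) (b : Euc n → Euc n) (hb : Continuous b)
    (hnc : ¬ ∃ F : Euc n → ℝ, Differentiable ℝ F ∧ ∀ x, gradient F x = b x) :
    ∃ A B C : Euc n, segI n b A B + segI n b B C + segI n b C A ≠ 0 := by
  by_contra hcon
  push_neg at hcon
  apply hnc
  set F : Euc n → ℝ := fun z => segI n b 0 z with hF
  have key : ∀ z : Euc n, HasGradientAt F (b z) z := by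
    intro z
    rw [hasGradientAt_iff_hasFDerivAt]
    rw [hasFDerivAt_iff_isLittleO_nhds_zero]
    have hstep : ∀ h : Euc n, F (z + h) - F z - ⟪b z, h⟫_ℝ
        = ∫ t in (0:ℝ)..1, ⟪b (z + t • h) - b z, h⟫_ℝ := by
      intro h
      have h0 := hcon 0 z (z + h)
      have hFzh : F (z + h) = F z + segI n b z (z + h) := by
        have := segI_rev n b 0 (z + h)
        have hF2 : segI n b (z + h) 0 = - F (z + h) := by rw [hF]; simp [this]
        rw [hF]
        simp only [hF] at h0 ⊢
        linarith [h0, hF2]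
      rw [hFzh]
      have hseg : segI n b z (z + h) = ∫ t in (0:ℝ)..1, ⟪b (z + t • h), h⟫_ℝ := by
        unfold segI
        simp
      rw [hseg]
      have hint : (∫ t in (0:ℝ)..1, ⟪b (z + t • h) - b z, h⟫_ℝ)
          = (∫ t in (0:ℝ)..1, ⟪b (z + t • h), h⟫_ℝ) - ∫ t in (0:ℝ)..1, ⟪(b z : Euc n), h⟫_ℝ := by
        rw [← intervalIntegral.integral_sub]
        · congr 1; funext t; rw [← inner_sub_left]
        · have : (fun t : ℝ => ⟪b (z + t • h), h⟫_ℝ)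
              = fun t : ℝ => ⟪b (z + t • (((z + h) - z))), (z + h) - z⟫_ℝ := by
            funext t; simp
          rw [this]; exact segI_integrable n b hb z (z + h)
        · exact intervalIntegrable_const
      rw [hint]
      simp
    rw [Asymptotics.isLittleO_iff]
    intro ε hε
    have hcb : ContinuousAt b z := hb.continuousAt
    rcases Metric.continuousAt_iff.mp hcb ε hε with ⟨δ, hδ, hball⟩
    have : ∀ᶠ h : Euc n in nhds 0, ‖h‖ < δ := by
      have := Metric.ball_mem_nhds (0 : Euc n) hδ
      filter_upwards [this] with h hh
      simpa [dist_eq_norm] using hh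
    filter_upwards [this] with h hh
    have heq : z + h - z = h := by abel
    have hbd : ∀ t ∈ Set.uIoc (0:ℝ) 1, ‖⟪b (z + t • h) - b z, h⟫_ℝ‖ ≤ ε * ‖h‖ := by
      intro t ht
      rw [Set.uIoc_of_le (by norm_num : (0:ℝ) ≤ 1)] at ht
      have hth : dist (z + t • h) z < δ := by
        rw [dist_eq_norm]
        have : ‖z + t • h - z‖ = ‖t • h‖ := by congr 1; abel
        rw [this, norm_smul]
        calc ‖t‖ * ‖h‖ ≤ 1 * ‖h‖ := by
              apply mul_le_mul_of_nonneg_right _ (norm_nonneg h)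
              rw [Real.norm_eq_abs, abs_of_pos ht.1]; exact ht.2
          _ < δ := by rwa [one_mul]
      calc ‖⟪b (z + t • h) - b z, h⟫_ℝ‖ ≤ ‖b (z + t • h) - b z‖ * ‖h‖ := norm_inner_le_norm _ _
        _ ≤ ε * ‖h‖ := by
            apply mul_le_mul_of_nonneg_right _ (norm_nonneg h)
            have := hball hth
            rw [dist_eq_norm] at this
            exact this.le
    calc ‖F (z + h) - F z - ⟪b z, h⟫_ℝ‖
        = ‖∫ t in (0:ℝ)..1, ⟪b (z + t • h) - b z, h⟫_ℝ‖ := by rw [hstep h]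
      _ ≤ (ε * ‖h‖) * |1 - 0| := intervalIntegral.norm_integral_le_of_norm_le_const hbd
      _ = ε * ‖h‖ := by norm_num
  exact ⟨F, fun z => (key z).differentiableAt, fun z => (key z).gradient⟩

theorem segI_cont2 (n : ℕ) (b : Euc n → Euc n) (hb : Continuous b)
    (f g : ℝ → Euc n) (hf : Continuous f) (hg : Continuous g) :
    Continuous fun s : ℝ => segI n b (f s) (g s) := by
  unfold segI
  apply intervalIntegral.continuous_parametric_intervalIntegral_of_continuous'
    (f := fun (s : ℝ) (t : ℝ) => ⟪b (f s + t • (g s - f s)), g s - f s⟫_ℝ)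
  apply Continuous.inner
  · apply hb.comp
    exact (hf.comp continuous_fst).add
      (continuous_snd.smul ((hg.comp continuous_fst).sub (hf.comp continuous_fst)))
  · exact (hg.comp continuous_fst).sub (hf.comp continuous_fst)

theorem statement3' (n : ℕ) (b : Euc n → Euc n)
    (hB : (ContDiff ℝ 1 b) ∧
      ¬ ∃ F : Euc n → ℝ, Differentiable ℝ F ∧ ∀ x, gradient F x = b x)
    (q : ℝ) (x y : Euc n) (T : ℝ) (hT : 0 < T) :
    ∃ φ φ' : ℝ → Euc n, InHT n T x φ φ' ∧ φ T = y ∧ Diss n b T φ φ' = q := by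
  have hb : Continuous b := hB.1.continuous
  obtain ⟨p, u, v, hc⟩ := exists_triangle n b hb hB.2
  set c : ℝ := segI n b p u + segI n b u v + segI n b v p with hcdef
  set r : ℝ := q * T / 2 - segI n b x p - segI n b p y with hrdef
  set k : ℤ := ⌊r / c⌋ with hkdef
  set θ : ℝ := Int.fract (r / c) with hθdef
  have hθ0 : 0 ≤ θ := Int.fract_nonneg _
  have hθ1 : θ ≤ 1 := (Int.fract_lt_one _).le
  have hrk : r - k * c = c * θ := by
    rw [hθdef, Int.fract]
    field_simp
    ring
  -- the scaled-triangle circulation function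
  set Cfun : ℝ → ℝ := fun s =>
    segI n b p (p + s • (u - p)) + segI n b (p + s • (u - p)) (p + s • (v - p))
      + segI n b (p + s • (v - p)) p with hCdef
  have hCcont : Continuous Cfun := by
    have haff : ∀ w : Euc n, Continuous fun s : ℝ => p + s • w :=
      fun w => continuous_const.add (continuous_id.smul continuous_const)
    exact ((segI_cont2 n b hb _ _ continuous_const (haff (u - p))).add
      (segI_cont2 n b hb _ _ (haff (u - p)) (haff (v - p)))).add
      (segI_cont2 n b hb _ _ (haff (v - p)) continuous_const)
  have hC0 : Cfun 0 = 0 := by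
    have : segI n b p p = 0 := by simp [segI]
    simp [hCdef, this]
  have hC1 : Cfun 1 = c := by simp [hCdef, hcdef]
  have hmem : c * θ ∈ Set.uIcc (Cfun 0) (Cfun 1) := by
    rw [hC0, hC1, Set.mem_uIcc]
    rcases le_or_gt 0 c with h | h
    · left; constructor
      · exact mul_nonneg h hθ0
      · nlinarith
    · right; constructor
      · nlinarith
      · exact mul_nonpos_of_nonpos_of_nonneg h.le hθ0
  obtain ⟨s, _, hs⟩ := intermediate_value_uIcc hCcont.continuousOn hmem
  -- assemble the path
  have h4 : (0:ℝ) < T/4 := by linarith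
  have piece1 := P_seg n b hb h4 x p
  have piece2 := P_loopsZ n b hb p u v k h4
  have piece3 : P n b (T/4) p p (Cfun s) := by
    rw [hCdef]
    exact P_tri n b hb h4 p (p + s • (u - p)) (p + s • (v - p))
  have piece4 := P_seg n b hb h4 p y
  have h12 := P_concat n b h4 h4 piece1 piece2
  have h123 := P_concat n b (by linarith : (0:ℝ) < T/4 + T/4) h4 h12 piece3
  have h1234 := P_concat n b (by linarith : (0:ℝ) < T/4 + T/4 + T/4) h4 h123 piece4
  rw [show T/4 + T/4 + T/4 + T/4 = T by ring] at h1234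
  have hdtot : segI n b x p + ↑k * c + Cfun s + segI n b p y = q * T / 2 := by
    rw [hs, ← hrk, hrdef]
    ring
  rw [hdtot] at h1234
  obtain ⟨φ, φ', h0, hi, hi2, _, hrep, hend, hdiss⟩ := h1234
  refine ⟨φ, φ', ⟨h0, hi, hi2, hrep⟩, hend, ?_⟩
  rw [Diss, hdiss]
  field_simp

/-- for every `q`, `x`, `y` and `T > 0`, the set `A^{xy}_T(q)` is nonempty. -/
theorem statement3 (n : ℕ) (V : Euc n → ℝ) (b : Euc n → Euc n)
    (hA : AssumptionA n V) (hB : AssumptionB n b)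
    (q : ℝ) (x y : Euc n) (T : ℝ) (hT : 0 < T) :
    ∃ φ φ' : ℝ → Euc n, InHT n T x φ φ' ∧ φ T = y ∧ Diss n b T φ φ' = q := by
  exact statement3' n b ⟨hB.1, hB.2.2.2⟩ q x y T hT
end
end

section
/- Fix q ∈ ℝ and x, y ∈ ℝⁿ. There exist reals T₀, C ∈ (0,∞), depending on q, x, y, such that for every T ≥ T₀ one has S^{xy}_T(q) ≤ C·T. -/
open MeasureTheory Filter Real Set
open scoped InnerProductSpace

noncomputable section

namespace S4

variable {n : ℕ}

/-- Work of `b` along the segment from `p` to `p + w`. -/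
def segWork (b : Euc n → Euc n) (p w : Euc n) : ℝ := ∫ t in (0:ℝ)..1, ⟪b (p + t • w), w⟫_ℝ

lemma bLip {b : Euc n → Euc n} (hb : ContDiff ℝ 1 b) {M : ℝ}
    (hM : ∀ x, ‖fderiv ℝ b x‖ ≤ M) : ∀ u v : Euc n, ‖b u - b v‖ ≤ M * ‖u - v‖ := by
  intro u v
  exact Convex.norm_image_sub_le_of_norm_fderiv_le
    (fun x _ => (hb.differentiable (by norm_num)).differentiableAt) (fun x _ => hM x)
    convex_univ (mem_univ v) (mem_univ u)

lemma segWork_cont_integrand {b : Euc n → Euc n} (hb : Continuous b) (p w : Euc n) :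
    Continuous fun t : ℝ => ⟪b (p + t • w), w⟫_ℝ := by
  exact (hb.comp (continuous_const.add (continuous_id.smul continuous_const))).inner continuous_const

lemma segWork_est {b : Euc n → Euc n} (hb : ContDiff ℝ 1 b) {M : ℝ} (hM0 : 0 ≤ M)
    (hM : ∀ x, ‖fderiv ℝ b x‖ ≤ M) (p w : Euc n) :
    |segWork b p w - ⟪b p, w⟫_ℝ| ≤ M / 2 * ‖w‖ ^ 2 := by
  have hcont := segWork_cont_integrand (hb.continuous) p w
  have h1 : segWork b p w - ⟪b p, w⟫_ℝ = ∫ t in (0:ℝ)..1, ⟪b (p + t • w) - b p, w⟫_ℝ := by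
    rw [segWork]
    have : ∀ t : ℝ, ⟪b (p + t • w) - b p, w⟫_ℝ = ⟪b (p + t • w), w⟫_ℝ - ⟪b p, w⟫_ℝ := by
      intro t; rw [inner_sub_left]
    simp_rw [this]
    rw [intervalIntegral.integral_sub (hcont.intervalIntegrable 0 1)
      (intervalIntegrable_const)]
    simp
  rw [h1]
  have h2 : ∀ t : ℝ, 0 < t → t ≤ 1 → ‖⟪b (p + t • w) - b p, w⟫_ℝ‖ ≤ M * ‖w‖^2 * t := by
    intro t ht0 ht1
    calc ‖⟪b (p + t • w) - b p, w⟫_ℝ‖ ≤ ‖b (p + t • w) - b p‖ * ‖w‖ := norm_inner_le_norm _ _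
    _ ≤ (M * ‖t • w‖) * ‖w‖ := by
        have := bLip hb hM (p + t • w) p
        simp only [add_sub_cancel_left] at this
        exact mul_le_mul_of_nonneg_right this (norm_nonneg w)
    _ = M * ‖w‖^2 * |t| := by rw [norm_smul]; simp [Real.norm_eq_abs]; ring
    _ = M * ‖w‖^2 * t := by rw [abs_of_pos ht0]
  calc |∫ t in (0:ℝ)..1, ⟪b (p + t • w) - b p, w⟫_ℝ| ≤ ∫ t in (0:ℝ)..1, M * ‖w‖^2 * t := by
        apply intervalIntegral.abs_integral_le_integral_abs (by norm_num) |>.trans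
        apply intervalIntegral.integral_mono_on (by norm_num)
        · exact ((((hb.continuous.comp (continuous_const.add (continuous_id.smul continuous_const))).sub continuous_const).inner continuous_const).abs).intervalIntegrable 0 1
        · exact (continuous_const.mul continuous_id).intervalIntegrable 0 1
        · intro t ht
          rcases eq_or_lt_of_le ht.1 with h | h
          · subst h; simp
          · exact h2 t h ht.2
  _ = M / 2 * ‖w‖ ^ 2 := by
      rw [intervalIntegral.integral_const_mul]
      simp [integral_id]
      ring

lemma exists_bad {b : Euc n → Euc n} (hB : AssumptionB n b) :
    ∃ z h : Euc n, segWork b 0 z + segWork b z h ≠ segWork b 0 (z + h) := by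
  obtain ⟨hb1, -, ⟨M0, hM0⟩, hnc⟩ := hB
  by_contra hcon
  push_neg at hcon
  set M := max M0 0 with hMdef
  have hM : ∀ x, ‖fderiv ℝ b x‖ ≤ M := fun x => (hM0 x).trans (le_max_left _ _)
  have hM0' : 0 ≤ M := le_max_right _ _
  set F := fun w : Euc n => segWork b 0 w with hF
  have key : ∀ p w : Euc n, F w - F p = segWork b p (w - p) := by
    intro p w
    have := hcon p (w - p)
    rw [add_sub_cancel] at this
    simp only [hF]
    linarith
  have grad : ∀ p, HasGradientAt F (b p) p := by
    intro p
    rw [hasGradientAt_iff_isLittleO]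
    rw [Asymptotics.isLittleO_iff]
    intro c hc
    rw [Metric.eventually_nhds_iff]
    refine ⟨2 * c / (M + 1), by positivity, ?_⟩
    intro w hw
    rw [dist_eq_norm] at hw
    rw [key p w]
    have h1 := segWork_est hb1 hM0' hM p (w - p)
    rw [Real.norm_eq_abs]
    refine h1.trans ?_
    rw [pow_two, ← mul_assoc]
    apply mul_le_mul_of_nonneg_right _ (norm_nonneg _)
    have hM1 : M / 2 * ‖w - p‖ ≤ M / 2 * (2 * c / (M + 1)) := by
      apply mul_le_mul_of_nonneg_left hw.le (by positivity)
    refine hM1.trans ?_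
    have heq : M / 2 * (2 * c / (M + 1)) = M * c / (M + 1) := by ring
    rw [heq, div_le_iff₀ (by positivity)]
    nlinarith [hc.le, hM0']
  exact hnc ⟨F, fun p => (grad p).differentiableAt, fun p => (grad p).gradient⟩



/-- helper: interval integrability of bounded measurable functions -/
lemma ii_of_bdd {E : Type*} [NormedAddCommGroup E] [MeasurableSpace E] [BorelSpace E]
    [SecondCountableTopology E] {f : ℝ → E} (hf : Measurable f) (C : ℝ)
    (hC : ∀ s, ‖f s‖ ≤ C) (a b : ℝ) : IntervalIntegrable f volume a b := by
  apply IntervalIntegrable.mono_fun' (g := fun _ => C) intervalIntegrable_const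
    hf.aestronglyMeasurable.restrict
  filter_upwards with s using hC s

/-- helper: interval integrals only depend on values on the open interval -/
lemma integral_congr_Ioo {E : Type*} [NormedAddCommGroup E] [NormedSpace ℝ E]
    {f g : ℝ → E} {a b : ℝ} (hab : a ≤ b)
    (h : ∀ s ∈ Set.Ioo a b, f s = g s) : ∫ s in a..b, f s = ∫ s in a..b, g s := by
  apply intervalIntegral.integral_congr_ae
  have hb : ∀ᵐ s : ℝ, s ≠ b := by
    refine MeasureTheory.ae_iff.mpr ?_
    simpa using measure_singleton b
  filter_upwards [hb] with s hs hmem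
  rw [Set.uIoc_of_le hab] at hmem
  exact h s ⟨hmem.1, lt_of_le_of_ne hmem.2 hs⟩

section Loop
variable (z h : Euc n)

/-- velocity of the triangular loop `0 → z → z+h → 0`, periodically extended -/
def tri : ℝ → Euc n := fun s =>
  if Int.fract s < 1/3 then (3:ℝ) • z else
    if Int.fract s < 2/3 then (3:ℝ) • h else -((3:ℝ) • (z + h))

/-- the loop itself -/
def Gam : ℝ → Euc n := fun u => ∫ s in (0:ℝ)..u, tri z h s

/-- size bound for `tri` -/
def Gbd : ℝ := 3*‖z‖ + 3*‖h‖ + 3*‖z+h‖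

lemma Gbd_nonneg : 0 ≤ Gbd z h := by
  have := norm_nonneg z; have := norm_nonneg h; have := norm_nonneg (z+h)
  unfold Gbd; linarith

lemma tri_meas : Measurable (tri z h) := by
  unfold tri
  refine Measurable.ite ?_ measurable_const (Measurable.ite ?_ measurable_const measurable_const)
  · exact measurable_fract measurableSet_Iio
  · exact measurable_fract measurableSet_Iio

lemma tri_norm : ∀ s, ‖tri z h s‖ ≤ Gbd z h := by
  intro s
  have := norm_nonneg z; have := norm_nonneg h; have := norm_nonneg (z+h)
  unfold tri Gbd
  split_ifs
  · rw [norm_smul]; simp only [Real.norm_eq_abs]; rw [abs_of_nonneg (by norm_num : (0:ℝ) ≤ 3)]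
    linarith
  · rw [norm_smul]; simp only [Real.norm_eq_abs]; rw [abs_of_nonneg (by norm_num : (0:ℝ) ≤ 3)]
    linarith
  · rw [norm_neg, norm_smul]; simp only [Real.norm_eq_abs]
    rw [abs_of_nonneg (by norm_num : (0:ℝ) ≤ 3)]
    linarith

lemma tri_per : Function.Periodic (tri z h) 1 := by
  intro s; unfold tri; rw [Int.fract_add_one]

lemma tri_ii : ∀ a b : ℝ, IntervalIntegrable (tri z h) volume a b :=
  ii_of_bdd (tri_meas z h) _ (tri_norm z h)

lemma Gam_cont : Continuous (Gam z h) :=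
  intervalIntegral.continuous_primitive (tri_ii z h) 0

lemma Gam_zero : Gam z h 0 = 0 := by unfold Gam; simp

lemma Gam_sub (u v : ℝ) : ‖Gam z h u - Gam z h v‖ ≤ Gbd z h * |u - v| := by
  have hadd := intervalIntegral.integral_add_adjacent_intervals
    (tri_ii z h 0 v) (tri_ii z h v u)
  have : Gam z h u - Gam z h v = ∫ s in v..u, tri z h s := by
    unfold Gam; rw [← hadd]; abel
  rw [this]
  exact intervalIntegral.norm_integral_le_of_norm_le_const (fun s _ => tri_norm z h s)

lemma tri_int_one : (∫ s in (0:ℝ)..1, tri z h s) = 0 := by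
  have h1 : (∫ s in (0:ℝ)..(1/3), tri z h s) = z := by
    rw [integral_congr_Ioo (by norm_num) (g := fun _ => (3:ℝ) • z) ?_]
    · rw [intervalIntegral.integral_const, smul_smul]; norm_num
    · intro s hs
      unfold tri
      rw [Int.fract_eq_self.mpr ⟨hs.1.le, by linarith [hs.2]⟩, if_pos hs.2]
  have h2 : (∫ s in (1/3:ℝ)..(2/3), tri z h s) = h := by
    rw [integral_congr_Ioo (by norm_num) (g := fun _ => (3:ℝ) • h) ?_]
    · rw [intervalIntegral.integral_const, smul_smul]; norm_num
    · intro s hs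
      unfold tri
      rw [Int.fract_eq_self.mpr ⟨by linarith [hs.1], by linarith [hs.2]⟩,
        if_neg (by push_neg; linarith [hs.1]), if_pos hs.2]
  have h3 : (∫ s in (2/3:ℝ)..1, tri z h s) = -(z + h) := by
    rw [integral_congr_Ioo (by norm_num) (g := fun _ => -((3:ℝ) • (z + h))) ?_]
    · rw [intervalIntegral.integral_const, smul_neg, smul_smul]; norm_num
    · intro s hs
      unfold tri
      rw [Int.fract_eq_self.mpr ⟨by linarith [hs.1], hs.2⟩,
        if_neg (by push_neg; linarith [hs.1]), if_neg (by push_neg; linarith [hs.1])]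
  have ha := intervalIntegral.integral_add_adjacent_intervals
    (tri_ii z h 0 (1/3)) (tri_ii z h (1/3) (2/3))
  have hb := intervalIntegral.integral_add_adjacent_intervals
    ((tri_ii z h 0 (1/3)).trans (tri_ii z h (1/3) (2/3))) (tri_ii z h (2/3) 1)
  rw [← hb, ← ha, h1, h2, h3]
  abel

lemma Gam_per : Function.Periodic (Gam z h) 1 := by
  intro u
  have hadd := intervalIntegral.integral_add_adjacent_intervals
    (tri_ii z h 0 u) (tri_ii z h u (u+1))
  have hper : (∫ s in u..(u+1), tri z h s) = ∫ s in (0:ℝ)..(0+1), tri z h s :=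
    (tri_per z h).intervalIntegral_add_eq u 0
  unfold Gam
  rw [← hadd, hper, zero_add, tri_int_one, add_zero]

lemma Gam_bound (u : ℝ) : ‖Gam z h u‖ ≤ Gbd z h := by
  have h1 : Gam z h u = Gam z h (Int.fract u) := by
    have := (Gam_per z h).sub_int_mul_eq (x := u) (n := ⌊u⌋)
    rw [mul_one] at this
    rw [← this]; rfl
  rw [h1]
  have h2 := Gam_sub z h (Int.fract u) 0
  rw [Gam_zero, sub_zero, sub_zero] at h2
  refine h2.trans ?_
  have h3 : |Int.fract u| ≤ 1 := by
    rw [abs_of_nonneg (Int.fract_nonneg u)]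
    exact (Int.fract_lt_one u).le
  nlinarith [Gbd_nonneg z h]

end Loop

section Loop
variable (b : Euc n → Euc n) (z h : Euc n)

lemma GamA : ∀ u ∈ Set.Icc (0:ℝ) (1/3), Gam z h u = (3*u) • z := by
  intro u hu
  unfold Gam
  rw [integral_congr_Ioo hu.1 (g := fun _ => (3:ℝ) • z) ?_]
  · rw [intervalIntegral.integral_const, sub_zero, smul_smul, mul_comm]
  · intro s hs
    unfold tri
    rw [Int.fract_eq_self.mpr ⟨hs.1.le, by linarith [hs.2, hu.2]⟩,
      if_pos (by linarith [hs.2, hu.2])]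

lemma GamB : ∀ u ∈ Set.Icc (1/3:ℝ) (2/3), Gam z h u = z + (3*u - 1) • h := by
  intro u hu
  have h0 : Gam z h (1/3) = z := by
    rw [GamA z h (1/3) (by norm_num)]; norm_num
  have hadd := intervalIntegral.integral_add_adjacent_intervals
    (tri_ii z h 0 (1/3)) (tri_ii z h (1/3) u)
  have h1 : (∫ s in (1/3:ℝ)..u, tri z h s) = (u - 1/3) • ((3:ℝ) • h) := by
    rw [integral_congr_Ioo hu.1 (g := fun _ => (3:ℝ) • h) ?_]
    · rw [intervalIntegral.integral_const]
    · intro s hs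
      unfold tri
      rw [Int.fract_eq_self.mpr ⟨by linarith [hs.1], by linarith [hs.2, hu.2]⟩,
        if_neg (by push_neg; linarith [hs.1]), if_pos (by linarith [hs.2, hu.2])]
  have : Gam z h u = Gam z h (1/3) + ∫ s in (1/3:ℝ)..u, tri z h s := by
    unfold Gam at *; rw [← hadd]
  rw [this, h0, h1, smul_smul]
  congr 1
  have : (u - 1/3) * 3 = 3*u - 1 := by ring
  rw [this]

lemma GamC : ∀ u ∈ Set.Icc (2/3:ℝ) 1, Gam z h u = (3 - 3*u) • (z + h) := by
  intro u hu
  have h0 : Gam z h (2/3) = z + h := by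
    rw [GamB z h (2/3) (by norm_num)]; norm_num
  have hadd := intervalIntegral.integral_add_adjacent_intervals
    (tri_ii z h 0 (2/3)) (tri_ii z h (2/3) u)
  have h1 : (∫ s in (2/3:ℝ)..u, tri z h s) = (u - 2/3) • (-((3:ℝ) • (z + h))) := by
    rw [integral_congr_Ioo hu.1 (g := fun _ => -((3:ℝ) • (z+h))) ?_]
    · rw [intervalIntegral.integral_const]
    · intro s hs
      unfold tri
      rw [Int.fract_eq_self.mpr ⟨by linarith [hs.1], by linarith [hs.2, hu.2]⟩,
        if_neg (by push_neg; linarith [hs.1]), if_neg (by push_neg; linarith [hs.1])]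
  have h2 : Gam z h u = Gam z h (2/3) + ∫ s in (2/3:ℝ)..u, tri z h s := by
    unfold Gam at *; rw [← hadd]
  rw [h2, h0, h1]
  module

/-- the dissipation density along the loop -/
def rho : ℝ → ℝ := fun u => ⟪b (Gam z h u), tri z h u⟫_ℝ

/-- the circulation of `b` around the triangle -/
def Kc : ℝ := segWork b 0 z + segWork b z h - segWork b 0 (z+h)

lemma rho_per : Function.Periodic (rho b z h) 1 := by
  intro u; unfold rho; rw [tri_per z h u, Gam_per z h u]

lemma rho_meas (hb : Continuous b) : Measurable (rho b z h) := by
  unfold rho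
  exact Measurable.inner ((hb.comp (Gam_cont z h)).measurable) (tri_meas z h)

lemma rho_bound (Mb : ℝ) (hMb : ∀ x, ‖b x‖ ≤ Mb) (u : ℝ) :
    ‖rho b z h u‖ ≤ Mb * Gbd z h := by
  unfold rho
  refine (norm_inner_le_norm _ _).trans ?_
  have h1 := hMb (Gam z h u); have h2 := tri_norm z h u
  have := norm_nonneg (b (Gam z h u)); have := norm_nonneg (tri z h u)
  nlinarith

lemma rho_ii (hb : Continuous b) (Mb : ℝ) (hMb : ∀ x, ‖b x‖ ≤ Mb) :
    ∀ a c : ℝ, IntervalIntegrable (rho b z h) volume a c :=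
  ii_of_bdd (rho_meas b z h hb) _ (rho_bound b z h Mb hMb)

lemma rho_int_one (hb : Continuous b) (Mb : ℝ) (hMb : ∀ x, ‖b x‖ ≤ Mb) :
    (∫ u in (0:ℝ)..1, rho b z h u) = Kc b z h := by
  have rii := rho_ii b z h hb Mb hMb
  have p1 : (∫ u in (0:ℝ)..(1/3), rho b z h u) = segWork b 0 z := by
    have e1 : (∫ u in (0:ℝ)..(1/3), rho b z h u)
        = ∫ u in (0:ℝ)..(1/3), 3 * ⟪b ((3*u) • z), z⟫_ℝ := by
      apply integral_congr_Ioo (by norm_num)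
      intro s hs
      unfold rho tri
      rw [GamA z h s ⟨hs.1.le, hs.2.le⟩,
        Int.fract_eq_self.mpr ⟨hs.1.le, by linarith [hs.2]⟩, if_pos hs.2,
        real_inner_smul_right]
    have e2 : (3:ℝ) • (∫ x in (0:ℝ)..(1/3), ⟪b ((3*x) • z), z⟫_ℝ)
        = ∫ x in (3*(0:ℝ))..(3*(1/3:ℝ)), ⟪b (x • z), z⟫_ℝ :=
      intervalIntegral.smul_integral_comp_mul_left (fun t => ⟪b (t • z), z⟫_ℝ) 3
    rw [e1, intervalIntegral.integral_const_mul, ← smul_eq_mul, e2,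
      show (3*(0:ℝ)) = 0 by norm_num, show (3*(1/3:ℝ)) = 1 by norm_num]
    unfold segWork
    simp only [zero_add]
  have p2 : (∫ u in (1/3:ℝ)..(2/3), rho b z h u) = segWork b z h := by
    have e1 : (∫ u in (1/3:ℝ)..(2/3), rho b z h u)
        = ∫ u in (1/3:ℝ)..(2/3), 3 * ⟪b (z + (3*u - 1) • h), h⟫_ℝ := by
      apply integral_congr_Ioo (by norm_num)
      intro s hs
      unfold rho tri
      rw [GamB z h s ⟨hs.1.le, hs.2.le⟩,
        Int.fract_eq_self.mpr ⟨by linarith [hs.1], by linarith [hs.2]⟩,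
        if_neg (by push_neg; linarith [hs.1]), if_pos hs.2,
        real_inner_smul_right]
    have e2 : (3:ℝ) • (∫ x in (1/3:ℝ)..(2/3), ⟪b (z + (3*x - 1) • h), h⟫_ℝ)
        = ∫ x in (3*(1/3:ℝ))..(3*(2/3:ℝ)), ⟪b (z + (x - 1) • h), h⟫_ℝ :=
      intervalIntegral.smul_integral_comp_mul_left (fun v => ⟪b (z + (v - 1) • h), h⟫_ℝ) 3
    have e3 : (∫ x in (1:ℝ)..2, ⟪b (z + (x - 1) • h), h⟫_ℝ)
        = ∫ x in ((1:ℝ)-1)..((2:ℝ)-1), ⟪b (z + x • h), h⟫_ℝ :=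
      intervalIntegral.integral_comp_sub_right (fun t => ⟪b (z + t • h), h⟫_ℝ) 1
    rw [e1, intervalIntegral.integral_const_mul, ← smul_eq_mul, e2,
      show (3*(1/3:ℝ)) = 1 by norm_num, show (3*(2/3:ℝ)) = 2 by norm_num, e3,
      show ((1:ℝ)-1) = 0 by norm_num, show ((2:ℝ)-1) = 1 by norm_num]
    rfl
  have p3 : (∫ u in (2/3:ℝ)..1, rho b z h u) = -segWork b 0 (z+h) := by
    have e1 : (∫ u in (2/3:ℝ)..1, rho b z h u)
        = ∫ u in (2/3:ℝ)..1, 3 * (-(⟪b ((3 - 3*u) • (z+h)), z+h⟫_ℝ)) := by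
      apply integral_congr_Ioo (by norm_num)
      intro s hs
      unfold rho tri
      rw [GamC z h s ⟨hs.1.le, hs.2.le⟩,
        Int.fract_eq_self.mpr ⟨by linarith [hs.1], hs.2⟩,
        if_neg (by push_neg; linarith [hs.1]), if_neg (by push_neg; linarith [hs.1]),
        inner_neg_right, real_inner_smul_right]
      ring
    have e2 : (3:ℝ) • (∫ x in (2/3:ℝ)..1, -(⟪b ((3 - 3*x) • (z+h)), z+h⟫_ℝ))
        = ∫ x in (3*(2/3:ℝ))..(3*(1:ℝ)), -(⟪b ((3 - x) • (z+h)), z+h⟫_ℝ) :=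
      intervalIntegral.smul_integral_comp_mul_left (fun v => -(⟪b ((3 - v) • (z+h)), z+h⟫_ℝ)) 3
    have e3 : (∫ x in (2:ℝ)..3, ⟪b ((3 - x) • (z+h)), z+h⟫_ℝ)
        = ∫ x in ((3:ℝ)-3)..((3:ℝ)-2), ⟪b (x • (z+h)), z+h⟫_ℝ :=
      intervalIntegral.integral_comp_sub_left (fun t => ⟪b (t • (z+h)), z+h⟫_ℝ) 3
    rw [e1, intervalIntegral.integral_const_mul, ← smul_eq_mul, e2,
      show (3*(2/3:ℝ)) = 2 by norm_num, show (3*(1:ℝ)) = 3 by norm_num,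
      intervalIntegral.integral_neg, e3,
      show ((3:ℝ)-3) = 0 by norm_num, show ((3:ℝ)-2) = 1 by norm_num]
    unfold segWork
    simp only [zero_add]
  have ha := intervalIntegral.integral_add_adjacent_intervals
    (rii 0 (1/3)) (rii (1/3) (2/3))
  have hb2 := intervalIntegral.integral_add_adjacent_intervals
    ((rii 0 (1/3)).trans (rii (1/3) (2/3))) (rii (2/3) 1)
  rw [← hb2, ← ha, p1, p2, p3]
  unfold Kc
  ring



/-- the winding dissipation -/
def Wf : ℝ → ℝ := fun l => ∫ u in (0:ℝ)..l, rho b z h u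

lemma Wf_add_int (hb : Continuous b) (Mb : ℝ) (hMb : ∀ x, ‖b x‖ ≤ Mb) (l : ℝ) (m : ℤ) :
    Wf b z h (l + m) = Wf b z h l + m * Kc b z h := by
  have rii := rho_ii b z h hb Mb hMb
  have hadd := intervalIntegral.integral_add_adjacent_intervals (rii 0 l) (rii l (l + m))
  have hz := (rho_per b z h).intervalIntegral_add_zsmul_eq m l rii
  have h1 : (∫ u in l..(l+1), rho b z h u) = ∫ u in (0:ℝ)..(0+1), rho b z h u :=
    (rho_per b z h).intervalIntegral_add_eq l 0
  have hm : l + (m:ℝ) = l + m • (1:ℝ) := by rw [zsmul_eq_mul, mul_one]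
  unfold Wf
  rw [← hadd, hm, hz, h1, zero_add, rho_int_one b z h hb Mb hMb, zsmul_eq_mul]

lemma segWork_diff (hb : ContDiff ℝ 1 b) (M Mb : ℝ) (hM0 : 0 ≤ M) (hMb0 : 0 ≤ Mb)
    (hM : ∀ x, ‖fderiv ℝ b x‖ ≤ M) (hMb : ∀ x, ‖b x‖ ≤ Mb) (C : ℝ)
    (w w' : Euc n) (hw : ‖w‖ ≤ C) :
    |segWork b 0 w - segWork b 0 w'| ≤ (M * C + Mb) * ‖w - w'‖ := by
  have hf : Continuous fun t : ℝ => ⟪b (0 + t • w), w⟫_ℝ :=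
    ((hb.continuous.comp (continuous_const.add (continuous_id.smul continuous_const))).inner
      continuous_const)
  have hg : Continuous fun t : ℝ => ⟪b (0 + t • w'), w'⟫_ℝ :=
    ((hb.continuous.comp (continuous_const.add (continuous_id.smul continuous_const))).inner
      continuous_const)
  have hsub : segWork b 0 w - segWork b 0 w'
      = ∫ t in (0:ℝ)..1, (⟪b (0 + t • w), w⟫_ℝ - ⟪b (0 + t • w'), w'⟫_ℝ) := by
    unfold segWork
    rw [intervalIntegral.integral_sub (hf.intervalIntegrable 0 1) (hg.intervalIntegrable 0 1)]
  rw [hsub]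
  have hb1 : ∀ t ∈ Set.uIoc (0:ℝ) 1,
      ‖⟪b (0 + t • w), w⟫_ℝ - ⟪b (0 + t • w'), w'⟫_ℝ‖ ≤ (M * C + Mb) * ‖w - w'‖ := by
    intro t ht
    rw [Set.uIoc_of_le (by norm_num : (0:ℝ) ≤ 1)] at ht
    have hsplit : ⟪b (0 + t • w), w⟫_ℝ - ⟪b (0 + t • w'), w'⟫_ℝ
        = ⟪b (0 + t • w) - b (0 + t • w'), w⟫_ℝ + ⟪b (0 + t • w'), w - w'⟫_ℝ := by
      rw [inner_sub_left, inner_sub_right]; ring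
    rw [hsplit]
    refine (norm_add_le _ _).trans ?_
    have e1 : ‖⟪b (0 + t • w) - b (0 + t • w'), w⟫_ℝ‖ ≤ (M * ‖w - w'‖) * C := by
      refine (norm_inner_le_norm _ _).trans ?_
      have l1 := bLip hb hM (0 + t • w) (0 + t • w')
      have : (0 + t • w) - (0 + t • w') = t • (w - w') := by
        rw [smul_sub]; abel
      rw [this, norm_smul, Real.norm_eq_abs, abs_of_pos ht.1] at l1
      have l2 : M * (t * ‖w - w'‖) ≤ M * ‖w - w'‖ := by
        apply mul_le_mul_of_nonneg_left _ hM0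
        nlinarith [norm_nonneg (w - w'), ht.2, ht.1]
      have hn := norm_nonneg (b (0 + t • w) - b (0 + t • w'))
      nlinarith [norm_nonneg w, norm_nonneg (w - w')]
    have e2 : ‖⟪b (0 + t • w'), w - w'⟫_ℝ‖ ≤ Mb * ‖w - w'‖ := by
      refine (norm_inner_le_norm _ _).trans ?_
      have := hMb (0 + t • w')
      nlinarith [norm_nonneg (w - w'), norm_nonneg (b (0 + t • w'))]
    nlinarith [norm_nonneg (w - w')]
  have := intervalIntegral.norm_integral_le_of_norm_le_const hb1
  rw [Real.norm_eq_abs] at this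
  simpa using this

/-- the knob function: dissipation of winding `l` around the loop then returning to `0`. -/
def Df : ℝ → ℝ := fun l => Wf b z h l - segWork b 0 (Gam z h l)

lemma Df_cont (hb : ContDiff ℝ 1 b) (M Mb : ℝ) (hM0 : 0 ≤ M) (hMb0 : 0 ≤ Mb)
    (hM : ∀ x, ‖fderiv ℝ b x‖ ≤ M) (hMb : ∀ x, ‖b x‖ ≤ Mb) :
    Continuous (Df b z h) := by
  have h1 : Continuous (Wf b z h) :=
    intervalIntegral.continuous_primitive (rho_ii b z h hb.continuous Mb hMb) 0
  have h2 : Continuous fun l => segWork b 0 (Gam z h l) := by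
    have hL : 0 ≤ (M * Gbd z h + Mb) * Gbd z h := by
      have := Gbd_nonneg z h; positivity
    apply LipschitzWith.continuous (K := Real.toNNReal ((M * Gbd z h + Mb) * Gbd z h))
    apply LipschitzWith.of_dist_le_mul
    intro l l'
    rw [Real.coe_toNNReal _ hL, Real.dist_eq, Real.dist_eq]
    calc |segWork b 0 (Gam z h l) - segWork b 0 (Gam z h l')|
        ≤ (M * Gbd z h + Mb) * ‖Gam z h l - Gam z h l'‖ :=
          segWork_diff b hb M Mb hM0 hMb0 hM hMb (Gbd z h) _ _ (Gam_bound z h l)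
      _ ≤ (M * Gbd z h + Mb) * (Gbd z h * |l - l'|) := by
          apply mul_le_mul_of_nonneg_left (Gam_sub z h l l')
          have := Gbd_nonneg z h; positivity
      _ = (M * Gbd z h + Mb) * Gbd z h * |l - l'| := by ring
  exact h1.sub h2

lemma Df_shift (hb : Continuous b) (Mb : ℝ) (hMb : ∀ x, ‖b x‖ ≤ Mb) (l : ℝ) (m : ℤ) :
    Df b z h (l + m) = Df b z h l + m * Kc b z h := by
  unfold Df
  rw [Wf_add_int b z h hb Mb hMb l m]
  have hG : Gam z h (l + m) = Gam z h l := by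
    have := (Gam_per z h).sub_int_mul_eq (x := l + m) (n := m)
    rw [mul_one, add_sub_cancel_right] at this
    exact this.symm
  rw [hG]; ring

lemma Df_surj (hb : ContDiff ℝ 1 b) (M Mb : ℝ) (hM0 : 0 ≤ M) (hMb0 : 0 ≤ Mb)
    (hM : ∀ x, ‖fderiv ℝ b x‖ ≤ M) (hMb : ∀ x, ‖b x‖ ≤ Mb)
    (hK : Kc b z h ≠ 0) (τ : ℝ) :
    ∃ l : ℝ, Df b z h l = τ ∧ |l| ≤ (|τ| + |Df b z h 0|) / |Kc b z h| + 1 := by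
  have hKpos : 0 < |Kc b z h| := abs_pos.mpr hK
  set N : ℕ := ⌈(|τ| + |Df b z h 0|) / |Kc b z h|⌉₊ with hN
  have hNceil : (|τ| + |Df b z h 0|) / |Kc b z h| ≤ N := Nat.le_ceil _
  have hNb : |τ - Df b z h 0| ≤ N * |Kc b z h| := by
    have h1 : |τ - Df b z h 0| ≤ |τ| + |Df b z h 0| := by
      rw [sub_eq_add_neg]
      exact (abs_add_le _ _).trans (by rw [abs_neg])
    refine h1.trans ?_
    rw [div_le_iff₀ hKpos] at hNceil
    exact hNceil
  have hDN := Df_shift b z h hb.continuous Mb hMb 0 (N:ℤ)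
  have hDNn := Df_shift b z h hb.continuous Mb hMb 0 (-(N:ℤ))
  push_cast at hDN hDNn
  rw [zero_add] at hDN hDNn
  have hcont := (Df_cont b z h hb M Mb hM0 hMb0 hM hMb).continuousOn
    (s := Set.Icc (-(N:ℝ)) N)
  have hNN : (-(N:ℝ)) ≤ N := by
    have : (0:ℝ) ≤ N := Nat.cast_nonneg N
    linarith
  have habs := abs_le.mp hNb
  have hfinal : ∃ l ∈ Set.Icc (-(N:ℝ)) N, Df b z h l = τ := by
    rcases lt_or_gt_of_ne hK with hneg | hpos
    · -- K < 0
      have hKabs : |Kc b z h| = -Kc b z h := abs_of_neg hneg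
      have hub : Df b z h ((N:ℝ)) ≤ τ := by rw [hDN]; nlinarith [habs.1]
      have hlb : τ ≤ Df b z h (-(N:ℝ)) := by rw [hDNn]; nlinarith [habs.2]
      have := intermediate_value_Icc' hNN hcont (Set.mem_Icc.mpr ⟨hub, hlb⟩)
      obtain ⟨l, hl, hlD⟩ := this
      exact ⟨l, hl, hlD⟩
    · -- K > 0
      have hKabs : |Kc b z h| = Kc b z h := abs_of_pos hpos
      have hlb : Df b z h (-(N:ℝ)) ≤ τ := by rw [hDNn]; nlinarith [habs.1]
      have hub : τ ≤ Df b z h ((N:ℝ)) := by rw [hDN]; nlinarith [habs.2]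
      have := intermediate_value_Icc hNN hcont (Set.mem_Icc.mpr ⟨hlb, hub⟩)
      obtain ⟨l, hl, hlD⟩ := this
      exact ⟨l, hl, hlD⟩
  obtain ⟨l, hl, hlD⟩ := hfinal
  refine ⟨l, hlD, ?_⟩
  have h1 : |l| ≤ N := abs_le.mpr ⟨hl.1, hl.2⟩
  refine h1.trans ?_
  have := Nat.ceil_lt_add_one (by positivity : (0:ℝ) ≤ (|τ| + |Df b z h 0|) / |Kc b z h|)
  rw [← hN] at this
  exact this.le

end Loop

section Path
variable (b : Euc n → Euc n) (x y z h : Euc n) (T l : ℝ)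

/-- velocity of the tuned path -/
def vel : ℝ → Euc n := fun t =>
  if t < 1 then -x
  else if t < T - 2 then (l/(T-3)) • tri z h ((l/(T-3)) * (t - 1))
  else if t < T - 1 then -(Gam z h l)
  else y

/-- the tuned path -/
def pth : ℝ → Euc n := fun t => x + ∫ s in (0:ℝ)..t, vel x y z h T l s

/-- bound for the velocity -/
def Vb : ℝ := ‖x‖ + ‖y‖ + Gbd z h + (|l|/(T-3)) * Gbd z h

lemma vel_meas : Measurable (vel x y z h T l) := by
  unfold vel
  refine Measurable.ite (measurableSet_Iio (a := (1:ℝ))) measurable_const ?_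
  refine Measurable.ite (measurableSet_Iio (a := T - 2)) ?_ ?_
  · exact (((tri_meas z h).comp ((measurable_id.sub measurable_const).const_mul
      (l/(T-3)))).const_smul (l/(T-3)))
  · exact Measurable.ite (measurableSet_Iio (a := T - 1)) measurable_const measurable_const

lemma vel_bound (hT : 10 ≤ T) : ∀ t, ‖vel x y z h T l t‖ ≤ Vb x y z h T l := by
  intro t
  have hx := norm_nonneg x; have hy := norm_nonneg y
  have hG := Gbd_nonneg z h
  have hT3 : (0:ℝ) < T - 3 := by linarith
  have haG : 0 ≤ (|l|/(T-3)) * Gbd z h := by positivity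
  unfold vel Vb
  split_ifs
  · rw [norm_neg]; linarith
  · rw [norm_smul, Real.norm_eq_abs, abs_div, abs_of_pos hT3]
    have := tri_norm z h ((l/(T-3)) * (t - 1))
    have h2 : |l| / (T-3) * ‖tri z h ((l/(T-3)) * (t - 1))‖ ≤ |l|/(T-3) * Gbd z h := by
      apply mul_le_mul_of_nonneg_left this (by positivity)
    linarith
  · rw [norm_neg]; have := Gam_bound z h l; linarith
  · linarith

lemma vel_ii (hT : 10 ≤ T) : ∀ a c : ℝ, IntervalIntegrable (vel x y z h T l) volume a c :=
  ii_of_bdd (vel_meas x y z h T l) _ (vel_bound x y z h T l hT)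

lemma I1 (hT : 10 ≤ T) : ∀ t ∈ Set.Icc (0:ℝ) 1,
    (∫ s in (0:ℝ)..t, vel x y z h T l s) = t • (-x) := by
  intro t ht
  rw [integral_congr_Ioo ht.1 (g := fun _ => -x) ?_]
  · rw [intervalIntegral.integral_const, sub_zero]
  · intro s hs
    unfold vel
    rw [if_pos (by linarith [hs.2, ht.2])]

lemma I2 (hT : 10 ≤ T) : ∀ t ∈ Set.Icc (1:ℝ) (T-2),
    (∫ s in (1:ℝ)..t, vel x y z h T l s) = Gam z h ((l/(T-3)) * (t - 1)) := by
  intro t ht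
  rw [integral_congr_Ioo ht.1
    (g := fun s => (l/(T-3)) • tri z h ((l/(T-3)) * (s - 1))) ?_]
  · have e3 : (∫ s in (1:ℝ)..t, (l/(T-3)) • tri z h ((l/(T-3)) * (s - 1)))
        = ∫ u in ((1:ℝ)-1)..(t-1), (l/(T-3)) • tri z h ((l/(T-3)) * u) :=
      intervalIntegral.integral_comp_sub_right (fun u => (l/(T-3)) • tri z h ((l/(T-3)) * u)) 1
    rw [e3, show ((1:ℝ)-1) = 0 by norm_num, intervalIntegral.integral_smul]
    have e4 : (l/(T-3)) • (∫ u in (0:ℝ)..(t-1), tri z h ((l/(T-3)) * u))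
        = ∫ u in ((l/(T-3)) * 0)..((l/(T-3)) * (t-1)), tri z h u :=
      intervalIntegral.smul_integral_comp_mul_left (tri z h) (l/(T-3))
    rw [e4, mul_zero]
    rfl
  · intro s hs
    unfold vel
    rw [if_neg (by push_neg; linarith [hs.1]), if_pos (by linarith [hs.2, ht.2])]

lemma I3 (hT : 10 ≤ T) : ∀ t ∈ Set.Icc (T-2) (T-1),
    (∫ s in (T-2)..t, vel x y z h T l s) = (t - (T-2)) • (-(Gam z h l)) := by
  intro t ht
  rw [integral_congr_Ioo ht.1 (g := fun _ => -(Gam z h l)) ?_]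
  · rw [intervalIntegral.integral_const]
  · intro s hs
    unfold vel
    rw [if_neg (by push_neg; linarith [hs.1]), if_neg (by push_neg; linarith [hs.1]),
      if_pos (by linarith [hs.2, ht.2])]

lemma I4 (hT : 10 ≤ T) : ∀ t, T - 1 ≤ t →
    (∫ s in (T-1)..t, vel x y z h T l s) = (t - (T-1)) • y := by
  intro t ht
  rw [integral_congr_Ioo ht (g := fun _ => y) ?_]
  · rw [intervalIntegral.integral_const]
  · intro s hs
    unfold vel
    rw [if_neg (by push_neg; linarith [hs.1]), if_neg (by push_neg; linarith [hs.1]),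
      if_neg (by push_neg; linarith [hs.1])]

lemma pth1 (hT : 10 ≤ T) : ∀ t ∈ Set.Icc (0:ℝ) 1, pth x y z h T l t = (1 - t) • x := by
  intro t ht
  unfold pth
  rw [I1 x y z h T l hT t ht]
  module

lemma pth2 (hT : 10 ≤ T) : ∀ t ∈ Set.Icc (1:ℝ) (T-2),
    pth x y z h T l t = Gam z h ((l/(T-3)) * (t - 1)) := by
  intro t ht
  unfold pth
  rw [← intervalIntegral.integral_add_adjacent_intervals
    (vel_ii x y z h T l hT 0 1) (vel_ii x y z h T l hT 1 t),
    I1 x y z h T l hT 1 (by norm_num), I2 x y z h T l hT t ht, one_smul]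
  abel

lemma pth3 (hT : 10 ≤ T) : ∀ t ∈ Set.Icc (T-2) (T-1),
    pth x y z h T l t = (T - 1 - t) • Gam z h l := by
  intro t ht
  have h2 := pth2 x y z h T l hT (T-2) ⟨by linarith, by linarith⟩
  have hl : (l/(T-3)) * ((T-2) - 1) = l := by
    have hT3 : T - 3 ≠ 0 := by intro hcon; linarith [hT]
    have he : (T-2) - 1 = T - 3 := by ring
    rw [he, div_mul_cancel₀ _ hT3]
  rw [hl] at h2
  have hsplit : pth x y z h T l t = pth x y z h T l (T-2)
      + ∫ s in (T-2)..t, vel x y z h T l s := by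
    unfold pth
    rw [← intervalIntegral.integral_add_adjacent_intervals
      (vel_ii x y z h T l hT 0 (T-2)) (vel_ii x y z h T l hT (T-2) t)]
    abel
  rw [hsplit, h2, I3 x y z h T l hT t ht]
  module

lemma pth4 (hT : 10 ≤ T) : ∀ t, T - 1 ≤ t →
    pth x y z h T l t = (t - (T-1)) • y := by
  intro t ht
  have h3 := pth3 x y z h T l hT (T-1) ⟨by linarith, le_refl _⟩
  have hsplit : pth x y z h T l t = pth x y z h T l (T-1)
      + ∫ s in (T-1)..t, vel x y z h T l s := by
    unfold pth
    rw [← intervalIntegral.integral_add_adjacent_intervals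
      (vel_ii x y z h T l hT 0 (T-1)) (vel_ii x y z h T l hT (T-1) t)]
    abel
  rw [hsplit, h3, I4 x y z h T l hT t ht]
  module

lemma pth_endpoint (hT : 10 ≤ T) : pth x y z h T l T = y := by
  rw [pth4 x y z h T l hT T (by linarith)]
  have : T - (T-1) = 1 := by ring
  rw [this, one_smul]

lemma pth_cont (hT : 10 ≤ T) : Continuous (pth x y z h T l) :=
  continuous_const.add (intervalIntegral.continuous_primitive (vel_ii x y z h T l hT) 0)

lemma pth_bound (hT : 10 ≤ T) : ∀ t ∈ Set.Icc (0:ℝ) T,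
    ‖pth x y z h T l t‖ ≤ ‖x‖ + ‖y‖ + Gbd z h := by
  intro t ht
  have hx := norm_nonneg x; have hy := norm_nonneg y; have hG := Gbd_nonneg z h
  rcases le_or_gt t 1 with h1 | h1
  · rw [pth1 x y z h T l hT t ⟨ht.1, h1⟩, norm_smul, Real.norm_eq_abs,
      abs_of_nonneg (by linarith [ht.1] : (0:ℝ) ≤ 1 - t)]
    nlinarith [ht.1]
  rcases le_or_gt t (T-2) with h2 | h2
  · rw [pth2 x y z h T l hT t ⟨h1.le, h2⟩]
    have := Gam_bound z h ((l/(T-3)) * (t-1))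
    linarith
  rcases le_or_gt t (T-1) with h3 | h3
  · rw [pth3 x y z h T l hT t ⟨h2.le, h3⟩, norm_smul, Real.norm_eq_abs]
    have hab : |T - 1 - t| ≤ 1 := by rw [abs_le]; constructor <;> linarith
    have hgb := Gam_bound z h l
    have hnn := norm_nonneg (Gam z h l)
    have habnn := abs_nonneg (T - 1 - t)
    nlinarith
  · rw [pth4 x y z h T l hT t h3.le, norm_smul, Real.norm_eq_abs]
    have hab : |t - (T-1)| ≤ 1 := by rw [abs_le]; constructor <;> linarith [ht.2]
    nlinarith


/-- work along the initial segment -/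
def DA (b : Euc n → Euc n) (x : Euc n) : ℝ := ∫ t in (0:ℝ)..1, ⟪b ((1-t) • x), -x⟫_ℝ
/-- work along the final segment -/
def DB (b : Euc n → Euc n) (y : Euc n) : ℝ := ∫ t in (0:ℝ)..1, ⟪b (t • y), y⟫_ℝ

lemma ii_of_bdd_on {E : Type*} [NormedAddCommGroup E] [MeasurableSpace E] [BorelSpace E]
    [SecondCountableTopology E] {f : ℝ → E} (hf : Measurable f) {a b : ℝ} (hab : a ≤ b)
    (C : ℝ) (hC : ∀ s ∈ Set.Ioc a b, ‖f s‖ ≤ C) : IntervalIntegrable f volume a b := by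
  apply IntervalIntegrable.mono_fun' (g := fun _ => C) intervalIntegrable_const
    hf.aestronglyMeasurable.restrict
  filter_upwards [ae_restrict_mem (measurableSet_uIoc : MeasurableSet (Set.uIoc a b))] with s hs
  apply hC
  rwa [Set.uIoc_of_le hab] at hs

lemma diss_eval (hb : Continuous b) (Mb : ℝ) (hMb : ∀ w, ‖b w‖ ≤ Mb) (hT : 10 ≤ T) :
    (∫ t in (0:ℝ)..T, ⟪b (pth x y z h T l t), vel x y z h T l t⟫_ℝ)
      = DA b x + Wf b z h l - segWork b 0 (Gam z h l) + DB b y := by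
  have hMb0 : 0 ≤ Mb := (norm_nonneg (b 0)).trans (hMb 0)
  have hVb0 : 0 ≤ Vb x y z h T l := (norm_nonneg _).trans (vel_bound x y z h T l hT 0)
  have F_ii : ∀ a c : ℝ, IntervalIntegrable
      (fun t => ⟪b (pth x y z h T l t), vel x y z h T l t⟫_ℝ) volume a c := by
    refine ii_of_bdd (Measurable.inner (hb.comp (pth_cont x y z h T l hT)).measurable
      (vel_meas x y z h T l)) (Mb * Vb x y z h T l) (fun s => ?_)
    refine (norm_inner_le_norm _ _).trans ?_
    exact mul_le_mul (hMb _) (vel_bound x y z h T l hT s) (norm_nonneg _) hMb0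
  set a' := l/(T-3) with ha'
  have hl : a' * (T - 3) = l := by
    have hT3 : T - 3 ≠ 0 := by intro hcon; linarith [hT]
    rw [ha', div_mul_cancel₀ _ hT3]
  have hsplit : (∫ t in (0:ℝ)..T, ⟪b (pth x y z h T l t), vel x y z h T l t⟫_ℝ)
      = (∫ t in (0:ℝ)..1, ⟪b (pth x y z h T l t), vel x y z h T l t⟫_ℝ)
      + (∫ t in (1:ℝ)..(T-2), ⟪b (pth x y z h T l t), vel x y z h T l t⟫_ℝ)
      + (∫ t in (T-2)..(T-1), ⟪b (pth x y z h T l t), vel x y z h T l t⟫_ℝ)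
      + (∫ t in (T-1)..T, ⟪b (pth x y z h T l t), vel x y z h T l t⟫_ℝ) := by
    rw [intervalIntegral.integral_add_adjacent_intervals (F_ii 0 1) (F_ii 1 (T-2)),
      intervalIntegral.integral_add_adjacent_intervals ((F_ii 0 1).trans (F_ii 1 (T-2)))
        (F_ii (T-2) (T-1)),
      intervalIntegral.integral_add_adjacent_intervals
        (((F_ii 0 1).trans (F_ii 1 (T-2))).trans (F_ii (T-2) (T-1))) (F_ii (T-1) T)]
  rw [hsplit]
  have S1 : (∫ t in (0:ℝ)..1, ⟪b (pth x y z h T l t), vel x y z h T l t⟫_ℝ) = DA b x := by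
    rw [integral_congr_Ioo (by norm_num) (g := fun t => ⟪b ((1-t) • x), -x⟫_ℝ) ?_]
    · rfl
    · intro s hs
      rw [pth1 x y z h T l hT s ⟨hs.1.le, hs.2.le⟩]
      unfold vel
      rw [if_pos hs.2]
  have S2 : (∫ t in (1:ℝ)..(T-2), ⟪b (pth x y z h T l t), vel x y z h T l t⟫_ℝ)
      = Wf b z h l := by
    rw [integral_congr_Ioo (by linarith)
      (g := fun t => a' * rho b z h (a' * (t - 1))) ?_]
    · rw [intervalIntegral.integral_const_mul]
      have e2 : (∫ t in (1:ℝ)..(T-2), rho b z h (a' * (t - 1)))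
          = ∫ u in ((1:ℝ)-1)..((T-2)-1), rho b z h (a' * u) :=
        intervalIntegral.integral_comp_sub_right (fun u => rho b z h (a' * u)) 1
      have e3 : a' • (∫ u in (0:ℝ)..(T-3), rho b z h (a' * u))
          = ∫ u in (a' * 0)..(a' * (T-3)), rho b z h u :=
        intervalIntegral.smul_integral_comp_mul_left (rho b z h) a'
      rw [e2, show ((1:ℝ)-1) = 0 by norm_num, show ((T-2)-1) = T - 3 by ring,
        ← smul_eq_mul, e3, mul_zero, hl]
      rfl
    · intro s hs
      rw [pth2 x y z h T l hT s ⟨hs.1.le, hs.2.le⟩]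
      unfold vel
      rw [if_neg (by push_neg; linarith [hs.1]), if_pos hs.2, real_inner_smul_right]
      rfl
  have S3 : (∫ t in (T-2:ℝ)..(T-1), ⟪b (pth x y z h T l t), vel x y z h T l t⟫_ℝ)
      = -segWork b 0 (Gam z h l) := by
    rw [integral_congr_Ioo (by linarith)
      (g := fun t => ⟪b ((T - 1 - t) • Gam z h l), -(Gam z h l)⟫_ℝ) ?_]
    · have e2 : (∫ t in (T-2:ℝ)..(T-1), ⟪b ((T - 1 - t) • Gam z h l), -(Gam z h l)⟫_ℝ)
          = ∫ v in ((T-1)-(T-1))..((T-1)-(T-2)), ⟪b (v • Gam z h l), -(Gam z h l)⟫_ℝ :=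
        intervalIntegral.integral_comp_sub_left
          (fun v => ⟪b (v • Gam z h l), -(Gam z h l)⟫_ℝ) (T-1)
      rw [e2, show ((T-1:ℝ)-(T-1)) = 0 by ring, show ((T-1:ℝ)-(T-2)) = 1 by ring]
      simp_rw [inner_neg_right]
      rw [intervalIntegral.integral_neg]
      unfold segWork
      simp only [zero_add]
    · intro s hs
      rw [pth3 x y z h T l hT s ⟨hs.1.le, hs.2.le⟩]
      unfold vel
      rw [if_neg (by push_neg; linarith [hs.1]), if_neg (by push_neg; linarith [hs.1]),
        if_pos hs.2]
  have S4 : (∫ t in (T-1:ℝ)..T, ⟪b (pth x y z h T l t), vel x y z h T l t⟫_ℝ)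
      = DB b y := by
    rw [integral_congr_Ioo (by linarith)
      (g := fun t => ⟪b ((t - (T-1)) • y), y⟫_ℝ) ?_]
    · have e2 : (∫ t in (T-1:ℝ)..T, ⟪b ((t - (T-1)) • y), y⟫_ℝ)
          = ∫ v in ((T-1)-(T-1))..(T-(T-1)), ⟪b (v • y), y⟫_ℝ :=
        intervalIntegral.integral_comp_sub_right (fun v => ⟪b (v • y), y⟫_ℝ) (T-1)
      rw [e2, show ((T-1:ℝ)-(T-1)) = 0 by ring, show (T-(T-1:ℝ)) = 1 by ring]
      rfl
    · intro s hs
      rw [pth4 x y z h T l hT s hs.1.le]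
      unfold vel
      rw [if_neg (by push_neg; linarith [hs.1]), if_neg (by push_neg; linarith [hs.1]),
        if_neg (by push_neg; linarith [hs.1])]
  rw [S1, S2, S3, S4]
  ring

lemma vel_sq_ii (hT : 10 ≤ T) :
    IntervalIntegrable (fun t => ‖vel x y z h T l t‖ ^ 2) volume 0 T := by
  apply ii_of_bdd ((vel_meas x y z h T l).norm.pow_const 2) ((Vb x y z h T l)^2)
  intro s
  rw [Real.norm_eq_abs, abs_of_nonneg (by positivity)]
  exact pow_le_pow_left₀ (norm_nonneg _) (vel_bound x y z h T l hT s) 2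

lemma fw_bound (c : Euc n → Euc n) (hcc : Continuous c) (hT : 10 ≤ T) (Mc S : ℝ)
    (hMc : ∀ w : Euc n, ‖w‖ ≤ ‖x‖ + ‖y‖ + Gbd z h → ‖c w‖ ≤ Mc)
    (hS : Vb x y z h T l ≤ S) :
    (∫ t in (0:ℝ)..T, ‖vel x y z h T l t - c (pth x y z h T l t)‖ ^ 2)
      ≤ (S + Mc)^2 * T := by
  have hT0 : (0:ℝ) ≤ T := by linarith
  have hptwise : ∀ t ∈ Set.Icc (0:ℝ) T,
      ‖vel x y z h T l t - c (pth x y z h T l t)‖ ^ 2 ≤ (S + Mc)^2 := by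
    intro t ht
    have h1 : ‖vel x y z h T l t - c (pth x y z h T l t)‖ ≤ S + Mc := by
      refine (norm_sub_le _ _).trans ?_
      have h2 := (vel_bound x y z h T l hT t).trans hS
      have h3 := hMc _ (pth_bound x y z h T l hT t ht)
      linarith
    exact pow_le_pow_left₀ (norm_nonneg _) h1 2
  have hint : IntervalIntegrable
      (fun t => ‖vel x y z h T l t - c (pth x y z h T l t)‖ ^ 2) volume 0 T := by
    refine ii_of_bdd_on (((vel_meas x y z h T l).sub
      (hcc.comp (pth_cont x y z h T l hT)).measurable).norm.pow_const 2) hT0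
      ((S + Mc)^2) (fun s hs => ?_)
    rw [Real.norm_eq_abs, abs_of_nonneg (by positivity)]
    exact hptwise s ⟨hs.1.le, hs.2⟩
  calc (∫ t in (0:ℝ)..T, ‖vel x y z h T l t - c (pth x y z h T l t)‖ ^ 2)
      ≤ ∫ _ in (0:ℝ)..T, (S + Mc)^2 :=
        intervalIntegral.integral_mono_on hT0 hint intervalIntegrable_const hptwise
    _ = (S + Mc)^2 * T := by rw [intervalIntegral.integral_const, smul_eq_mul]; ring

end Path

end S4

set_option maxHeartbeats 1000000 in
/-- there are `T₀, C ∈ (0,∞)` (depending on `q, x, y`) with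
`S^{xy}_T(q) ≤ C·T` for all `T ≥ T₀`. -/
theorem statement4 (n : ℕ) (V : Euc n → ℝ) (b c : Euc n → Euc n)
    (hA : AssumptionA n V) (hB : AssumptionB n b)
    (hc : ∀ z, c z = -(1/2 : ℝ) • gradient V z + b z)
    (q : ℝ) (x y : Euc n) :
    ∃ T₀ C : ℝ, 0 < T₀ ∧ 0 < C ∧ ∀ T, T₀ ≤ T → Sxy n b c T x y q ≤ C * T := by
  classical
  obtain ⟨hb1, ⟨Mb0, hMb0⟩, ⟨M0, hM0⟩, hnc⟩ := hB
  have hMb : ∀ w, ‖b w‖ ≤ max Mb0 0 := fun w => (hMb0 w).trans (le_max_left _ _)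
  have hMbnn : (0:ℝ) ≤ max Mb0 0 := le_max_right _ _
  have hM : ∀ w, ‖fderiv ℝ b w‖ ≤ max M0 0 := fun w => (hM0 w).trans (le_max_left _ _)
  have hMnn : (0:ℝ) ≤ max M0 0 := le_max_right _ _
  set Mb := max Mb0 0
  set M := max M0 0
  have hbc : Continuous b := hb1.continuous
  obtain ⟨z, h, hzh⟩ := S4.exists_bad ⟨hb1, ⟨Mb0, hMb0⟩, ⟨M0, hM0⟩, hnc⟩
  have hK : S4.Kc b z h ≠ 0 := by
    unfold S4.Kc
    intro hcon
    apply hzh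
    linarith [hcon]
  have hKpos : 0 < |S4.Kc b z h| := abs_pos.mpr hK
  -- continuity of the drift c
  have hgrad : Continuous (gradient V) := by
    have h1 : Continuous (fderiv ℝ V) := hA.1.continuous_fderiv (by norm_num)
    have h2 : gradient V = fun w => (InnerProductSpace.toDual ℝ (Euc n)).symm (fderiv ℝ V w) :=
      rfl
    rw [h2]
    exact (InnerProductSpace.toDual ℝ (Euc n)).symm.continuous.comp h1
  have hcc : Continuous c := by
    have h2 : c = fun w => -(1/2:ℝ) • gradient V w + b w := funext hc
    rw [h2]
    exact (hgrad.const_smul (-(1/2:ℝ))).add hbc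
  -- constants
  have hGnn : 0 ≤ S4.Gbd z h := S4.Gbd_nonneg z h
  have hRnn : (0:ℝ) ≤ ‖x‖ + ‖y‖ + S4.Gbd z h := by positivity
  obtain ⟨Mc0, hMc0⟩ := (isCompact_closedBall (0 : Euc n)
    (‖x‖ + ‖y‖ + S4.Gbd z h)).exists_bound_of_continuousOn hcc.continuousOn
  have hMc : ∀ w : Euc n, ‖w‖ ≤ ‖x‖ + ‖y‖ + S4.Gbd z h → ‖c w‖ ≤ max Mc0 0 :=
    fun w hw => (hMc0 w (mem_closedBall_zero_iff.mpr hw)).trans (le_max_left _ _)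
  have hMcnn : (0:ℝ) ≤ max Mc0 0 := le_max_right _ _
  set Mc := max Mc0 0
  set KK := |S4.Kc b z h| with hKKdef
  set P := |q| / (2*KK) + (|S4.DA b x| + |S4.DB b y| + |S4.Df b z h 0|)/KK + 1 with hPdef
  have hPpos : 0 < P := by positivity
  set S := ‖x‖ + ‖y‖ + S4.Gbd z h + 2*P*S4.Gbd z h with hSdef
  have hSnn : 0 ≤ S := by positivity
  refine ⟨10, (1/2) * (S + Mc)^2 + 1, by norm_num, by positivity, ?_⟩
  intro T hT
  have hT0 : (0:ℝ) < T := by linarith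
  -- choose the winding parameter l
  obtain ⟨l, hlD, hlbd⟩ := S4.Df_surj b z h hb1 M Mb hMnn hMbnn hM hMb hK
    (q*T/2 - S4.DA b x - S4.DB b y)
  -- bound on |l|
  have hτbd : |q*T/2 - S4.DA b x - S4.DB b y| ≤ |q| * T / 2 + |S4.DA b x| + |S4.DB b y| := by
    have h1 : |q*T/2 - S4.DA b x - S4.DB b y| ≤ |q*T/2| + |S4.DA b x| + |S4.DB b y| := by
      calc |q*T/2 - S4.DA b x - S4.DB b y|
          ≤ |q*T/2 - S4.DA b x| + |S4.DB b y| := abs_sub _ _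
        _ ≤ |q*T/2| + |S4.DA b x| + |S4.DB b y| := by linarith [abs_sub (q*T/2) (S4.DA b x)]
    have h2 : |q*T/2| = |q| * T / 2 := by
      rw [abs_div, abs_mul, abs_of_pos hT0]
      norm_num
    linarith
  have hlP : |l| ≤ P * T := by
    refine hlbd.trans ?_
    have e1 : (|q| / (2*KK)) * KK = |q|/2 := by field_simp
    have e2 : ((|S4.DA b x| + |S4.DB b y| + |S4.Df b z h 0|)/KK) * KK
        = |S4.DA b x| + |S4.DB b y| + |S4.Df b z h 0| :=
      div_mul_cancel₀ _ (ne_of_gt hKpos)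
    have h3 : (|q*T/2 - S4.DA b x - S4.DB b y| + |S4.Df b z h 0|) / KK
        ≤ (|q| / (2*KK)) * T + (|S4.DA b x| + |S4.DB b y| + |S4.Df b z h 0|)/KK := by
      rw [div_le_iff₀ hKpos, add_mul, mul_assoc, mul_comm T KK, ← mul_assoc, e1]
      have := mul_le_mul_of_nonneg_right
        (le_refl ((|S4.DA b x| + |S4.DB b y| + |S4.Df b z h 0|)/KK)) (le_of_lt hKpos)
      rw [e2]
      nlinarith [hτbd]
    have h4 : (|q| / (2*KK)) * T + (|S4.DA b x| + |S4.DB b y| + |S4.Df b z h 0|)/KK + 1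
        ≤ P * T := by
      rw [hPdef]
      have hc2 : 0 ≤ (|S4.DA b x| + |S4.DB b y| + |S4.Df b z h 0|)/KK := by positivity
      nlinarith [hc2, hT0]
    linarith
  have hVbS : S4.Vb x y z h T l ≤ S := by
    have hT3 : (0:ℝ) < T - 3 := by linarith
    have key : |l|/(T-3) ≤ 2*P := by
      rw [div_le_iff₀ hT3]
      nlinarith [hlP, hPpos.le]
    have h5 : (|l|/(T-3)) * S4.Gbd z h ≤ 2*P*S4.Gbd z h :=
      mul_le_mul_of_nonneg_right key hGnn
    unfold S4.Vb
    rw [hSdef]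
    linarith
  have hT10 : (10:ℝ) ≤ T := hT
  -- the candidate path
  have hInHT : InHT n T x (S4.pth x y z h T l) (S4.vel x y z h T l) := by
    refine ⟨?_, S4.vel_ii x y z h T l hT10 0 T, S4.vel_sq_ii x y z h T l hT10,
      fun t _ => rfl⟩
    unfold S4.pth
    simp
  have hend : S4.pth x y z h T l T = y := S4.pth_endpoint x y z h T l hT10
  have hdiss : Diss n b T (S4.pth x y z h T l) (S4.vel x y z h T l) = q := by
    unfold Diss
    rw [S4.diss_eval b x y z h T l hbc Mb hMb hT10]
    unfold S4.Df at hlD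
    rw [show S4.DA b x + S4.Wf b z h l - S4.segWork b 0 (S4.Gam z h l) + S4.DB b y
      = q * T / 2 by linarith [hlD]]
    field_simp
  have hFWle : FW n c T (S4.pth x y z h T l) (S4.vel x y z h T l)
      ≤ ((1/2) * (S + Mc)^2 + 1) * T := by
    unfold FW
    have hfw := S4.fw_bound x y z h T l c hcc hT10 Mc S hMc hVbS
    have h6 : (1/2 : ℝ) * (∫ t in (0:ℝ)..T, ‖S4.vel x y z h T l t
        - c (S4.pth x y z h T l t)‖ ^ 2) ≤ (1/2) * ((S + Mc)^2 * T) :=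
      mul_le_mul_of_nonneg_left hfw (by norm_num)
    refine h6.trans ?_
    nlinarith [hT0.le]
  -- conclude via the infimum
  unfold Sxy
  have hbdd : BddBelow { r : ℝ | ∃ φ φ' : ℝ → Euc n,
      InHT n T x φ φ' ∧ φ T = y ∧ Diss n b T φ φ' = q ∧ FW n c T φ φ' = r } := by
    refine ⟨0, fun r hr => ?_⟩
    obtain ⟨ψ, ψ', _, _, _, hFWr⟩ := hr
    rw [← hFWr]
    unfold FW
    apply mul_nonneg (by norm_num)
    apply intervalIntegral.integral_nonneg hT0.le
    intro u _
    positivity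
  have hmem : FW n c T (S4.pth x y z h T l) (S4.vel x y z h T l)
      ∈ { r : ℝ | ∃ φ φ' : ℝ → Euc n,
      InHT n T x φ φ' ∧ φ T = y ∧ Diss n b T φ φ' = q ∧ FW n c T φ φ' = r } :=
    ⟨S4.pth x y z h T l, S4.vel x y z h T l, hInHT, hend, hdiss, rfl⟩
  exact (csInf_le hbdd hmem).trans hFWle
end
end

section
/- For every x ∈ ℝⁿ, q ∈ ℝ and T₁, T₂ > 0 one has the subadditivity S^{xx}_{T₁+T₂}(q) ≤ S^{xx}_{T₁}(q) + S^{xx}_{T₂}(q). -/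
open MeasureTheory Filter Real Set
open scoped InnerProductSpace

set_option maxHeartbeats 1000000

noncomputable section

-- helpers

lemma II_congr {E : Type*} [NormedAddCommGroup E] {f g : ℝ → E} {a b : ℝ}
    (h : IntervalIntegrable f volume a b) (he : ∀ t ∈ Set.uIoc a b, f t = g t) :
    IntervalIntegrable g volume a b := by
  rw [intervalIntegrable_iff] at h ⊢
  exact h.congr_fun he measurableSet_uIoc

lemma int_congr {E : Type*} [NormedAddCommGroup E] [NormedSpace ℝ E] {f g : ℝ → E} {a b : ℝ}
    (he : ∀ t ∈ Set.uIoc a b, f t = g t) :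
    ∫ t in a..b, f t = ∫ t in a..b, g t :=
  intervalIntegral.integral_congr_ae (Filter.Eventually.of_forall he)

lemma fw_nonneg (n : ℕ) (c : Euc n → Euc n) {T : ℝ} (hT : 0 ≤ T) (φ φ' : ℝ → Euc n) :
    0 ≤ FW n c T φ φ' := by
  have : 0 ≤ ∫ t in (0:ℝ)..T, ‖φ' t - c (φ t)‖ ^ 2 :=
    intervalIntegral.integral_nonneg hT (fun t _ => by positivity)
  unfold FW; linarith

lemma path_contOn {n : ℕ} {T : ℝ} {x : Euc n} {φ φ' : ℝ → Euc n} (hT : 0 ≤ T)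
    (h : InHT n T x φ φ') : ContinuousOn φ (Set.Icc 0 T) := by
  obtain ⟨h0, hi, hsq, hid⟩ := h
  have hp : ContinuousOn (fun t => x + ∫ s in (0:ℝ)..t, φ' s) (Set.Icc 0 T) := by
    have := intervalIntegral.continuousOn_primitive_interval' hi (Set.left_mem_uIcc)
    rw [Set.uIcc_of_le hT] at this
    exact continuousOn_const.add this
  exact hp.congr (fun t ht => hid t ht)

lemma inner_II {n : ℕ} {b : Euc n → Euc n} (hb : Continuous b) {M : ℝ} (hM : ∀ z, ‖b z‖ ≤ M)
    {T : ℝ} {x : Euc n} {φ φ' : ℝ → Euc n} (hT : 0 ≤ T) (h : InHT n T x φ φ') :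
    IntervalIntegrable (fun t => ⟪b (φ t), φ' t⟫_ℝ) volume 0 T := by
  have hφ := path_contOn hT h
  obtain ⟨h0, hi, hsq, hid⟩ := h
  rw [intervalIntegrable_iff] at hi ⊢
  rw [Set.uIoc_of_le hT] at hi ⊢
  have hm1 : AEStronglyMeasurable φ' (volume.restrict (Set.Ioc 0 T)) := hi.aestronglyMeasurable
  have hm2 : AEStronglyMeasurable (fun t => b (φ t)) (volume.restrict (Set.Ioc 0 T)) :=
    ((hb.comp_continuousOn (hφ.mono Set.Ioc_subset_Icc_self)).aestronglyMeasurable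
      measurableSet_Ioc)
  refine Integrable.mono' (hi.norm.const_mul M) (hm2.inner hm1) ?_
  filter_upwards with t
  calc ‖⟪b (φ t), φ' t⟫_ℝ‖ ≤ ‖b (φ t)‖ * ‖φ' t‖ := norm_inner_le_norm _ _
    _ ≤ M * ‖φ' t‖ := mul_le_mul_of_nonneg_right (hM _) (norm_nonneg _)

lemma fwint_II {n : ℕ} {c : Euc n → Euc n} (hc : Continuous c)
    {T : ℝ} {x : Euc n} {φ φ' : ℝ → Euc n} (hT : 0 ≤ T) (h : InHT n T x φ φ') :
    IntervalIntegrable (fun t => ‖φ' t - c (φ t)‖ ^ 2) volume 0 T := by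
  have hφ := path_contOn hT h
  obtain ⟨h0, hi, hsq, hid⟩ := h
  obtain ⟨C, hC⟩ : ∃ C, ∀ y ∈ Set.Icc (0:ℝ) T, ‖c (φ y)‖ ≤ C :=
    isCompact_Icc.exists_bound_of_continuousOn (hc.comp_continuousOn hφ)
  rw [intervalIntegrable_iff] at hi hsq ⊢
  rw [Set.uIoc_of_le hT] at hi hsq ⊢
  have hm1 : AEStronglyMeasurable φ' (volume.restrict (Set.Ioc 0 T)) := hi.aestronglyMeasurable
  have hm2 : AEStronglyMeasurable (fun t => c (φ t)) (volume.restrict (Set.Ioc 0 T)) :=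
    ((hc.comp_continuousOn (hφ.mono Set.Ioc_subset_Icc_self)).aestronglyMeasurable
      measurableSet_Ioc)
  have hmeas : AEStronglyMeasurable (fun t => ‖φ' t - c (φ t)‖ ^ 2)
      (volume.restrict (Set.Ioc 0 T)) :=
    ((hm1.sub hm2).norm.aemeasurable.pow_const 2).aestronglyMeasurable
  have hdom : IntegrableOn (fun t => 2 * ‖φ' t‖ ^ 2 + 2 * C ^ 2) (Set.Ioc 0 T) volume :=
    (hsq.const_mul 2).add (integrableOn_const (C := 2 * C ^ 2) measure_Ioc_lt_top.ne)
  refine Integrable.mono' hdom hmeas ?_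
  · filter_upwards [ae_restrict_mem measurableSet_Ioc] with t ht
    have h1 : ‖φ' t - c (φ t)‖ ≤ ‖φ' t‖ + ‖c (φ t)‖ := norm_sub_le _ _
    have h2 : ‖c (φ t)‖ ≤ C := hC t ⟨le_of_lt ht.1, ht.2⟩
    have h3 : (0:ℝ) ≤ ‖φ' t - c (φ t)‖ := norm_nonneg _
    have h4 : (0:ℝ) ≤ ‖φ' t‖ := norm_nonneg _
    have h5 : (0:ℝ) ≤ ‖c (φ t)‖ := norm_nonneg _
    have : ‖(‖φ' t - c (φ t)‖ ^ 2 : ℝ)‖ = ‖φ' t - c (φ t)‖ ^ 2 := by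
      rw [Real.norm_of_nonneg (by positivity)]
    rw [this]
    have e1 : ‖φ' t - c (φ t)‖ ^ 2 ≤ (‖φ' t‖ + ‖c (φ t)‖) ^ 2 := by nlinarith
    have e2 : ‖c (φ t)‖ ^ 2 ≤ C ^ 2 := by nlinarith
    nlinarith [e1, e2, sq_nonneg (‖φ' t‖ - ‖c (φ t)‖)]

lemma piecewise_glue {E : Type*} [NormedAddCommGroup E] [NormedSpace ℝ E] {f₁ f₂ : ℝ → E}
    {T₁ T₂ : ℝ} (hT₁ : 0 < T₁) (hT₂ : 0 < T₂)
    (h1 : IntervalIntegrable f₁ volume 0 T₁) (h2 : IntervalIntegrable f₂ volume 0 T₂) :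
    IntervalIntegrable (fun t => if t ≤ T₁ then f₁ t else f₂ (t - T₁)) volume 0 (T₁ + T₂) ∧
    (∀ t, 0 ≤ t → t ≤ T₁ →
      (∫ s in (0:ℝ)..t, if s ≤ T₁ then f₁ s else f₂ (s - T₁)) = ∫ s in (0:ℝ)..t, f₁ s) ∧
    (∀ t, T₁ ≤ t → t ≤ T₁ + T₂ →
      (∫ s in (0:ℝ)..t, if s ≤ T₁ then f₁ s else f₂ (s - T₁)) =
        (∫ s in (0:ℝ)..T₁, f₁ s) + ∫ s in (0:ℝ)..(t - T₁), f₂ s) := by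
  set g : ℝ → E := fun t => if t ≤ T₁ then f₁ t else f₂ (t - T₁) with hg
  have hg1 : IntervalIntegrable g volume 0 T₁ := by
    refine II_congr h1 (fun t ht => ?_)
    rw [Set.uIoc_of_le hT₁.le] at ht
    simp [hg, ht.2]
  have hshift : IntervalIntegrable (fun t => f₂ (t - T₁)) volume T₁ (T₁ + T₂) := by
    have := h2.comp_sub_right T₁
    simpa [add_comm] using this
  have hg2 : IntervalIntegrable g volume T₁ (T₁ + T₂) := by
    refine II_congr hshift (fun t ht => ?_)
    rw [Set.uIoc_of_le (by linarith)] at ht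
    simp [hg, not_le.2 ht.1]
  have prim1 : ∀ t, 0 ≤ t → t ≤ T₁ →
      (∫ s in (0:ℝ)..t, g s) = ∫ s in (0:ℝ)..t, f₁ s := by
    intro t ht0 ht1
    refine int_congr (fun s hs => ?_)
    rw [Set.uIoc_of_le ht0] at hs
    simp [hg, hs.2.trans ht1]
  refine ⟨hg1.trans hg2, prim1, ?_⟩
  intro t htl htr
  have hgt : IntervalIntegrable g volume T₁ t :=
    hg2.mono_set (Set.uIcc_subset_uIcc Set.left_mem_uIcc
      (by rw [Set.uIcc_of_le (by linarith)]; exact ⟨htl, htr⟩))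
  have hsplit : (∫ s in (0:ℝ)..t, g s) = (∫ s in (0:ℝ)..T₁, g s) + ∫ s in T₁..t, g s :=
    (intervalIntegral.integral_add_adjacent_intervals hg1 hgt).symm
  have hsecond : (∫ s in T₁..t, g s) = ∫ s in (0:ℝ)..(t - T₁), f₂ s := by
    have e1 : (∫ s in T₁..t, g s) = ∫ s in T₁..t, f₂ (s - T₁) := by
      refine int_congr (fun s hs => ?_)
      rw [Set.uIoc_of_le htl] at hs
      simp [hg, not_le.2 hs.1]
    rw [e1, intervalIntegral.integral_comp_sub_right f₂ T₁, sub_self]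
  rw [hsplit, prim1 T₁ hT₁.le le_rfl, hsecond]


lemma concat_mem {n : ℕ} {b c : Euc n → Euc n} (hb : Continuous b) {M : ℝ}
    (hM : ∀ z, ‖b z‖ ≤ M) (hcc : Continuous c) {x : Euc n} {q r₁ r₂ : ℝ} {T₁ T₂ : ℝ}
    (hT₁ : 0 < T₁) (hT₂ : 0 < T₂)
    (h₁ : ∃ φ φ' : ℝ → Euc n, InHT n T₁ x φ φ' ∧ φ T₁ = x ∧
      Diss n b T₁ φ φ' = q ∧ FW n c T₁ φ φ' = r₁)
    (h₂ : ∃ φ φ' : ℝ → Euc n, InHT n T₂ x φ φ' ∧ φ T₂ = x ∧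
      Diss n b T₂ φ φ' = q ∧ FW n c T₂ φ φ' = r₂) :
    ∃ φ φ' : ℝ → Euc n, InHT n (T₁ + T₂) x φ φ' ∧ φ (T₁ + T₂) = x ∧
      Diss n b (T₁ + T₂) φ φ' = q ∧ FW n c (T₁ + T₂) φ φ' = r₁ + r₂ := by
  obtain ⟨φ₁, φ₁', H₁, E₁, D₁, F₁⟩ := h₁
  obtain ⟨φ₂, φ₂', H₂, E₂, D₂, F₂⟩ := h₂
  have glue := piecewise_glue (E := Euc n) hT₁ hT₂ H₁.2.1 H₂.2.1
  refine ⟨fun t => if t ≤ T₁ then φ₁ t else φ₂ (t - T₁),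
    fun t => if t ≤ T₁ then φ₁' t else φ₂' (t - T₁), ⟨?_, glue.1, ?_, ?_⟩, ?_, ?_, ?_⟩
  · simp [hT₁.le, H₁.1]
  · refine II_congr (piecewise_glue hT₁ hT₂ H₁.2.2.1 H₂.2.2.1).1 (fun t _ => ?_)
    by_cases h : t ≤ T₁ <;> simp [h]
  · intro t ht
    obtain ⟨ht0, ht2⟩ := ht
    by_cases h : t ≤ T₁
    · simp only [if_pos h]
      rw [glue.2.1 t ht0 h]
      exact H₁.2.2.2 t ⟨ht0, h⟩
    · push_neg at h
      simp only [if_neg (not_le.2 h)]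
      rw [glue.2.2 t h.le ht2]
      have hz : (∫ s in (0:ℝ)..T₁, φ₁' s) = 0 := by
        have h' := H₁.2.2.2 T₁ ⟨hT₁.le, le_rfl⟩
        rw [E₁] at h'
        exact (left_eq_add.1 h')
      rw [hz, zero_add]
      exact H₂.2.2.2 (t - T₁) ⟨by linarith, by linarith⟩
  · simp only [if_neg (show ¬(T₁ + T₂ ≤ T₁) from by linarith)]
    simpa using E₂
  · have hi₁ := inner_II hb hM hT₁.le H₁
    have hi₂ := inner_II hb hM hT₂.le H₂
    have glue' := piecewise_glue (E := ℝ) hT₁ hT₂ hi₁ hi₂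
    unfold Diss at D₁ D₂ ⊢
    set I₁ := ∫ t in (0:ℝ)..T₁, ⟪b (φ₁ t), φ₁' t⟫_ℝ with hI₁def
    set I₂ := ∫ t in (0:ℝ)..T₂, ⟪b (φ₂ t), φ₂' t⟫_ℝ with hI₂def
    have hI₁ : I₁ = q * T₁ / 2 := by field_simp at D₁; linarith
    have hI₂ : I₂ = q * T₂ / 2 := by field_simp at D₂; linarith
    have e : (∫ t in (0:ℝ)..(T₁+T₂),
        ⟪b (if t ≤ T₁ then φ₁ t else φ₂ (t - T₁)), if t ≤ T₁ then φ₁' t else φ₂' (t - T₁)⟫_ℝ) =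
        ∫ t in (0:ℝ)..(T₁+T₂),
          (if t ≤ T₁ then ⟪b (φ₁ t), φ₁' t⟫_ℝ else ⟪b (φ₂ (t - T₁)), φ₂' (t - T₁)⟫_ℝ) := by
      refine int_congr (fun t _ => ?_)
      by_cases h : t ≤ T₁ <;> simp [h]
    rw [e, glue'.2.2 (T₁ + T₂) (by linarith) le_rfl, add_sub_cancel_left, hI₁, ← hI₂def, hI₂]
    field_simp
  · have hj₁ := fwint_II hcc hT₁.le H₁
    have hj₂ := fwint_II hcc hT₂.le H₂
    have glue' := piecewise_glue (E := ℝ) hT₁ hT₂ hj₁ hj₂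
    unfold FW at F₁ F₂ ⊢
    have e : (∫ t in (0:ℝ)..(T₁+T₂),
        ‖(if t ≤ T₁ then φ₁' t else φ₂' (t - T₁)) -
          c (if t ≤ T₁ then φ₁ t else φ₂ (t - T₁))‖ ^ 2) =
        ∫ t in (0:ℝ)..(T₁+T₂),
          (if t ≤ T₁ then ‖φ₁' t - c (φ₁ t)‖ ^ 2 else ‖φ₂' (t - T₁) - c (φ₂ (t - T₁))‖ ^ 2) := by
      refine int_congr (fun t _ => ?_)
      by_cases h : t ≤ T₁ <;> simp [h]
    rw [e, glue'.2.2 (T₁ + T₂) (by linarith) le_rfl, add_sub_cancel_left]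
    linarith

lemma shrink {n : ℕ} {b c : Euc n → Euc n} (hb : Continuous b) {M : ℝ} (hM : ∀ z, ‖b z‖ ≤ M)
    {x : Euc n} {q T τ : ℝ} (hτ : 0 < τ) (hτT : τ ≤ T)
    (hne : ∃ r : ℝ, ∃ φ φ' : ℝ → Euc n, InHT n T x φ φ' ∧ φ T = x ∧
      Diss n b T φ φ' = q ∧ FW n c T φ φ' = r) :
    ∃ r : ℝ, ∃ φ φ' : ℝ → Euc n, InHT n τ x φ φ' ∧ φ τ = x ∧
      Diss n b τ φ φ' = q ∧ FW n c τ φ φ' = r := by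
  by_cases hq : q = 0
  · subst hq
    refine ⟨FW n c τ (fun _ => x) (fun _ => 0), fun _ => x, fun _ => 0,
      ⟨rfl, intervalIntegrable_const, ?_, ?_⟩, rfl, ?_, rfl⟩
    · simpa using (intervalIntegrable_const :
        IntervalIntegrable (fun _ : ℝ => (0:ℝ)) volume 0 τ)
    · intro t _; simp
    · unfold Diss; simp
  · have hT : 0 < T := lt_of_lt_of_le hτ hτT
    obtain ⟨r₀, φ, φ', hH, hE, hD, -⟩ := hne
    have hφc : ContinuousOn φ (Set.Icc 0 T) := path_contOn hT.le hH
    have hint : IntervalIntegrable (fun s => ⟪b (φ s), φ' s⟫_ℝ) volume 0 T :=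
      inner_II hb hM hT.le hH
    set F : ℝ → ℝ := fun u => ∫ s in (0:ℝ)..u, ⟪b (φ s), φ' s⟫_ℝ with hF
    have hFc : ContinuousOn F (Set.Icc 0 T) := by
      have := intervalIntegral.continuousOn_primitive_interval' hint Set.left_mem_uIcc
      rwa [Set.uIcc_of_le hT.le] at this
    set G : Euc n → ℝ :=
      fun y => ∫ u in (0:ℝ)..(1:ℝ), ⟪b ((1-u) • y + u • x), x - y⟫_ℝ with hG
    have hGc : Continuous G := by
      apply intervalIntegral.continuous_parametric_intervalIntegral_of_continuous'
      exact Continuous.inner (hb.comp (by fun_prop)) (by continuity)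
    have hGx : G x = 0 := by simp [hG]
    set f : ℝ → ℝ := fun s => (2/τ) * (F (s*T) + G (φ (s*T))) with hf
    have hmap : Set.MapsTo (fun s : ℝ => s*T) (Set.Icc 0 1) (Set.Icc 0 T) := by
      intro s hs
      show s*T ∈ Set.Icc 0 T
      refine ⟨mul_nonneg hs.1 hT.le, ?_⟩
      calc s*T ≤ 1*T := mul_le_mul_of_nonneg_right hs.2 hT.le
        _ = T := one_mul T
    have hmulc : ContinuousOn (fun s : ℝ => s*T) (Set.Icc 0 1) :=
      (continuous_id.mul continuous_const).continuousOn
    have hfc : ContinuousOn f (Set.Icc 0 1) := by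
      apply continuousOn_const.mul
      exact (hFc.comp hmulc hmap).add (hGc.comp_continuousOn (hφc.comp hmulc hmap))
    have hf0 : f 0 = 0 := by simp [hf, hF, hH.1, hGx]
    have hFT : F T = q * T / 2 := by
      have hD' : 2 / T * F T = q := by unfold Diss at hD; exact hD
      field_simp at hD'
      linarith
    have hf1 : f 1 = q * T / τ := by
      rw [hf]
      simp only [one_mul, hE, hGx, hFT, add_zero]
      field_simp
    have hqmem : q ∈ Set.uIcc (f 0) (f 1) := by
      rw [hf0, hf1, Set.mem_uIcc]
      rcases le_or_gt 0 q with h | h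
      · exact Or.inl ⟨h, by rw [le_div_iff₀ hτ]; nlinarith⟩
      · exact Or.inr ⟨by rw [div_le_iff₀ hτ]; nlinarith, h.le⟩
    have hfc' : ContinuousOn f (Set.uIcc (0:ℝ) 1) := by
      rwa [Set.uIcc_of_le (zero_le_one : (0:ℝ) ≤ 1)]
    obtain ⟨s, hs, hfs⟩ := intermediate_value_uIcc hfc' hqmem
    rw [Set.uIcc_of_le (zero_le_one : (0:ℝ) ≤ 1)] at hs
    have hs0 : 0 < s := by
      rcases hs.1.lt_or_eq with h | h
      · exact h
      · exfalso; apply hq; rw [← hfs, ← h, hf0]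
    clear_value F G f
    set a := s*T with ha
    have ha0 : 0 < a := mul_pos hs0 hT
    have haT : a ≤ T := by nlinarith [hs.2]
    set y := φ a with hy
    set α := 2*a/τ with hα
    clear_value a y α
    have hα0 : 0 < α := by rw [hα]; positivity
    have hcan : α * (τ/2) = a := by rw [hα]; field_simp
    have hτ2 : (0:ℝ) ≤ τ/2 := by positivity
    have hτ2' : τ/2 < τ := by linarith
    obtain ⟨ψ, hψ⟩ : ∃ ψ : ℝ → Euc n,
        ψ = fun t => if t ≤ τ/2 then φ (α*t) else y + (2/τ*t - 1) • (x - y) := ⟨_, rfl⟩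
    obtain ⟨ψ', hψ'⟩ : ∃ ψ' : ℝ → Euc n,
        ψ' = fun t => if t ≤ τ/2 then α • φ' (α*t) else (2/τ) • (x - y) := ⟨_, rfl⟩
    have hsub : Set.uIcc (0:ℝ) a ⊆ Set.uIcc (0:ℝ) T := by
      rw [Set.uIcc_of_le ha0.le, Set.uIcc_of_le hT.le]
      exact Set.Icc_subset_Icc le_rfl haT
    have hφ'a : IntervalIntegrable φ' volume 0 a := hH.2.1.mono_set hsub
    have haα : a / α = τ/2 := by rw [hα]; field_simp
    have h1' : IntervalIntegrable (fun t => α • φ' (α*t)) volume 0 (τ/2) := by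
      have h := hφ'a.comp_mul_left (c := α)
      rw [zero_div, haα] at h
      exact h.smul α
    have hψ'1 : IntervalIntegrable ψ' volume 0 (τ/2) :=
      II_congr h1' (fun t ht => by
        rw [Set.uIoc_of_le hτ2] at ht; simp [hψ', ht.2])
    have hψ'2 : IntervalIntegrable ψ' volume (τ/2) τ :=
      II_congr (intervalIntegrable_const (c := (2/τ) • (x - y))) (fun t ht => by
        rw [Set.uIoc_of_le hτ2'.le] at ht; simp [hψ', not_le.2 ht.1])
    have hsq' : IntervalIntegrable (fun t => ‖ψ' t‖^2) volume 0 (τ/2) := by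
      have hsqa : IntervalIntegrable (fun t => ‖φ' t‖^2) volume 0 a := hH.2.2.1.mono_set hsub
      have h := hsqa.comp_mul_left (c := α)
      rw [zero_div, haα] at h
      refine II_congr (h.const_mul (α^2)) (fun t ht => ?_)
      rw [Set.uIoc_of_le hτ2] at ht
      simp [hψ', ht.2, norm_smul, mul_pow, sq_abs, abs_of_pos hα0]
    have hsq'2 : IntervalIntegrable (fun t => ‖ψ' t‖^2) volume (τ/2) τ :=
      II_congr (intervalIntegrable_const (c := ‖(2/τ) • (x - y)‖^2)) (fun t ht => by
        rw [Set.uIoc_of_le hτ2'.le] at ht; simp [hψ', not_le.2 ht.1])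
    have key1 : ∀ t, 0 ≤ t → t ≤ τ/2 →
        (∫ u in (0:ℝ)..t, ψ' u) = ∫ u in (0:ℝ)..(α*t), φ' u := by
      intro t h0 h2
      have e1 : (∫ u in (0:ℝ)..t, ψ' u) = ∫ u in (0:ℝ)..t, α • φ' (α*u) :=
        int_congr (fun u hu => by
          rw [Set.uIoc_of_le h0] at hu; simp [hψ', hu.2.trans h2])
      rw [e1, intervalIntegral.integral_smul,
        intervalIntegral.integral_comp_mul_left φ' hα0.ne', mul_zero, smul_smul,
        mul_inv_cancel₀ hα0.ne', one_smul]
    have hidma : ∀ t, 0 ≤ t → t ≤ τ/2 → α*t ∈ Set.Icc (0:ℝ) T := by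
      intro t h0 h2
      have h3 : α*t ≤ a := by
        rw [← hcan]; exact mul_le_mul_of_nonneg_left h2 hα0.le
      exact ⟨by positivity, by linarith⟩
    refine ⟨FW n c τ ψ ψ', ψ, ψ', ⟨?_, hψ'1.trans hψ'2, hsq'.trans hsq'2, ?_⟩, ?_, ?_, rfl⟩
    · rw [hψ]; simp [hτ2, hH.1]
    · -- integral identity
      intro t ht
      obtain ⟨ht0, htτ⟩ := ht
      by_cases h2 : t ≤ τ/2
      · rw [hψ]; simp only [if_pos h2]
        rw [key1 t ht0 h2]
        exact hH.2.2.2 (α*t) (hidma t ht0 h2)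
      · push_neg at h2
        rw [hψ]; simp only [if_neg (not_le.2 h2)]
        have hsplit : (∫ u in (0:ℝ)..t, ψ' u) =
            (∫ u in (0:ℝ)..τ/2, ψ' u) + ∫ u in (τ/2)..t, ψ' u :=
          (intervalIntegral.integral_add_adjacent_intervals hψ'1
            (hψ'2.mono_set (Set.uIcc_subset_uIcc Set.left_mem_uIcc
              (by rw [Set.uIcc_of_le hτ2'.le]; exact ⟨h2.le, htτ⟩)))).symm
        have hfirst : (∫ u in (0:ℝ)..τ/2, ψ' u) = y - x := by
          rw [key1 (τ/2) hτ2 le_rfl, hcan]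
          have h' := hH.2.2.2 a ⟨ha0.le, haT⟩
          rw [hy, h']; abel
        have hsecond : (∫ u in (τ/2)..t, ψ' u) = ((t - τ/2) * (2/τ)) • (x - y) := by
          have e2 : (∫ u in (τ/2)..t, ψ' u) = ∫ u in (τ/2)..t, (2/τ) • (x - y) :=
            int_congr (fun u hu => by
              rw [Set.uIoc_of_le h2.le] at hu; simp [hψ', not_le.2 hu.1])
          rw [e2, intervalIntegral.integral_const, smul_smul]
        have hsc : (t - τ/2) * (2/τ) = 2/τ*t - 1 := by field_simp
        rw [hsplit, hfirst, hsecond, hsc]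
        module
    · rw [hψ]; simp only [if_neg (not_le.2 hτ2')]
      have h1 : 2/τ*τ - 1 = 1 := by field_simp; try norm_num
      rw [h1, one_smul]; abel
    · -- dissipation
      have hfq : (2/τ) * (F a + G y) = q := by
        rw [hf] at hfs
        simpa [ha, hy] using hfs
      have hha : IntervalIntegrable (fun u => ⟪b (φ u), φ' u⟫_ℝ) volume 0 a :=
        hint.mono_set hsub
      have p1 : IntervalIntegrable (fun t => α * ⟪b (φ (α*t)), φ' (α*t)⟫_ℝ) volume 0 (τ/2) := by
        have h := hha.comp_mul_left (c := α)
        rw [zero_div, haα] at h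
        exact h.const_mul α
      have hip1 : IntervalIntegrable (fun t => ⟪b (ψ t), ψ' t⟫_ℝ) volume 0 (τ/2) :=
        II_congr p1 (fun t ht => by
          rw [Set.uIoc_of_le hτ2] at ht
          rw [hψ, hψ']
          simp only [if_pos ht.2]
          rw [real_inner_smul_right])
      have hip2 : IntervalIntegrable (fun t => ⟪b (ψ t), ψ' t⟫_ℝ) volume (τ/2) τ := by
        have hk : Continuous (fun t : ℝ => ⟪b (y + (2/τ*t - 1) • (x - y)), (2/τ) • (x - y)⟫_ℝ) :=
          Continuous.inner (hb.comp (by continuity)) continuous_const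
        refine II_congr (hk.intervalIntegrable _ _) (fun t ht => ?_)
        rw [Set.uIoc_of_le hτ2'.le] at ht
        simp [hψ, hψ', not_le.2 ht.1]
      have value1 : (∫ t in (0:ℝ)..(τ/2), ⟪b (ψ t), ψ' t⟫_ℝ) =
          ∫ u in (0:ℝ)..a, ⟪b (φ u), φ' u⟫_ℝ := by
        have e : (∫ t in (0:ℝ)..(τ/2), ⟪b (ψ t), ψ' t⟫_ℝ) =
            ∫ t in (0:ℝ)..(τ/2), α * ⟪b (φ (α*t)), φ' (α*t)⟫_ℝ :=
          int_congr (fun t ht => by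
            rw [Set.uIoc_of_le hτ2] at ht
            rw [hψ, hψ']
            simp only [if_pos ht.2]
            rw [real_inner_smul_right])
        rw [e, intervalIntegral.integral_const_mul,
          intervalIntegral.integral_comp_mul_left
            (fun u => ⟪b (φ u), φ' u⟫_ℝ) hα0.ne', mul_zero, hcan, smul_eq_mul,
          ← mul_assoc, mul_inv_cancel₀ hα0.ne', one_mul]
      have harg : ∀ u : ℝ, y + u • (x - y) = (1-u) • y + u • x := by
        intro u; module
      have value2 : (∫ t in (τ/2)..τ, ⟪b (ψ t), ψ' t⟫_ℝ) = G y := by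
        have e : (∫ t in (τ/2)..τ, ⟪b (ψ t), ψ' t⟫_ℝ) =
            ∫ t in (τ/2)..τ, (2/τ) * ⟪b ((1-(2/τ*t - 1)) • y + (2/τ*t - 1) • x), x - y⟫_ℝ :=
          int_congr (fun t ht => by
            rw [Set.uIoc_of_le hτ2'.le] at ht
            rw [hψ, hψ']
            simp only [if_neg (not_le.2 ht.1)]
            rw [real_inner_smul_right, harg (2/τ*t - 1)])
        have hb1 : 2/τ*(τ/2) - 1 = 0 := by field_simp; try norm_num; try ring
        have hb2 : 2/τ*τ - 1 = 1 := by field_simp; try norm_num; try ring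
        have hτne : (2:ℝ)/τ ≠ 0 := by positivity
        have hcv := intervalIntegral.integral_comp_mul_sub
          (a := τ/2) (b := τ)
          (fun u : ℝ => ⟪b ((1-u) • y + u • x), x - y⟫_ℝ) hτne 1
        rw [hb1, hb2] at hcv
        rw [e, intervalIntegral.integral_const_mul, hcv, smul_eq_mul, ← mul_assoc,
          mul_inv_cancel₀ hτne, one_mul, hG]
      unfold Diss
      rw [← intervalIntegral.integral_add_adjacent_intervals hip1 hip2, value1, value2]
      rw [hF] at hfq
      simpa using hfq

theorem statement5' (n : ℕ) (V : Euc n → ℝ) (b c : Euc n → Euc n)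
    (hA : ContDiff ℝ 2 V) (hB : ContDiff ℝ 1 b) (hM' : ∃ M : ℝ, ∀ x, ‖b x‖ ≤ M)
    (hc : ∀ z, c z = -(1/2 : ℝ) • gradient V z + b z)
    (x : Euc n) (q : ℝ) (T₁ T₂ : ℝ) (hT₁ : 0 < T₁) (hT₂ : 0 < T₂) :
    sInf { r : ℝ | ∃ φ φ' : ℝ → Euc n,
      InHT n (T₁ + T₂) x φ φ' ∧ φ (T₁ + T₂) = x ∧
        Diss n b (T₁ + T₂) φ φ' = q ∧ FW n c (T₁ + T₂) φ φ' = r } ≤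
    sInf { r : ℝ | ∃ φ φ' : ℝ → Euc n,
      InHT n T₁ x φ φ' ∧ φ T₁ = x ∧ Diss n b T₁ φ φ' = q ∧ FW n c T₁ φ φ' = r } +
    sInf { r : ℝ | ∃ φ φ' : ℝ → Euc n,
      InHT n T₂ x φ φ' ∧ φ T₂ = x ∧ Diss n b T₂ φ φ' = q ∧ FW n c T₂ φ φ' = r } := by
  obtain ⟨M, hM⟩ := hM'
  have hbc : Continuous b := hB.continuous
  have hcc : Continuous c := by
    have hg : Continuous (fun z => gradient V z) := by
      have h1 : Continuous (fderiv ℝ V) := hA.continuous_fderiv (by simp)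
      exact (InnerProductSpace.toDual ℝ (Euc n)).symm.continuous.comp h1
    have : c = fun z => -(1/2 : ℝ) • gradient V z + b z := funext hc
    rw [this]
    exact (hg.const_smul (-(1/2 : ℝ))).add hbc
  set S12 := { r : ℝ | ∃ φ φ' : ℝ → Euc n,
      InHT n (T₁ + T₂) x φ φ' ∧ φ (T₁ + T₂) = x ∧
        Diss n b (T₁ + T₂) φ φ' = q ∧ FW n c (T₁ + T₂) φ φ' = r } with hS12
  set S1 := { r : ℝ | ∃ φ φ' : ℝ → Euc n,
      InHT n T₁ x φ φ' ∧ φ T₁ = x ∧ Diss n b T₁ φ φ' = q ∧ FW n c T₁ φ φ' = r } with hS1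
  set S2 := { r : ℝ | ∃ φ φ' : ℝ → Euc n,
      InHT n T₂ x φ φ' ∧ φ T₂ = x ∧ Diss n b T₂ φ φ' = q ∧ FW n c T₂ φ φ' = r } with hS2
  have hnn12 : ∀ r ∈ S12, (0:ℝ) ≤ r := by
    rintro r ⟨φ, φ', -, -, -, rfl⟩
    exact fw_nonneg n c (by linarith) φ φ'
  have hnn1 : ∀ r ∈ S1, (0:ℝ) ≤ r := by
    rintro r ⟨φ, φ', -, -, -, rfl⟩
    exact fw_nonneg n c hT₁.le φ φ'
  have hnn2 : ∀ r ∈ S2, (0:ℝ) ≤ r := by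
    rintro r ⟨φ, φ', -, -, -, rfl⟩
    exact fw_nonneg n c hT₂.le φ φ'
  by_cases h12 : S12.Nonempty
  · have h1 : ∃ r : ℝ, ∃ φ φ' : ℝ → Euc n, InHT n T₁ x φ φ' ∧ φ T₁ = x ∧
        Diss n b T₁ φ φ' = q ∧ FW n c T₁ φ φ' = r :=
      shrink hbc hM hT₁ (by linarith) h12
    have h2 : ∃ r : ℝ, ∃ φ φ' : ℝ → Euc n, InHT n T₂ x φ φ' ∧ φ T₂ = x ∧
        Diss n b T₂ φ φ' = q ∧ FW n c T₂ φ φ' = r :=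
      shrink hbc hM hT₂ (by linarith) h12
    have hne1 : S1.Nonempty := h1
    have hne2 : S2.Nonempty := h2
    have hbdd : BddBelow S12 := ⟨0, fun r hr => hnn12 r hr⟩
    have key : ∀ r₁ ∈ S1, ∀ r₂ ∈ S2, sInf S12 ≤ r₁ + r₂ := by
      intro r₁ h₁ r₂ h₂
      exact csInf_le hbdd (concat_mem hbc hM hcc hT₁ hT₂ h₁ h₂)
    have step1 : ∀ r₂ ∈ S2, sInf S12 - r₂ ≤ sInf S1 := by
      intro r₂ h₂
      refine le_csInf hne1 (fun r₁ h₁ => ?_)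
      linarith [key r₁ h₁ r₂ h₂]
    have step2 : sInf S12 - sInf S1 ≤ sInf S2 := by
      refine le_csInf hne2 (fun r₂ h₂ => ?_)
      linarith [step1 r₂ h₂]
    linarith
  · rw [Set.not_nonempty_iff_eq_empty] at h12
    rw [h12, Real.sInf_empty]
    have g1 : 0 ≤ sInf S1 := Real.sInf_nonneg hnn1
    have g2 : 0 ≤ sInf S2 := Real.sInf_nonneg hnn2
    linarith

/-- subadditivity `S^{xx}_{T₁+T₂}(q) ≤ S^{xx}_{T₁}(q) + S^{xx}_{T₂}(q)`. -/
theorem statement5 (n : ℕ) (V : Euc n → ℝ) (b c : Euc n → Euc n)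
    (hA : AssumptionA n V) (hB : AssumptionB n b)
    (hc : ∀ z, c z = -(1/2 : ℝ) • gradient V z + b z)
    (x : Euc n) (q : ℝ) (T₁ T₂ : ℝ) (hT₁ : 0 < T₁) (hT₂ : 0 < T₂) :
    Sxy n b c (T₁ + T₂) x x q ≤ Sxy n b c T₁ x x q + Sxy n b c T₂ x x q := by
  unfold Sxy
  exact statement5' n V b c hA.1 hB.1 hB.2.1 hc x q T₁ T₂ hT₁ hT₂
end
end

section
/- For every compact set K ⊂ ℝⁿ and every q̄ > 0, C₁ > 0 there exists C > 0 such that: for every T ≥ 1, every x ∈ K, and every φ ∈ H^x_T with |L_T(φ)| ≤ q̄ and I^x_T(φ) ≤ C₁·T, one has ∫₀^T |φ̇_t|² dt ≤ C·T and |φ(T)| ≤ C·(T + 1). -/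
open MeasureTheory Filter Real Set
open scoped InnerProductSpace

noncomputable section

lemma gradV_cont {n : ℕ} {V : Euc n → ℝ} (hV : ContDiff ℝ 1 V) : Continuous (gradient V) :=
  (InnerProductSpace.toDual ℝ (Euc n)).symm.continuous.comp (hV.continuous_fderiv one_ne_zero)

lemma inner_gradV {n : ℕ} (V : Euc n → ℝ) (y u : Euc n) :
    ⟪gradient V y, u⟫_ℝ = fderiv ℝ V y u := by
  rw [gradient, InnerProductSpace.toDual_symm_apply]

/-- Chain rule + FTC along an absolutely continuous path, for a C¹ function `V`. -/
lemma ftc_grad {n : ℕ} {V : Euc n → ℝ} (hV : ContDiff ℝ 1 V) {T : ℝ} (hT : 0 < T)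
    (x : Euc n) (φ φ' : ℝ → Euc n) (hφi : IntervalIntegrable φ' volume 0 T)
    (hφ : ∀ t ∈ Icc (0 : ℝ) T, φ t = x + ∫ s in (0 : ℝ)..t, φ' s) :
    ∫ t in (0 : ℝ)..T, ⟪gradient V (φ t), φ' t⟫_ℝ = V (φ T) - V x := by
  have h0 : (0:ℝ) ∈ Icc (0:ℝ) T := ⟨le_rfl, hT.le⟩
  have hTm : T ∈ Icc (0:ℝ) T := ⟨hT.le, le_rfl⟩
  have hφ0 : φ 0 = x := by simpa using hφ 0 h0
  -- continuity of φ on [0,T]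
  have hIoc : IntegrableOn φ' (Ioc (0:ℝ) T) volume := hφi.1
  have huIcc : uIcc (0:ℝ) T = Icc (0:ℝ) T := uIcc_of_le hT.le
  have hφc : ContinuousOn φ (Icc (0:ℝ) T) := by
    have h1 : ContinuousOn (fun t => x + ∫ s in (0:ℝ)..t, φ' s) (Icc (0:ℝ) T) := by
      apply continuousOn_const.add
      have h2 : IntegrableOn φ' (uIcc (0:ℝ) T) volume := by
        rw [huIcc, integrableOn_Icc_iff_integrableOn_Ioc]; exact hIoc
      have := intervalIntegral.continuousOn_primitive_interval (μ := volume) (a := (0:ℝ))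
        (b := T) (f := φ') h2
      rwa [huIcc] at this
    exact h1.congr hφ
  -- compact sets
  set A : Set (Euc n) := φ '' Icc (0:ℝ) T with hA
  have hAc : IsCompact A := isCompact_Icc.image_of_continuousOn hφc
  set A₁ : Set (Euc n) := Metric.cthickening 1 A with hA₁
  have hA₁c : IsCompact A₁ := hAc.cthickening
  have hAA₁ : A ⊆ A₁ := Metric.self_subset_cthickening A
  have hmemA : ∀ t ∈ Icc (0:ℝ) T, φ t ∈ A₁ := fun t ht => hAA₁ ⟨t, ht, rfl⟩
  -- bound for the gradient on A₁
  have hgc : Continuous (gradient V) := gradV_cont hV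
  obtain ⟨M₀, hM₀⟩ : ∃ M₀, ∀ y ∈ A₁, ‖gradient V y‖ ≤ M₀ :=
    hA₁c.exists_bound_of_continuousOn hgc.continuousOn
  set M : ℝ := max M₀ 0 with hMdef
  have hM : ∀ y ∈ A₁, ‖gradient V y‖ ≤ M := fun y hy => (hM₀ y hy).trans (le_max_left _ _)
  have hMnn : 0 ≤ M := le_max_right _ _
  -- integrability of the main integrand
  have hφ'aesm : AEStronglyMeasurable φ' (volume.restrict (Ioc (0:ℝ) T)) := hIoc.1
  have hgφaesm : AEStronglyMeasurable (fun t => gradient V (φ t))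
      (volume.restrict (Ioc (0:ℝ) T)) :=
    ((hgc.comp_continuousOn (hφc.mono Ioc_subset_Icc_self)).aestronglyMeasurable
      measurableSet_Ioc)
  have hnormint : IntervalIntegrable (fun t => ‖φ' t‖) volume 0 T := hφi.norm
  have haint : IntervalIntegrable (fun t => ⟪gradient V (φ t), φ' t⟫_ℝ) volume 0 T := by
    rw [intervalIntegrable_iff_integrableOn_Ioc_of_le hT.le]
    apply Integrable.mono' (g := fun t => M * ‖φ' t‖)
    · exact ((intervalIntegrable_iff_integrableOn_Ioc_of_le hT.le).1 hnormint).const_mul M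
    · exact hgφaesm.inner hφ'aesm
    · filter_upwards [ae_restrict_mem measurableSet_Ioc] with t ht
      calc ‖⟪gradient V (φ t), φ' t⟫_ℝ‖ ≤ ‖gradient V (φ t)‖ * ‖φ' t‖ := norm_inner_le_norm _ _
        _ ≤ M * ‖φ' t‖ :=
            mul_le_mul_of_nonneg_right (hM _ (hmemA t (Ioc_subset_Icc_self ht))) (norm_nonneg _)
  -- it suffices to bound the difference by every ε > 0
  set L : ℝ := ∫ t in (0:ℝ)..T, ⟪gradient V (φ t), φ' t⟫_ℝ with hL
  suffices h : ∀ ε > 0, |L - (V (φ T) - V x)| ≤ ε by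
    by_contra hne
    have hpos : 0 < |L - (V (φ T) - V x)| := abs_pos.mpr (sub_ne_zero.mpr hne)
    have := h _ (half_pos hpos)
    linarith
  intro ε hε
  set B : ℝ := ∫ t in (0:ℝ)..T, ‖φ' t‖ with hBdef
  have hB : 0 ≤ B := intervalIntegral.integral_nonneg hT.le (fun t _ => norm_nonneg _)
  set ε' : ℝ := ε / (2 * (B + 1)) with hε'def
  have hε' : 0 < ε' := by positivity
  -- uniform continuity moduli
  obtain ⟨δ₁, hδ₁, hδ₁'⟩ := Metric.uniformContinuousOn_iff.1
    (hA₁c.uniformContinuousOn_of_continuous hgc.continuousOn) ε' hε'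
  obtain ⟨δ₂, hδ₂, hδ₂'⟩ := Metric.uniformContinuousOn_iff.1
    (hA₁c.uniformContinuousOn_of_continuous ((hV.continuous).continuousOn)) ε' hε'
  set η : ℝ := min (min δ₁ δ₂ / 2) (min 1 (ε / (2 * (M + 1)))) with hηdef
  have hη : 0 < η := by positivity
  have hη1 : η ≤ 1 := le_trans (min_le_right _ _) (min_le_left _ _)
  have hηδ : η < min δ₁ δ₂ := lt_of_le_of_lt (min_le_left _ _) (by
    have : 0 < min δ₁ δ₂ := lt_min hδ₁ hδ₂
    linarith)
  have hηδ₁ : η < δ₁ := hηδ.trans_le (min_le_left _ _)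
  have hηδ₂ : η < δ₂ := hηδ.trans_le (min_le_right _ _)
  have hηε : η ≤ ε / (2 * (M + 1)) := le_trans (min_le_right _ _) (min_le_right _ _)
  -- continuous approximation of φ'
  have hfint : Integrable ((Ioc (0:ℝ) T).indicator φ') volume :=
    (integrable_indicator_iff measurableSet_Ioc).2 hIoc
  obtain ⟨g, hgsupp, hgapprox, hgcont, hgint⟩ :=
    hfint.exists_hasCompactSupport_integral_sub_le hη
  have hgIint : IntervalIntegrable g volume 0 T := hgcont.intervalIntegrable 0 T
  have hdiffint : IntervalIntegrable (fun t => φ' t - g t) volume 0 T := hφi.sub hgIint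
  have hnormdiffint : IntervalIntegrable (fun t => ‖φ' t - g t‖) volume 0 T := hdiffint.norm
  have hclose : ∫ t in (0:ℝ)..T, ‖φ' t - g t‖ ≤ η := by
    rw [intervalIntegral.integral_of_le hT.le]
    calc ∫ t in Ioc (0:ℝ) T, ‖φ' t - g t‖
        = ∫ t in Ioc (0:ℝ) T, ‖(Ioc (0:ℝ) T).indicator φ' t - g t‖ := by
          apply setIntegral_congr_fun measurableSet_Ioc
          intro t ht
          show ‖φ' t - g t‖ = ‖(Ioc (0:ℝ) T).indicator φ' t - g t‖
          rw [indicator_of_mem ht]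
      _ ≤ ∫ t, ‖(Ioc (0:ℝ) T).indicator φ' t - g t‖ :=
          setIntegral_le_integral ((hfint.sub hgint).norm) (ae_of_all _ fun t => norm_nonneg _)
      _ ≤ η := hgapprox
  -- the smooth approximate path
  set ψ : ℝ → Euc n := fun t => x + ∫ s in (0:ℝ)..t, g s with hψdef
  have hψ0 : ψ 0 = x := by simp [hψdef]
  have hψd : ∀ t, HasDerivAt ψ (g t) t := fun t =>
    (intervalIntegral.integral_hasDerivAt_right (hgcont.intervalIntegrable 0 t)
      (hgcont.stronglyMeasurable.stronglyMeasurableAtFilter) hgcont.continuousAt).const_add x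
  have hψc : Continuous ψ := Differentiable.continuous (fun t => (hψd t).differentiableAt)
  have hVψd : ∀ t, HasDerivAt (fun s => V (ψ s)) ⟪gradient V (ψ t), g t⟫_ℝ t := by
    intro t
    have h1 : HasFDerivAt V (fderiv ℝ V (ψ t)) (ψ t) := (hV.differentiable one_ne_zero (ψ t)).hasFDerivAt
    have h2 := h1.comp_hasDerivAt t (hψd t)
    rw [inner_gradV]
    exact h2
  have hinner_cont : Continuous (fun t => ⟪gradient V (ψ t), g t⟫_ℝ) :=
    (hgc.comp hψc).inner hgcont
  have hbint : IntervalIntegrable (fun t => ⟪gradient V (ψ t), g t⟫_ℝ) volume 0 T :=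
    hinner_cont.intervalIntegrable 0 T
  have hFTC : ∫ t in (0:ℝ)..T, ⟪gradient V (ψ t), g t⟫_ℝ = V (ψ T) - V (ψ 0) :=
    intervalIntegral.integral_eq_sub_of_hasDerivAt (fun t _ => hVψd t) hbint
  -- ψ is uniformly close to φ
  have hclose_t : ∀ t ∈ Icc (0:ℝ) T, ‖ψ t - φ t‖ ≤ η := by
    intro t ht
    have hsub : IntervalIntegrable φ' volume 0 t := hφi.mono_set (by
      rw [huIcc, uIcc_of_le ht.1]; exact Icc_subset_Icc le_rfl ht.2)
    have heq : ψ t - φ t = ∫ s in (0:ℝ)..t, (g s - φ' s) := by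
      rw [hφ t ht, hψdef, intervalIntegral.integral_sub (hgcont.intervalIntegrable 0 t) hsub]
      beta_reduce
      abel
    calc ‖ψ t - φ t‖ = ‖∫ s in (0:ℝ)..t, (g s - φ' s)‖ := by rw [heq]
      _ ≤ ∫ s in (0:ℝ)..t, ‖g s - φ' s‖ := intervalIntegral.norm_integral_le_integral_norm ht.1
      _ = ∫ s in (0:ℝ)..t, ‖φ' s - g s‖ := by simp only [norm_sub_rev]
      _ ≤ ∫ s in (0:ℝ)..T, ‖φ' s - g s‖ := intervalIntegral.integral_mono_interval le_rfl ht.1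
          ht.2 (ae_of_all _ fun s => norm_nonneg _) hnormdiffint
      _ ≤ η := hclose
  have hmemψ : ∀ t ∈ Icc (0:ℝ) T, ψ t ∈ A₁ := fun t ht =>
    Metric.mem_cthickening_of_dist_le (ψ t) (φ t) 1 A ⟨t, ht, rfl⟩
      (by rw [dist_eq_norm]; exact (hclose_t t ht).trans hη1)
  -- pointwise estimate
  have hpt : ∀ t ∈ Icc (0:ℝ) T,
      |⟪gradient V (φ t), φ' t⟫_ℝ - ⟪gradient V (ψ t), g t⟫_ℝ|
        ≤ ε' * ‖φ' t‖ + M * ‖φ' t - g t‖ := by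
    intro t ht
    have hdist : dist (φ t) (ψ t) < δ₁ := by
      rw [dist_eq_norm, norm_sub_rev]
      exact lt_of_le_of_lt (hclose_t t ht) hηδ₁
    have hgrad_close : ‖gradient V (φ t) - gradient V (ψ t)‖ ≤ ε' := by
      have := hδ₁' (φ t) (hmemA t ht) (ψ t) (hmemψ t ht) hdist
      rw [dist_eq_norm] at this
      exact this.le
    have e1 : ⟪gradient V (φ t), φ' t⟫_ℝ - ⟪gradient V (ψ t), g t⟫_ℝ
        = ⟪gradient V (φ t) - gradient V (ψ t), φ' t⟫_ℝ
          + ⟪gradient V (ψ t), φ' t - g t⟫_ℝ := by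
      rw [inner_sub_left, inner_sub_right]; ring
    rw [e1]
    calc |⟪gradient V (φ t) - gradient V (ψ t), φ' t⟫_ℝ + ⟪gradient V (ψ t), φ' t - g t⟫_ℝ|
        ≤ |⟪gradient V (φ t) - gradient V (ψ t), φ' t⟫_ℝ|
          + |⟪gradient V (ψ t), φ' t - g t⟫_ℝ| := abs_add_le _ _
      _ ≤ ‖gradient V (φ t) - gradient V (ψ t)‖ * ‖φ' t‖
          + ‖gradient V (ψ t)‖ * ‖φ' t - g t‖ :=
          add_le_add (abs_real_inner_le_norm _ _) (abs_real_inner_le_norm _ _)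
      _ ≤ ε' * ‖φ' t‖ + M * ‖φ' t - g t‖ := by
          gcongr
          exact hM _ (hmemψ t ht)
  -- main estimate
  have key : |L - (V (ψ T) - V (ψ 0))| ≤ ε' * B + M * η := by
    rw [← hFTC, hL, ← intervalIntegral.integral_sub haint hbint]
    calc |∫ t in (0:ℝ)..T, (⟪gradient V (φ t), φ' t⟫_ℝ - ⟪gradient V (ψ t), g t⟫_ℝ)|
        ≤ ∫ t in (0:ℝ)..T, |⟪gradient V (φ t), φ' t⟫_ℝ - ⟪gradient V (ψ t), g t⟫_ℝ| :=
          intervalIntegral.abs_integral_le_integral_abs hT.le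
      _ ≤ ∫ t in (0:ℝ)..T, (ε' * ‖φ' t‖ + M * ‖φ' t - g t‖) :=
          intervalIntegral.integral_mono_on hT.le (haint.sub hbint).abs
            ((hnormint.const_mul ε').add (hnormdiffint.const_mul M)) hpt
      _ = ε' * B + M * ∫ t in (0:ℝ)..T, ‖φ' t - g t‖ := by
          rw [intervalIntegral.integral_add (hnormint.const_mul ε') (hnormdiffint.const_mul M),
            intervalIntegral.integral_const_mul, intervalIntegral.integral_const_mul]
      _ ≤ ε' * B + M * η := by gcongr
  have hVclose : |V (ψ T) - V (φ T)| ≤ ε' := by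
    have hd : dist (ψ T) (φ T) < δ₂ := by
      rw [dist_eq_norm]
      exact lt_of_le_of_lt (hclose_t T hTm) hηδ₂
    have := hδ₂' (ψ T) (hmemψ T hTm) (φ T) (hmemA T hTm) hd
    rw [Real.dist_eq] at this
    exact this.le
  have harith1 : ε' * B + ε' = ε / 2 := by
    rw [hε'def]
    field_simp
  have harith2 : M * η ≤ ε / 2 := by
    have h2M : (0:ℝ) < 2 * (M + 1) := by linarith
    calc M * η ≤ M * (ε / (2 * (M + 1))) := mul_le_mul_of_nonneg_left hηε hMnn
      _ = (M * ε) / (2 * (M + 1)) := by ring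
      _ ≤ ε / 2 := by
          rw [div_le_div_iff₀ h2M (by norm_num : (0:ℝ) < 2)]
          nlinarith
  calc |L - (V (φ T) - V x)|
      = |(L - (V (ψ T) - V (ψ 0))) + (V (ψ T) - V (φ T))| := by
        rw [hψ0]; ring_nf
    _ ≤ |L - (V (ψ T) - V (ψ 0))| + |V (ψ T) - V (φ T)| := abs_add_le _ _
    _ ≤ (ε' * B + M * η) + ε' := add_le_add key hVclose
    _ ≤ ε := by linarith

lemma V_bddBelow {n : ℕ} {V : Euc n → ℝ} (hV : ContDiff ℝ 1 V)
    (hco : Tendsto (fun x : Euc n => ⟪gradient V x, x⟫_ℝ / ‖x‖) (cocompact (Euc n)) atTop) :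
    ∃ M : ℝ, 0 ≤ M ∧ ∀ z, -M ≤ V z := by
  have hev : ∀ᶠ x in cocompact (Euc n), (1:ℝ) ≤ ⟪gradient V x, x⟫_ℝ / ‖x‖ :=
    hco.eventually_ge_atTop 1
  obtain ⟨K₀, hK₀c, hK₀⟩ := hasBasis_cocompact.eventually_iff.1 hev
  obtain ⟨R₀, hR₀⟩ := hK₀c.isBounded.subset_closedBall 0
  set R : ℝ := max R₀ 0 + 1 with hRdef
  have hRpos : (0:ℝ) < R := by positivity
  have hgrad : ∀ z : Euc n, R ≤ ‖z‖ → 0 ≤ ⟪gradient V z, z⟫_ℝ := by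
    intro z hz
    have hz0 : (0:ℝ) < ‖z‖ := hRpos.trans_le hz
    have hzK : z ∉ K₀ := by
      intro h
      have h1 : ‖z‖ ≤ R₀ := by simpa using mem_closedBall_zero_iff.1 (hR₀ h)
      have h2 : R₀ ≤ max R₀ 0 := le_max_left _ _
      linarith
    have h1 : (1:ℝ) ≤ ⟪gradient V z, z⟫_ℝ / ‖z‖ := hK₀ hzK
    have := (le_div_iff₀ hz0).1 h1
    linarith
  obtain ⟨y₀, hy₀mem, hy₀⟩ := (isCompact_closedBall (0:Euc n) R).exists_isMinOn
    ⟨0, by simp [hRpos.le]⟩ hV.continuous.continuousOn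
  refine ⟨max (-V y₀) 0, le_max_right _ _, ?_⟩
  have hball : ∀ y ∈ Metric.closedBall (0:Euc n) R, -(max (-V y₀) 0) ≤ V y := by
    intro y hy
    have h1 : V y₀ ≤ V y := hy₀ hy
    have h2 : -V y₀ ≤ max (-V y₀) 0 := le_max_left _ _
    linarith
  intro z
  by_cases hz : ‖z‖ ≤ R
  · exact hball z (mem_closedBall_zero_iff.2 hz)
  · push_neg at hz
    have hz0 : (0:ℝ) < ‖z‖ := hRpos.trans hz
    set a : ℝ := R / ‖z‖ with ha
    have ha0 : 0 < a := div_pos hRpos hz0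
    have ha1 : a ≤ 1 := (div_le_one hz0).2 hz.le
    set h : ℝ → ℝ := fun s => V (s • z) with hh
    have hd : ∀ s : ℝ, HasDerivAt h (⟪gradient V (s • z), z⟫_ℝ) s := by
      intro s
      have hp : HasDerivAt (fun s : ℝ => s • z) z s := by
        simpa using (hasDerivAt_id s).smul_const z
      have h1 := ((hV.differentiable one_ne_zero (s • z)).hasFDerivAt).comp_hasDerivAt s hp
      rw [inner_gradV]
      exact h1
    have hmono : MonotoneOn h (Icc a 1) := by
      apply monotoneOn_of_deriv_nonneg (convex_Icc a 1)
      · exact (hV.continuous.comp (continuous_id.smul continuous_const)).continuousOn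
      · intro s _
        exact (hd s).differentiableAt.differentiableWithinAt
      · intro s hs
        rw [interior_Icc] at hs
        rw [(hd s).deriv]
        have hs0 : 0 < s := ha0.trans hs.1
        have hnorm : R ≤ ‖s • z‖ := by
          rw [norm_smul, Real.norm_eq_abs, abs_of_pos hs0]
          calc R = a * ‖z‖ := by rw [ha]; field_simp
            _ ≤ s * ‖z‖ := by gcongr; exact hs.1.le
        have h1 := hgrad (s • z) hnorm
        have h2 : ⟪gradient V (s • z), s • z⟫_ℝ = s * ⟪gradient V (s • z), z⟫_ℝ :=
          real_inner_smul_right _ _ _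
        nlinarith
    have hle : h a ≤ h 1 := hmono ⟨le_rfl, ha1⟩ ⟨ha1, le_rfl⟩ ha1
    have hmem : a • z ∈ Metric.closedBall (0:Euc n) R := by
      rw [mem_closedBall_zero_iff, norm_smul, Real.norm_eq_abs, abs_of_pos ha0, ha]
      field_simp
      exact le_rfl
    have h1 : h 1 = V z := by rw [hh]; simp
    have h2 := hball _ hmem
    rw [← h1]
    calc -(max (-V y₀) 0) ≤ h a := h2
      _ ≤ h 1 := hle

/-- continuity of the path given by the integral representation -/
lemma path_contOn_s12 {n : ℕ} {T : ℝ} (hT : 0 ≤ T) {x : Euc n} {φ φ' : ℝ → Euc n}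
    (hφi : IntervalIntegrable φ' volume 0 T)
    (hφ : ∀ t ∈ Icc (0 : ℝ) T, φ t = x + ∫ s in (0 : ℝ)..t, φ' s) :
    ContinuousOn φ (Icc (0:ℝ) T) := by
  have huIcc : uIcc (0:ℝ) T = Icc (0:ℝ) T := uIcc_of_le hT
  have h1 : ContinuousOn (fun t => x + ∫ s in (0:ℝ)..t, φ' s) (Icc (0:ℝ) T) := by
    apply continuousOn_const.add
    have h2 : IntegrableOn φ' (uIcc (0:ℝ) T) volume := by
      rw [huIcc, integrableOn_Icc_iff_integrableOn_Ioc]; exact hφi.1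
    have := intervalIntegral.continuousOn_primitive_interval (μ := volume) (a := (0:ℝ))
      (b := T) (f := φ') h2
    rwa [huIcc] at this
  exact h1.congr hφ

/-- integrability of inner products along the path -/
lemma inner_comp_integrable {n : ℕ} {T : ℝ} (hT : 0 ≤ T) {φ φ' : ℝ → Euc n} {w : Euc n → Euc n}
    (hφc : ContinuousOn φ (Icc (0:ℝ) T)) (hw : Continuous w)
    (hφi : IntervalIntegrable φ' volume 0 T) :
    IntervalIntegrable (fun t => ⟪w (φ t), φ' t⟫_ℝ) volume 0 T := by
  obtain ⟨M₀, hM₀⟩ := (isCompact_Icc.image_of_continuousOn hφc).exists_bound_of_continuousOn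
    hw.continuousOn
  set M : ℝ := max M₀ 0 with hM
  have hMb : ∀ t ∈ Icc (0:ℝ) T, ‖w (φ t)‖ ≤ M :=
    fun t ht => (hM₀ _ ⟨t, ht, rfl⟩).trans (le_max_left _ _)
  rw [intervalIntegrable_iff_integrableOn_Ioc_of_le hT]
  apply Integrable.mono' (g := fun t => M * ‖φ' t‖)
  · exact ((intervalIntegrable_iff_integrableOn_Ioc_of_le hT).1 hφi.norm).const_mul M
  · exact ((hw.comp_continuousOn (hφc.mono Ioc_subset_Icc_self)).aestronglyMeasurable
      measurableSet_Ioc).inner hφi.1.1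
  · filter_upwards [ae_restrict_mem measurableSet_Ioc] with t ht
    calc ‖⟪w (φ t), φ' t⟫_ℝ‖ ≤ ‖w (φ t)‖ * ‖φ' t‖ := norm_inner_le_norm _ _
      _ ≤ M * ‖φ' t‖ :=
          mul_le_mul_of_nonneg_right (hMb t (Ioc_subset_Icc_self ht)) (norm_nonneg _)


/-- square-integrability of `‖φ' - c∘φ‖²` -/
lemma sq_sub_integrable {n : ℕ} {T : ℝ} (hT : 0 ≤ T) {φ φ' : ℝ → Euc n} (c : Euc n → Euc n)
    (hφc : ContinuousOn φ (Icc (0:ℝ) T)) (hcc : Continuous c)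
    (hφi : IntervalIntegrable φ' volume 0 T)
    (hφsq : IntervalIntegrable (fun t => ‖φ' t‖ ^ 2) volume 0 T) :
    IntervalIntegrable (fun t => ‖φ' t - c (φ t)‖ ^ 2) volume 0 T := by
  obtain ⟨M₀, hM₀⟩ := (isCompact_Icc.image_of_continuousOn hφc).exists_bound_of_continuousOn
    hcc.continuousOn
  set M : ℝ := max M₀ 0 with hM
  have hMb : ∀ t ∈ Icc (0:ℝ) T, ‖c (φ t)‖ ≤ M :=
    fun t ht => (hM₀ _ ⟨t, ht, rfl⟩).trans (le_max_left _ _)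
  rw [intervalIntegrable_iff_integrableOn_Ioc_of_le hT]
  apply Integrable.mono' (g := fun t => 2 * ‖φ' t‖ ^ 2 + 2 * M ^ 2)
  · refine Integrable.add ?_ ?_
    · exact ((intervalIntegrable_iff_integrableOn_Ioc_of_le hT).1 hφsq).const_mul 2
    · exact integrableOn_const measure_Ioc_lt_top.ne
  · have hsub : AEStronglyMeasurable (fun t => φ' t - c (φ t))
        (volume.restrict (Ioc (0:ℝ) T)) :=
      hφi.1.1.sub ((hcc.comp_continuousOn (hφc.mono Ioc_subset_Icc_self)).aestronglyMeasurable
        measurableSet_Ioc)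
    exact (continuous_pow 2).comp_aestronglyMeasurable hsub.norm
  · filter_upwards [ae_restrict_mem measurableSet_Ioc] with t ht
    have h1 : ‖φ' t - c (φ t)‖ ≤ ‖φ' t‖ + M :=
      (norm_sub_le _ _).trans (by linarith [hMb t (Ioc_subset_Icc_self ht)])
    have h2 : (0:ℝ) ≤ ‖φ' t - c (φ t)‖ := norm_nonneg _
    rw [Real.norm_eq_abs, abs_of_nonneg (by positivity)]
    nlinarith [sq_nonneg (‖φ' t‖ - M), h1, h2, norm_nonneg (φ' t)]

/-- a priori bound on the kinetic energy and on the endpoint of paths with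
bounded dissipated power and action bounded by `C₁·T`. -/
theorem statement12 (n : ℕ) (V : Euc n → ℝ) (b c : Euc n → Euc n)
    (hA : AssumptionA n V) (hb : ContDiff ℝ 1 b)
    (hbB : ∃ M : ℝ, ∀ z, ‖b z‖ ≤ M) (hbD : ∃ M : ℝ, ∀ z, ‖fderiv ℝ b z‖ ≤ M)
    (hc : ∀ z, c z = -(1/2 : ℝ) • gradient V z + b z)
    (K : Set (Euc n)) (hK : IsCompact K)
    (qbar C₁ : ℝ) (hqbar : 0 < qbar) (hC₁ : 0 < C₁) :
    ∃ C : ℝ, 0 < C ∧ ∀ T : ℝ, 1 ≤ T → ∀ x ∈ K, ∀ φ φ' : ℝ → Euc n,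
      InHT n T x φ φ' → |Diss n b T φ φ'| ≤ qbar → FW n c T φ φ' ≤ C₁ * T →
      (∫ t in (0:ℝ)..T, ‖φ' t‖ ^ 2) ≤ C * T ∧ ‖φ T‖ ≤ C * (T + 1) := by
  have hV1 : ContDiff ℝ 1 V := hA.1.of_le (by norm_num)
  have hccont : Continuous c := by
    have hceq : c = fun z => -(1/2 : ℝ) • gradient V z + b z := funext hc
    rw [hceq]
    exact ((gradV_cont hV1).const_smul (-(1/2 : ℝ))).add hb.continuous
  -- V is bounded below
  obtain ⟨MV, hMVnn, hMV⟩ := V_bddBelow hV1 hA.2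
  -- K is contained in a ball, V bounded on K
  obtain ⟨RK₀, hRK₀⟩ := hK.isBounded.subset_closedBall 0
  set RK : ℝ := max RK₀ 1 with hRKdef
  have hRK1 : (1:ℝ) ≤ RK := le_max_right _ _
  have hxK : ∀ x ∈ K, ‖x‖ ≤ RK := fun x hx =>
    (mem_closedBall_zero_iff.1 (hRK₀ hx)).trans (le_max_left _ _)
  obtain ⟨MK₀, hMK₀⟩ := (isCompact_closedBall (0:Euc n) RK).exists_bound_of_continuousOn
    hV1.continuous.continuousOn
  set MK : ℝ := max MK₀ 0 with hMKdef
  have hMKnn : (0:ℝ) ≤ MK := le_max_right _ _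
  have hVK : ∀ x ∈ K, V x ≤ MK := by
    intro x hx
    have h1 := hMK₀ x (Metric.closedBall_subset_closedBall (le_max_left _ _) (hRK₀ hx))
    rw [Real.norm_eq_abs] at h1
    calc V x ≤ |V x| := le_abs_self _
      _ ≤ MK₀ := h1
      _ ≤ MK := le_max_left _ _
  -- the constant
  have hCpos : (0:ℝ) < 2 * C₁ + qbar + MK + MV + RK + 1 := by linarith
  refine ⟨2 * C₁ + qbar + MK + MV + RK + 1, hCpos, ?_⟩
  set C : ℝ := 2 * C₁ + qbar + MK + MV + RK + 1 with hCdef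
  have hC1 : (1:ℝ) ≤ C := by rw [hCdef]; linarith
  intro T hT x hx φ φ' hIn hDiss hFW
  have hT0 : (0:ℝ) < T := lt_of_lt_of_le one_pos hT
  obtain ⟨hφ0, hφi, hφsq, hrep⟩ := hIn
  have hφc : ContinuousOn φ (Icc (0:ℝ) T) := path_contOn_s12 hT0.le hφi hrep
  -- integrability facts
  have hgi : IntervalIntegrable (fun t => ⟪gradient V (φ t), φ' t⟫_ℝ) volume 0 T :=
    inner_comp_integrable hT0.le hφc (gradV_cont hV1) hφi
  have hbi : IntervalIntegrable (fun t => ⟪b (φ t), φ' t⟫_ℝ) volume 0 T :=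
    inner_comp_integrable hT0.le hφc hb.continuous hφi
  have hci : IntervalIntegrable (fun t => ⟪c (φ t), φ' t⟫_ℝ) volume 0 T :=
    inner_comp_integrable hT0.le hφc hccont hφi
  have hsqi : IntervalIntegrable (fun t => ‖φ' t - c (φ t)‖ ^ 2) volume 0 T :=
    sq_sub_integrable hT0.le c hφc hccont hφi hφsq
  -- step 1 : energy splitting
  set E : ℝ := ∫ t in (0:ℝ)..T, ‖φ' t‖ ^ 2 with hEdef
  have step1 : E ≤ (∫ t in (0:ℝ)..T, ‖φ' t - c (φ t)‖ ^ 2)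
      + 2 * ∫ t in (0:ℝ)..T, ⟪c (φ t), φ' t⟫_ℝ := by
    have hmono : E ≤ ∫ t in (0:ℝ)..T, (‖φ' t - c (φ t)‖ ^ 2 + 2 * ⟪c (φ t), φ' t⟫_ℝ) := by
      apply intervalIntegral.integral_mono_on hT0.le hφsq (hsqi.add (hci.const_mul 2))
      intro t _
      have h1 := norm_sub_sq_real (φ' t) (c (φ t))
      have h2 := real_inner_comm (c (φ t)) (φ' t)
      nlinarith [sq_nonneg ‖c (φ t)‖]
    rwa [intervalIntegral.integral_add hsqi (hci.const_mul 2),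
      intervalIntegral.integral_const_mul] at hmono
  -- step 2 : splitting of the cross term
  have step2 : ∫ t in (0:ℝ)..T, ⟪c (φ t), φ' t⟫_ℝ
      = -(1/2 : ℝ) * (∫ t in (0:ℝ)..T, ⟪gradient V (φ t), φ' t⟫_ℝ)
        + ∫ t in (0:ℝ)..T, ⟪b (φ t), φ' t⟫_ℝ := by
    have hfun : (fun t => ⟪c (φ t), φ' t⟫_ℝ)
        = fun t => -(1/2 : ℝ) * ⟪gradient V (φ t), φ' t⟫_ℝ + ⟪b (φ t), φ' t⟫_ℝ := by
      funext t
      rw [hc (φ t), inner_add_left, real_inner_smul_left]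
    rw [hfun, intervalIntegral.integral_add (hgi.const_mul _) hbi,
      intervalIntegral.integral_const_mul]
  -- step 3 : FTC along the path
  have step3 : ∫ t in (0:ℝ)..T, ⟪gradient V (φ t), φ' t⟫_ℝ = V (φ T) - V x :=
    ftc_grad hV1 hT0 x φ φ' hφi hrep
  -- step 4 : dissipated power
  have step4 : ∫ t in (0:ℝ)..T, ⟪b (φ t), φ' t⟫_ℝ = (T / 2) * Diss n b T φ φ' := by
    rw [Diss]
    field_simp
  have step4' : (∫ t in (0:ℝ)..T, ⟪b (φ t), φ' t⟫_ℝ) ≤ (T / 2) * qbar := by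
    rw [step4]
    have h1 : Diss n b T φ φ' ≤ qbar := (le_abs_self _).trans hDiss
    have h2 : (0:ℝ) ≤ T / 2 := by linarith
    exact mul_le_mul_of_nonneg_left h1 h2
  -- step 5 : action bound
  have step5 : (∫ t in (0:ℝ)..T, ‖φ' t - c (φ t)‖ ^ 2) ≤ 2 * C₁ * T := by
    have h1 : FW n c T φ φ' = (1/2 : ℝ) * ∫ t in (0:ℝ)..T, ‖φ' t - c (φ t)‖ ^ 2 := rfl
    rw [h1] at hFW
    linarith
  -- conclude: kinetic energy bound
  have hVbd : -(MK + MV) ≤ V (φ T) - V x := by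
    have h1 := hMV (φ T)
    have h2 := hVK x hx
    linarith
  have hE : E ≤ C * T := by
    have h1 : E ≤ 2 * C₁ * T + (MK + MV) + T * qbar := by
      have := step1
      rw [step2, step3] at this
      calc E ≤ 2 * C₁ * T + 2 * (-(1/2 : ℝ) * (V (φ T) - V x)
            + ∫ t in (0:ℝ)..T, ⟪b (φ t), φ' t⟫_ℝ) := by linarith [step5]
        _ ≤ 2 * C₁ * T + (MK + MV) + T * qbar := by linarith [step4', hVbd]
    have h2 : MK + MV ≤ (MK + MV) * T := le_mul_of_one_le_right (by linarith) hT
    have h3 : (2 * C₁ + qbar + MK + MV) * T ≤ C * T := by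
      apply mul_le_mul_of_nonneg_right _ hT0.le
      rw [hCdef]; linarith
    nlinarith
  refine ⟨hE, ?_⟩
  -- endpoint bound
  have hrepT : φ T = x + ∫ s in (0:ℝ)..T, φ' s := hrep T ⟨hT0.le, le_rfl⟩
  have hnorm1 : (∫ t in (0:ℝ)..T, ‖φ' t‖) ≤ (T + E) / 2 := by
    have hmono : (∫ t in (0:ℝ)..T, ‖φ' t‖)
        ≤ ∫ t in (0:ℝ)..T, (1 + ‖φ' t‖ ^ 2) / 2 := by
      apply intervalIntegral.integral_mono_on hT0.le hφi.norm
        ((intervalIntegrable_const.add hφsq).div_const 2)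
      intro t _
      nlinarith [sq_nonneg (‖φ' t‖ - 1)]
    have heq : (∫ t in (0:ℝ)..T, (1 + ‖φ' t‖ ^ 2) / 2) = (T + E) / 2 := by
      rw [intervalIntegral.integral_div,
        intervalIntegral.integral_add intervalIntegrable_const hφsq]
      simp
      rfl
    linarith [hmono, heq.le]
  have hend : ‖φ T‖ ≤ RK + (T + E) / 2 := by
    rw [hrepT]
    calc ‖x + ∫ s in (0:ℝ)..T, φ' s‖ ≤ ‖x‖ + ‖∫ s in (0:ℝ)..T, φ' s‖ := norm_add_le _ _
      _ ≤ RK + ∫ s in (0:ℝ)..T, ‖φ' s‖ := by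
          gcongr
          · exact hxK x hx
          · exact intervalIntegral.norm_integral_le_integral_norm hT0.le
      _ ≤ RK + (T + E) / 2 := by linarith
  have hCT : (1:ℝ) * T ≤ C * T := mul_le_mul_of_nonneg_right hC1 hT0.le
  have hRKC : RK ≤ C - 1 := by rw [hCdef]; linarith
  linarith [hE, hend, hCT, hRKC]
end
end
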